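/- arXiv:1302.1810 — 9 statements merged into one kernel-verified Lean document; each statement's English description precedes it below -/
import Mathlib

section
/- There exists T̄ > 0 such that for every t ∈ ℂ with |t| < T̄, the matrix-valued boundary value problem q̈(s) = t·E(ts)·q̇(s) + t²·F(ts)·q(s) for s ∈ [0,1], with boundary conditions q(0) = 0 and q(1) = 𝟙, admits a unique C² solution q̃♭_t : [0,1] → M_ν(ℂ); likewise the same ODE with boundary conditions q(0) = 𝟙 and q(1) = 0 admits a unique C² solution q̃♯_t. -/
open Matrix Set MeasureTheory Filter

attribute [local instance] Matrix.linftyOpNormedAddCommGroup Matrix.linftyOpNormedRing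
  Matrix.linftyOpNormedAlgebra

noncomputable section

abbrev Mat (ν : ℕ) := Matrix (Fin ν) (Fin ν) ℂ

/-- `E(t) := Ȧ(t)A(t)⁻¹ + 2A(t)(ᵗB(t) − B(t))`. -/
def Ecoef {ν : ℕ} (A B : ℂ → Mat ν) (t : ℂ) : Mat ν :=
  deriv A t * (A t)⁻¹ + (2 : ℂ) • (A t * ((B t)ᵀ - B t))

/-- `F(t) := 4A(t)C(t) − 2A(t)Ḃ(t)`. -/
def Fcoef {ν : ℕ} (A B C : ℂ → Mat ν) (t : ℂ) : Mat ν :=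
  (4 : ℂ) • (A t * C t) - (2 : ℂ) • (A t * deriv B t)

/-- `q : [0,1] → Mat ν` is a C² solution of the rescaled matrix ODE
`q̈(s) = t·E(ts)·q̇(s) + t²·F(ts)·q(s)` with boundary values `q 0 = a`, `q 1 = b`. -/
def SolBVP {ν : ℕ} (A B C : ℂ → Mat ν) (t : ℂ) (a b : Mat ν) (q : ℝ → Mat ν) : Prop :=
  ContDiffOn ℝ 2 q (Icc 0 1) ∧
  (∀ s ∈ Icc (0 : ℝ) 1,
      derivWithin (derivWithin q (Icc 0 1)) (Icc 0 1) s =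
        t • (Ecoef A B (t * s) * derivWithin q (Icc 0 1) s)
          + t ^ 2 • (Fcoef A B C (t * s) * q s)) ∧
  q 0 = a ∧ q 1 = b

@[reducible] def matUnif (ν : ℕ) : UniformSpace (Mat ν) := PseudoMetricSpace.toUniformSpace

@[reducible] def matTop (ν : ℕ) : TopologicalSpace (Mat ν) := (matUnif ν).toTopologicalSpace

attribute [local instance] matUnif matTop

namespace BVPAux

variable {ν : ℕ}

abbrev II : Set ℝ := Icc 0 1

lemma uD : UniqueDiffOn ℝ (II : Set ℝ) := uniqueDiffOn_Icc one_pos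

/-- Extension of a continuous map on `[0,1]` to `ℝ` by clamping. -/
def ext' (h : C(↥(II : Set ℝ), Mat ν)) : ℝ → Mat ν := fun s => h (projIcc 0 1 zero_le_one s)

lemma ext'_cont (h : C(↥(II : Set ℝ), Mat ν)) : Continuous (ext' h) :=
  h.continuous.comp continuous_projIcc

lemma ext'_eq (h : C(↥(II : Set ℝ), Mat ν)) {s : ℝ} (hs : s ∈ (II : Set ℝ)) :
    ext' h s = h ⟨s, hs⟩ := by
  rw [ext', projIcc_of_mem]

def Jint (g : ℝ → Mat ν) (s : ℝ) : Mat ν := ∫ σ in (0:ℝ)..s, σ • g σ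

def Kint (g : ℝ → Mat ν) (s : ℝ) : Mat ν := ∫ σ in s..(1:ℝ), (σ - 1) • g σ

def Qm (g : ℝ → Mat ν) (a b : Mat ν) (s : ℝ) : Mat ν :=
  a + s • (b - a) + (s - 1) • Jint g s + s • Kint g s

def Vm (g : ℝ → Mat ν) (a b : Mat ν) (s : ℝ) : Mat ν :=
  (b - a) + Jint g s + Kint g s

section Calculus

variable {g : ℝ → Mat ν} (hg : Continuous g) (a b : Mat ν)

lemma hasDerivAt_primitive {G : ℝ → Mat ν} (hG : Continuous G) (s : ℝ) :
    HasDerivAt (fun u => ∫ τ in (0:ℝ)..u, G τ) (G s) s :=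
  intervalIntegral.integral_hasDerivAt_right (hG.intervalIntegrable _ _)
    (hG.aestronglyMeasurable.stronglyMeasurableAtFilter) hG.continuousAt

lemma cont_primitive {G : ℝ → Mat ν} (hG : Continuous G) :
    Continuous (fun u => ∫ τ in (0:ℝ)..u, G τ) :=
  continuous_iff_continuousAt.2 fun s => (hasDerivAt_primitive hG s).continuousAt

include hg

lemma hJ (s : ℝ) : HasDerivAt (Jint g) (s • g s) s :=
  hasDerivAt_primitive (continuous_id.smul hg) s

lemma hK (s : ℝ) : HasDerivAt (Kint g) (-((s - 1) • g s)) s := by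
  have h1 : Kint g = fun u => -∫ σ in (1:ℝ)..u, (σ - 1) • g σ := by
    funext u
    rw [Kint, intervalIntegral.integral_symm]
  rw [h1]
  have h2 : Continuous fun σ : ℝ => (σ - 1) • g σ :=
    (continuous_id.sub continuous_const).smul hg
  exact (intervalIntegral.integral_hasDerivAt_right (h2.intervalIntegrable _ _)
    (h2.aestronglyMeasurable.stronglyMeasurableAtFilter) h2.continuousAt).neg

lemma hV (s : ℝ) : HasDerivAt (Vm g a b) (g s) s := by
  have h1 := ((hJ hg s).const_add (b - a)).add (hK hg s)
  have h2 : Vm g a b = fun u => ((b - a) + Jint g u) + Kint g u := by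
    funext u; rw [Vm]
  rw [h2]
  exact h1.congr_deriv (by module)

lemma hQ (s : ℝ) : HasDerivAt (Qm g a b) (Vm g a b s) s := by
  have d1 : HasDerivAt (fun u : ℝ => a + u • (b - a)) ((1 : ℝ) • (b - a)) s :=
    ((hasDerivAt_id s).smul_const (b - a)).const_add a
  have d2 : HasDerivAt (fun u : ℝ => (u - 1) • Jint g u)
      ((s - 1) • (s • g s) + (1 : ℝ) • Jint g s) s :=
    ((hasDerivAt_id s).sub_const 1).smul (hJ hg s)
  have d3 : HasDerivAt (fun u : ℝ => u • Kint g u)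
      (s • -((s - 1) • g s) + (1 : ℝ) • Kint g s) s :=
    (hasDerivAt_id s).smul (hK hg s)
  have h1 := (d1.add d2).add d3
  have h2 : Qm g a b = fun u => ((a + u • (b - a)) + (u - 1) • Jint g u) + u • Kint g u := by
    funext u; rw [Qm]
  rw [h2]
  exact h1.congr_deriv (by rw [Vm]; module)

lemma contVm : Continuous (Vm g a b) :=
  continuous_iff_continuousAt.2 fun s => (hV hg a b s).continuousAt

lemma contQm : Continuous (Qm g a b) :=
  continuous_iff_continuousAt.2 fun s => (hQ hg a b s).continuousAt

omit hg

lemma Qm_zero : Qm g a b 0 = a := by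
  simp [Qm, Jint]

lemma Qm_one : Qm g a b 1 = b := by
  simp [Qm, Kint]

end Calculus

section Bounds

variable {g g' : ℝ → Mat ν} (hg : Continuous g) (hg' : Continuous g')
  {C : ℝ} (hC : 0 ≤ C) (hb : ∀ σ ∈ (II : Set ℝ), ‖g σ - g' σ‖ ≤ C)
  {s : ℝ} (hs : s ∈ (II : Set ℝ))

include hg hg' hC hb hs

lemma Jint_bound : ‖Jint g s - Jint g' s‖ ≤ C := by
  have i1 : IntervalIntegrable (fun σ : ℝ => σ • g σ) volume 0 s :=
    (continuous_id.smul hg).intervalIntegrable _ _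
  have i2 : IntervalIntegrable (fun σ : ℝ => σ • g' σ) volume 0 s :=
    (continuous_id.smul hg').intervalIntegrable _ _
  rw [Jint, Jint, ← intervalIntegral.integral_sub i1 i2]
  have key : ∀ σ ∈ uIoc (0:ℝ) s, ‖σ • g σ - σ • g' σ‖ ≤ C := by
    intro σ hσ
    rw [uIoc_of_le hs.1] at hσ
    have hσI : σ ∈ (II : Set ℝ) := ⟨hσ.1.le, hσ.2.trans hs.2⟩
    rw [← smul_sub, norm_smul]
    have h1 : ‖σ‖ ≤ 1 := by
      rw [Real.norm_eq_abs, abs_le]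
      exact ⟨by linarith [hσI.1], hσI.2⟩
    calc ‖σ‖ * ‖g σ - g' σ‖ ≤ 1 * C :=
          mul_le_mul h1 (hb σ hσI) (norm_nonneg _) one_pos.le
      _ = C := one_mul C
  calc ‖∫ σ in (0:ℝ)..s, (σ • g σ - σ • g' σ)‖ ≤ C * |s - 0| :=
        intervalIntegral.norm_integral_le_of_norm_le_const key
    _ ≤ C * 1 := by
        apply mul_le_mul_of_nonneg_left _ hC
        rw [sub_zero, abs_le]
        exact ⟨by linarith [hs.1], hs.2⟩
    _ = C := mul_one C

lemma Kint_bound : ‖Kint g s - Kint g' s‖ ≤ C := by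
  have i1 : IntervalIntegrable (fun σ : ℝ => (σ - 1) • g σ) volume s 1 :=
    ((continuous_id.sub continuous_const).smul hg).intervalIntegrable _ _
  have i2 : IntervalIntegrable (fun σ : ℝ => (σ - 1) • g' σ) volume s 1 :=
    ((continuous_id.sub continuous_const).smul hg').intervalIntegrable _ _
  rw [Kint, Kint, ← intervalIntegral.integral_sub i1 i2]
  have key : ∀ σ ∈ uIoc s (1:ℝ), ‖(σ - 1) • g σ - (σ - 1) • g' σ‖ ≤ C := by
    intro σ hσ
    rw [uIoc_of_le hs.2] at hσ
    have hσI : σ ∈ (II : Set ℝ) := ⟨hs.1.trans hσ.1.le, hσ.2⟩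
    rw [← smul_sub, norm_smul]
    have h1 : ‖σ - 1‖ ≤ 1 := by
      rw [Real.norm_eq_abs, abs_le]
      constructor <;> [linarith [hσI.1]; linarith [hσI.2]]
    calc ‖σ - 1‖ * ‖g σ - g' σ‖ ≤ 1 * C :=
          mul_le_mul h1 (hb σ hσI) (norm_nonneg _) one_pos.le
      _ = C := one_mul C
  calc ‖∫ σ in s..(1:ℝ), ((σ - 1) • g σ - (σ - 1) • g' σ)‖ ≤ C * |1 - s| :=
        intervalIntegral.norm_integral_le_of_norm_le_const key
    _ ≤ C * 1 := by
        apply mul_le_mul_of_nonneg_left _ hC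
        rw [abs_le]
        constructor <;> [linarith [hs.2]; linarith [hs.1]]
    _ = C := mul_one C

lemma Vm_bound (a b : Mat ν) : ‖Vm g a b s - Vm g' a b s‖ ≤ 2 * C := by
  have h1 : Vm g a b s - Vm g' a b s = (Jint g s - Jint g' s) + (Kint g s - Kint g' s) := by
    rw [Vm, Vm]; abel
  rw [h1]
  calc ‖(Jint g s - Jint g' s) + (Kint g s - Kint g' s)‖
      ≤ ‖Jint g s - Jint g' s‖ + ‖Kint g s - Kint g' s‖ := norm_add_le _ _
    _ ≤ C + C := add_le_add (Jint_bound hg hg' hC hb hs) (Kint_bound hg hg' hC hb hs)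
    _ = 2 * C := by ring

lemma Qm_bound (a b : Mat ν) : ‖Qm g a b s - Qm g' a b s‖ ≤ 2 * C := by
  have h1 : Qm g a b s - Qm g' a b s
      = (s - 1) • (Jint g s - Jint g' s) + s • (Kint g s - Kint g' s) := by
    rw [Qm, Qm]; module
  rw [h1]
  have h2 : ‖(s:ℝ) - 1‖ ≤ 1 := by
    rw [Real.norm_eq_abs, abs_le]
    constructor <;> [linarith [hs.1]; linarith [hs.2]]
  have h3 : ‖(s:ℝ)‖ ≤ 1 := by
    rw [Real.norm_eq_abs, abs_le]
    exact ⟨by linarith [hs.1], hs.2⟩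
  calc ‖(s - 1) • (Jint g s - Jint g' s) + s • (Kint g s - Kint g' s)‖
      ≤ ‖(s - 1) • (Jint g s - Jint g' s)‖ + ‖s • (Kint g s - Kint g' s)‖ := norm_add_le _ _
    _ = ‖s - 1‖ * ‖Jint g s - Jint g' s‖ + ‖s‖ * ‖Kint g s - Kint g' s‖ := by
        rw [norm_smul, norm_smul]
    _ ≤ 1 * C + 1 * C := by
        gcongr
        · exact Jint_bound hg hg' hC hb hs
        · exact Kint_bound hg hg' hC hb hs
    _ = 2 * C := by ring

end Bounds

/-- Fundamental theorem of calculus on `[0,1]` with `derivWithin` data. -/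
lemma ftc_aux {F D G : ℝ → Mat ν} (hFc : ContinuousOn F (II : Set ℝ))
    (hd : ∀ x ∈ (II : Set ℝ), HasDerivWithinAt F (D x) (II : Set ℝ) x)
    (hGc : Continuous G) (hDG : ∀ x ∈ (II : Set ℝ), D x = G x)
    {s : ℝ} (hs : s ∈ (II : Set ℝ)) :
    F s = F 0 + ∫ τ in (0:ℝ)..s, G τ := by
  have h := intervalIntegral.integral_eq_sub_of_hasDeriv_right_of_le hs.1
    (hFc.mono (Icc_subset_Icc le_rfl hs.2))
    (fun x hx => by
      have hxI : x ∈ (II : Set ℝ) := ⟨hx.1.le, hx.2.le.trans hs.2⟩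
      have hmem : (II : Set ℝ) ∈ nhds x :=
        mem_nhds_iff.mpr ⟨Ioo 0 1, Ioo_subset_Icc_self, isOpen_Ioo,
          ⟨hx.1, lt_of_lt_of_le hx.2 hs.2⟩⟩
      have h1 : HasDerivAt F (D x) x := (hd x hxI).hasDerivAt hmem
      rw [hDG x hxI] at h1
      exact h1.hasDerivWithinAt)
    (hGc.intervalIntegrable _ _)
  rw [h]
  abel

/-- The solution predicate for the general linear second order BVP. -/
def Sol' (e f : ℝ → Mat ν) (a b : Mat ν) (q : ℝ → Mat ν) : Prop :=
  ContDiffOn ℝ 2 q (Icc 0 1) ∧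
  (∀ s ∈ Icc (0 : ℝ) 1,
      derivWithin (derivWithin q (Icc 0 1)) (Icc 0 1) s =
        e s * derivWithin q (Icc 0 1) s + f s * q s) ∧
  q 0 = a ∧ q 1 = b

/-- The Green's function fixed point map. -/
def Phi (e f : ℝ → Mat ν) (he : Continuous e) (hf : Continuous f) (a b : Mat ν)
    (h : C(↥(II : Set ℝ), Mat ν)) : C(↥(II : Set ℝ), Mat ν) :=
  ⟨fun s => e ↑s * Vm (ext' h) a b ↑s + f ↑s * Qm (ext' h) a b ↑s,
    ((he.comp continuous_subtype_val).mul
        ((contVm (ext'_cont h) a b).comp continuous_subtype_val)).add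
      ((hf.comp continuous_subtype_val).mul
        ((contQm (ext'_cont h) a b).comp continuous_subtype_val))⟩

lemma Phi_apply (e f : ℝ → Mat ν) (he : Continuous e) (hf : Continuous f) (a b : Mat ν)
    (h : C(↥(II : Set ℝ), Mat ν)) (x : ↥(II : Set ℝ)) :
    Phi e f he hf a b h x = e ↑x * Vm (ext' h) a b ↑x + f ↑x * Qm (ext' h) a b ↑x := rfl

lemma exists_unique_sol (e f : ℝ → Mat ν) (he : Continuous e) (hf : Continuous f)
    (hbd : ∀ s, ‖e s‖ + ‖f s‖ ≤ 1/8) (a b : Mat ν) :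
    ∃ q : ℝ → Mat ν, Sol' e f a b q ∧
      ∀ q' : ℝ → Mat ν, Sol' e f a b q' → EqOn q' q (Icc 0 1) := by
  -- the contraction
  have lip : LipschitzWith (1/2) (Phi e f he hf a b) := by
    apply LipschitzWith.of_dist_le_mul
    intro h h'
    have hco : ((1/2 : NNReal) : ℝ) = 1/2 := by norm_num
    rw [hco, ContinuousMap.dist_le (by positivity)]
    intro x
    set C := dist h h' with hCdef
    have hC0 : 0 ≤ C := dist_nonneg
    have hpt : ∀ σ ∈ (II : Set ℝ), ‖ext' h σ - ext' h' σ‖ ≤ C := by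
      intro σ hσ
      rw [ext'_eq h hσ, ext'_eq h' hσ, ← dist_eq_norm]
      exact ContinuousMap.dist_apply_le_dist _
    have hbV := Vm_bound (ext'_cont h) (ext'_cont h') hC0 hpt x.2 a b
    have hbQ := Qm_bound (ext'_cont h) (ext'_cont h') hC0 hpt x.2 a b
    have hsum := hbd (↑x : ℝ)
    have hEn : 0 ≤ ‖e (↑x : ℝ)‖ := norm_nonneg _
    have hFn : 0 ≤ ‖f (↑x : ℝ)‖ := norm_nonneg _
    calc dist (Phi e f he hf a b h x) (Phi e f he hf a b h' x)
        = ‖(e ↑x * Vm (ext' h) a b ↑x + f ↑x * Qm (ext' h) a b ↑x)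
            - (e ↑x * Vm (ext' h') a b ↑x + f ↑x * Qm (ext' h') a b ↑x)‖ := by
          rw [dist_eq_norm, Phi_apply, Phi_apply]
      _ = ‖e ↑x * (Vm (ext' h) a b ↑x - Vm (ext' h') a b ↑x)
            + f ↑x * (Qm (ext' h) a b ↑x - Qm (ext' h') a b ↑x)‖ := by
          rw [mul_sub, mul_sub]; congr 1; abel
      _ ≤ ‖e ↑x * (Vm (ext' h) a b ↑x - Vm (ext' h') a b ↑x)‖
            + ‖f ↑x * (Qm (ext' h) a b ↑x - Qm (ext' h') a b ↑x)‖ := norm_add_le _ _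
      _ ≤ ‖e ↑x‖ * (2*C) + ‖f ↑x‖ * (2*C) := by
          gcongr
          · exact (norm_mul_le _ _).trans (by gcongr)
          · exact (norm_mul_le _ _).trans (by gcongr)
      _ ≤ 1/2 * C := by nlinarith
  have cw : ContractingWith (1/2) (Phi e f he hf a b) := ⟨by rw [← NNReal.coe_lt_coe]; norm_num, lip⟩
  set hstar : C(↥(II : Set ℝ), Mat ν) := ContractingWith.fixedPoint _ cw with hstardef
  have hfix : Phi e f he hf a b hstar = hstar := cw.fixedPoint_isFixedPt
  set G : ℝ → Mat ν := ext' hstar with hGdef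
  have hGc : Continuous G := ext'_cont hstar
  have hfixpt : ∀ s (hs : s ∈ (II : Set ℝ)),
      e s * Vm G a b s + f s * Qm G a b s = G s := by
    intro s hs
    have h2 := DFunLike.congr_fun hfix (⟨s, hs⟩ : ↥(II : Set ℝ))
    rw [Phi_apply] at h2
    rw [hGdef, ext'_eq hstar hs]
    exact h2
  -- the solution
  have hdq : deriv (Qm G a b) = Vm G a b := funext fun s => (hQ hGc a b s).deriv
  have hdV : deriv (Vm G a b) = G := funext fun s => (hV hGc a b s).deriv
  have hsmooth : ContDiff ℝ 2 (Qm G a b) := by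
    rw [show (2 : WithTop ℕ∞) = 1 + 1 by norm_num, contDiff_succ_iff_deriv]
    refine ⟨fun s => (hQ hGc a b s).differentiableAt, by simp, ?_⟩
    rw [hdq, contDiff_one_iff_deriv]
    exact ⟨fun s => (hV hGc a b s).differentiableAt, by rw [hdV]; exact hGc⟩
  have hdw : ∀ s ∈ (II : Set ℝ), derivWithin (Qm G a b) (II : Set ℝ) s = Vm G a b s :=
    fun s hs => (hQ hGc a b s).hasDerivWithinAt.derivWithin (uD s hs)
  have hdw2 : ∀ s ∈ (II : Set ℝ),
      derivWithin (derivWithin (Qm G a b) (II : Set ℝ)) (II : Set ℝ) s = G s := by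
    intro s hs
    rw [derivWithin_congr (fun u hu => hdw u hu) (hdw s hs)]
    exact (hV hGc a b s).hasDerivWithinAt.derivWithin (uD s hs)
  refine ⟨Qm G a b, ⟨hsmooth.contDiffOn, ?_, Qm_zero a b, Qm_one a b⟩, ?_⟩
  · intro s hs
    rw [hdw2 s hs, hdw s hs]
    exact (hfixpt s hs).symm
  -- uniqueness
  intro p hp
  obtain ⟨hpC, hpODE, hp0, hp1⟩ := hp
  set w : ℝ → Mat ν := derivWithin p (II : Set ℝ) with hwdef
  set gp : ℝ → Mat ν := derivWithin w (II : Set ℝ) with hgpdef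
  have hwC : ContDiffOn ℝ 1 w (II : Set ℝ) := hpC.derivWithin uD (by norm_num)
  have hgpc : ContinuousOn gp (II : Set ℝ) := hwC.continuousOn_derivWithin uD le_rfl
  have hpc : ContinuousOn p (II : Set ℝ) := hpC.continuousOn
  have hwc : ContinuousOn w (II : Set ℝ) := hwC.continuousOn
  have hdp : ∀ x ∈ (II : Set ℝ), HasDerivWithinAt p (w x) (II : Set ℝ) x := fun x hx =>
    ((hpC.differentiableOn (by norm_num)) x hx).hasDerivWithinAt
  have hdww : ∀ x ∈ (II : Set ℝ), HasDerivWithinAt w (gp x) (II : Set ℝ) x := fun x hx =>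
    ((hwC.differentiableOn one_ne_zero) x hx).hasDerivWithinAt
  set hpmap : C(↥(II : Set ℝ), Mat ν) := ⟨fun x => gp ↑x, hgpc.restrict⟩ with hpmapdef
  set G' : ℝ → Mat ν := ext' hpmap with hG'def
  have hG'c : Continuous G' := ext'_cont hpmap
  have hG'eq : ∀ s ∈ (II : Set ℝ), G' s = gp s := by
    intro s hs
    rw [hG'def, ext'_eq hpmap hs]
    rfl
  -- FTC steps
  have hwW : ∀ s ∈ (II : Set ℝ), w s = w 0 + ∫ τ in (0:ℝ)..s, G' τ :=
    fun s hs => ftc_aux hwc hdww hG'c (fun x hx => (hG'eq x hx).symm) hs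
  set W : ℝ → Mat ν := fun u => w 0 + ∫ τ in (0:ℝ)..u, G' τ with hWdef
  have hWc : Continuous W := continuous_const.add (cont_primitive hG'c)
  have hpP : ∀ s ∈ (II : Set ℝ), p s = p 0 + ∫ τ in (0:ℝ)..s, W τ :=
    fun s hs => ftc_aux hpc hdp hWc (fun x hx => hwW x hx) hs
  -- explicit formula for the primitive of W
  have claim1 : ∀ s : ℝ, (∫ σ in (0:ℝ)..s, W σ)
      = s • w 0 + (s • (∫ τ in (0:ℝ)..s, G' τ) - Jint G' s) := by
    intro s
    have contPrim : Continuous fun σ : ℝ => ∫ τ in (0:ℝ)..σ, G' τ := cont_primitive hG'c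
    have i1 : IntervalIntegrable (fun _ : ℝ => w 0) volume 0 s := intervalIntegrable_const
    have i2 : IntervalIntegrable (fun σ : ℝ => ∫ τ in (0:ℝ)..σ, G' τ) volume 0 s :=
      contPrim.intervalIntegrable _ _
    have split : (∫ σ in (0:ℝ)..s, W σ)
        = (∫ _σ in (0:ℝ)..s, w 0) + ∫ σ in (0:ℝ)..s, (∫ τ in (0:ℝ)..σ, G' τ) := by
      rw [← intervalIntegral.integral_add i1 i2]
    rw [split, intervalIntegral.integral_const, sub_zero]
    have hder : ∀ u : ℝ, HasDerivAt (fun v => (∫ σ in (0:ℝ)..v, (∫ τ in (0:ℝ)..σ, G' τ))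
        - (v • (∫ τ in (0:ℝ)..v, G' τ) - Jint G' v)) 0 u := by
      intro u
      have h1 : HasDerivAt (fun v => ∫ σ in (0:ℝ)..v, (∫ τ in (0:ℝ)..σ, G' τ))
          (∫ τ in (0:ℝ)..u, G' τ) u := hasDerivAt_primitive contPrim u
      have h2 : HasDerivAt (fun v : ℝ => v • (∫ τ in (0:ℝ)..v, G' τ))
          (u • G' u + (1:ℝ) • (∫ τ in (0:ℝ)..u, G' τ)) u :=
        (hasDerivAt_id u).smul (hasDerivAt_primitive hG'c u)
      have h3 : HasDerivAt (Jint G') (u • G' u) u := hJ hG'c u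
      have h4 := h1.sub (h2.sub h3)
      exact h4.congr_deriv (by module)
    have hconst := is_const_of_deriv_eq_zero
      (fun u => (hder u).differentiableAt) (fun u => (hder u).deriv) s 0
    have hzero : (∫ σ in (0:ℝ)..(0:ℝ), (∫ τ in (0:ℝ)..σ, G' τ))
        - ((0:ℝ) • (∫ τ in (0:ℝ)..(0:ℝ), G' τ) - Jint G' 0) = 0 := by
      simp [Jint]
    rw [hzero] at hconst
    rw [sub_eq_zero.mp hconst]
  have h1I : (1:ℝ) ∈ (II : Set ℝ) := ⟨zero_le_one, le_rfl⟩
  -- value of w 0 from the boundary conditions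
  have hw0 : w 0 = (b - a) - (∫ τ in (0:ℝ)..1, G' τ) + Jint G' 1 := by
    have h1 := hpP 1 h1I
    rw [claim1 1, hp0, hp1, one_smul, one_smul] at h1
    rw [h1]
    abel
  -- key integral identity
  have keyid : ∀ s ∈ (II : Set ℝ), Jint G' s + Kint G' s
      = (∫ τ in (0:ℝ)..s, G' τ) - ((∫ τ in (0:ℝ)..1, G' τ) - Jint G' 1) := by
    intro s hs
    have hsg : Continuous fun σ : ℝ => σ • G' σ := continuous_id.smul hG'c
    have adj1 : (∫ τ in (0:ℝ)..s, G' τ) + (∫ τ in s..(1:ℝ), G' τ)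
        = ∫ τ in (0:ℝ)..1, G' τ :=
      intervalIntegral.integral_add_adjacent_intervals
        (hG'c.intervalIntegrable _ _) (hG'c.intervalIntegrable _ _)
    have adj2 : Jint G' s + (∫ σ in s..(1:ℝ), σ • G' σ) = Jint G' 1 :=
      intervalIntegral.integral_add_adjacent_intervals
        (hsg.intervalIntegrable _ _) (hsg.intervalIntegrable _ _)
    have hKs : Kint G' s = (∫ σ in s..(1:ℝ), σ • G' σ) - ∫ σ in s..(1:ℝ), G' σ := by
      rw [Kint, ← intervalIntegral.integral_sub (hsg.intervalIntegrable _ _)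
        (hG'c.intervalIntegrable _ _)]
      congr 1
      funext σ
      rw [sub_smul, one_smul]
    rw [hKs, ← adj1, ← adj2]
    abel
  -- p and its derivative agree with the Green representation
  have claimV : ∀ s ∈ (II : Set ℝ), w s = Vm G' a b s := by
    intro s hs
    rw [hwW s hs, hw0, Vm]
    have hKs : Kint G' s = ((∫ τ in (0:ℝ)..s, G' τ)
        - ((∫ τ in (0:ℝ)..1, G' τ) - Jint G' 1)) - Jint G' s := by
      rw [← keyid s hs]; abel
    rw [hKs]
    abel
  have claimQ : ∀ s ∈ (II : Set ℝ), p s = Qm G' a b s := by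
    intro s hs
    rw [hpP s hs, claim1 s, hw0, hp0, Qm]
    have hKs : Kint G' s = ((∫ τ in (0:ℝ)..s, G' τ)
        - ((∫ τ in (0:ℝ)..1, G' τ) - Jint G' 1)) - Jint G' s := by
      rw [← keyid s hs]; abel
    rw [hKs]
    module
  -- hence the second derivative data is a fixed point of Phi
  have hfixp : Function.IsFixedPt (Phi e f he hf a b) hpmap := by
    apply ContinuousMap.ext
    intro x
    rw [Phi_apply]
    have hxI : (↑x : ℝ) ∈ (II : Set ℝ) := x.2
    have hrhs : hpmap x = gp ↑x := rfl
    rw [hrhs]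
    have hODE := hpODE ↑x hxI
    rw [← hG'def, ← claimV ↑x hxI, ← claimQ ↑x hxI]
    exact hODE.symm
  have huniq : hpmap = hstar := cw.fixedPoint_unique hfixp
  intro s hs
  rw [claimQ s hs, hG'def, hGdef, huniq]

end BVPAux

theorem statement0 (ν : ℕ) (hν : 1 ≤ ν) (A B C : ℂ → Mat ν)
    (U : Set ℂ) (hU : U ∈ nhds (0 : ℂ)) (hUopen : IsOpen U)
    (hA : AnalyticOnNhd ℂ A U) (hB : AnalyticOnNhd ℂ B U) (hC : AnalyticOnNhd ℂ C U)
    (hAsymm : ∀ t ∈ U, (A t).IsSymm) (hCsymm : ∀ t ∈ U, (C t).IsSymm)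
    (A₀ : Matrix (Fin ν) (Fin ν) ℝ) (hA₀ : A₀.PosDef)
    (hA0 : A 0 = A₀.map (Complex.ofReal : ℝ → ℂ)) :
    ∃ Tbar > (0 : ℝ), ∀ t : ℂ, ‖t‖ < Tbar →
      (∃ qf : ℝ → Mat ν, SolBVP A B C t 0 1 qf ∧
        ∀ q' : ℝ → Mat ν, SolBVP A B C t 0 1 q' → EqOn q' qf (Icc 0 1)) ∧
      (∃ qs : ℝ → Mat ν, SolBVP A B C t 1 0 qs ∧
        ∀ q' : ℝ → Mat ν, SolBVP A B C t 1 0 q' → EqOn q' qs (Icc 0 1)) := by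
  classical
  -- `A 0` is invertible
  have hdet0 : (A 0).det ≠ 0 := by
    have h1 : (A 0).det = ((A₀.det : ℝ) : ℂ) := by
      rw [hA0]
      exact (RingHom.map_det Complex.ofRealHom A₀).symm
    rw [h1]
    exact_mod_cast ne_of_gt hA₀.det_pos
  have hAc : ContinuousOn A U := hA.continuousOn
  have hdetc : ContinuousOn (fun z => (A z).det) U :=
    (continuous_id.matrix_det).comp_continuousOn hAc
  set Vs : Set ℂ := U ∩ (fun z => (A z).det) ⁻¹' {(0:ℂ)}ᶜ with hVsdef
  have hVopen : IsOpen Vs := hdetc.isOpen_inter_preimage hUopen isOpen_compl_singleton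
  have h0V : (0:ℂ) ∈ Vs := ⟨mem_of_mem_nhds hU, by simpa using hdet0⟩
  obtain ⟨ε, hε, hball⟩ := Metric.isOpen_iff.mp hVopen 0 h0V
  set r : ℝ := ε/2 with hrdef
  have hrpos : 0 < r := by positivity
  have hrsub : Metric.closedBall (0:ℂ) r ⊆ Vs :=
    (Metric.closedBall_subset_ball (by rw [hrdef]; linarith)).trans hball
  -- continuity of the coefficients on `Vs`
  have hAinv : ContinuousOn (fun z => (A z)⁻¹) Vs := by
    intro z hz
    have h1 : ContinuousAt A z := (hA z hz.1).continuousAt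
    have hdet : (A z).det ≠ 0 := by simpa using hz.2
    have h2 : ContinuousAt Ring.inverse ((A z).det) := by
      rw [Ring.inverse_eq_inv']
      exact continuousAt_inv₀ hdet
    exact ((continuousAt_matrix_inv (A z) h2).comp h1).continuousWithinAt
  have hAU : ContinuousOn A Vs := hAc.mono inter_subset_left
  have hBU : ContinuousOn B Vs := hB.continuousOn.mono inter_subset_left
  have hdAU : ContinuousOn (deriv A) Vs := hA.deriv.continuousOn.mono inter_subset_left
  have hdBU : ContinuousOn (deriv B) Vs := hB.deriv.continuousOn.mono inter_subset_left
  have hCU : ContinuousOn C Vs := hC.continuousOn.mono inter_subset_left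
  have hEc : ContinuousOn (Ecoef A B) Vs := by
    apply ContinuousOn.add
    · exact hdAU.mul hAinv
    · exact (hAU.mul
        (((continuous_id.matrix_transpose).comp_continuousOn hBU).sub hBU)).const_smul (2:ℂ)
  have hFc : ContinuousOn (Fcoef A B C) Vs :=
    ((hAU.mul hCU).const_smul (4:ℂ)).sub ((hAU.mul hdBU).const_smul (2:ℂ))
  -- bounds on the compact ball
  obtain ⟨CE, hCE⟩ := (isCompact_closedBall (0:ℂ) r).exists_bound_of_continuousOn
    (hEc.mono hrsub)
  obtain ⟨CF, hCF⟩ := (isCompact_closedBall (0:ℂ) r).exists_bound_of_continuousOn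
    (hFc.mono hrsub)
  set K : ℝ := max (max CE CF) 0 with hKdef
  have hK0 : 0 ≤ K := le_max_right _ _
  have hCEK : CE ≤ K := le_trans (le_max_left _ _) (le_max_left _ _)
  have hCFK : CF ≤ K := le_trans (le_max_right _ _) (le_max_left _ _)
  set Tbar : ℝ := min r (1/(16*(K+1))) with hTdef
  have hTpos : 0 < Tbar := lt_min hrpos (by positivity)
  refine ⟨Tbar, hTpos, ?_⟩
  intro t ht
  have htr : ‖t‖ < r := lt_of_lt_of_le ht (min_le_left _ _)
  have htK : ‖t‖ < 1/(16*(K+1)) := lt_of_lt_of_le ht (min_le_right _ _)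
  have ht1 : ‖t‖ ≤ 1 := by
    have : (1:ℝ)/(16*(K+1)) ≤ 1 := by
      rw [div_le_one (by positivity)]
      nlinarith
    linarith
  -- the clamping map
  set cl : ℝ → ℝ := fun s => max 0 (min 1 s) with hcldef
  have hclc : Continuous cl := continuous_const.max (continuous_const.min continuous_id)
  have hclI : ∀ s : ℝ, cl s ∈ Icc (0:ℝ) 1 :=
    fun s => ⟨le_max_left _ _, max_le zero_le_one (min_le_left _ _)⟩
  have hcleq : ∀ s ∈ Icc (0:ℝ) 1, cl s = s := by
    intro s hs
    rw [hcldef]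
    simp only
    rw [min_eq_right hs.2, max_eq_right hs.1]
  set e : ℝ → Mat ν := fun s => t • Ecoef A B (t * (cl s : ℂ)) with hedef
  set f : ℝ → Mat ν := fun s => t^2 • Fcoef A B C (t * (cl s : ℂ)) with hfdef
  have hmem : ∀ s : ℝ, t * ((cl s : ℝ) : ℂ) ∈ Metric.closedBall (0:ℂ) r := by
    intro s
    rw [Metric.mem_closedBall, dist_zero_right, norm_mul, Complex.norm_real,
      Real.norm_eq_abs, abs_of_nonneg (hclI s).1]
    calc ‖t‖ * cl s ≤ ‖t‖ * 1 := by
          apply mul_le_mul_of_nonneg_left (hclI s).2 (norm_nonneg _)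
      _ = ‖t‖ := mul_one _
      _ ≤ r := htr.le
  have hccomp : Continuous fun s : ℝ => t * ((cl s : ℝ) : ℂ) :=
    continuous_const.mul (Complex.continuous_ofReal.comp hclc)
  have he : Continuous e := ((hEc.mono hrsub).comp_continuous hccomp hmem).const_smul t
  have hf : Continuous f := ((hFc.mono hrsub).comp_continuous hccomp hmem).const_smul (t^2)
  have hbd : ∀ s : ℝ, ‖e s‖ + ‖f s‖ ≤ 1/8 := by
    intro s
    have hE1 : ‖Ecoef A B (t * (cl s : ℂ))‖ ≤ K := le_trans (hCE _ (hmem s)) hCEK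
    have hF1 : ‖Fcoef A B C (t * (cl s : ℂ))‖ ≤ K := le_trans (hCF _ (hmem s)) hCFK
    have h1 : ‖e s‖ ≤ ‖t‖ * K := by
      rw [hedef]
      simp only
      rw [norm_smul]
      exact mul_le_mul_of_nonneg_left hE1 (norm_nonneg _)
    have h2 : ‖f s‖ ≤ ‖t‖ * K := by
      rw [hfdef]
      simp only
      rw [norm_smul, norm_pow]
      calc ‖t‖^2 * ‖Fcoef A B C (t * (cl s : ℂ))‖ ≤ ‖t‖^2 * K := by
            apply mul_le_mul_of_nonneg_left hF1 (by positivity)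
        _ ≤ ‖t‖ * K := by nlinarith [mul_nonneg (norm_nonneg t) hK0, ht1, norm_nonneg t]
    have hKt : ‖t‖ * K ≤ 1/16 := by
      have h3 : ‖t‖ * K ≤ (1/(16*(K+1))) * K := by
        apply mul_le_mul_of_nonneg_right htK.le hK0
      have h4 : (1/(16*(K+1))) * K ≤ 1/16 := by
        rw [div_mul_eq_mul_div, div_le_div_iff₀ (by positivity) (by positivity)]
        nlinarith
      linarith
    linarith
  -- translation between SolBVP and Sol'
  have hiff : ∀ (a b : Mat ν) (q : ℝ → Mat ν),
      SolBVP A B C t a b q ↔ BVPAux.Sol' e f a b q := by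
    intro a b q
    have hmain : ∀ s ∈ Icc (0:ℝ) 1, ∀ X Y : Mat ν,
        t • (Ecoef A B (t * ↑s) * X) + t ^ 2 • (Fcoef A B C (t * ↑s) * Y)
          = e s * X + f s * Y := by
      intro s hs X Y
      rw [hedef, hfdef]
      simp only
      rw [hcleq s hs, smul_mul_assoc, smul_mul_assoc]
    constructor
    · rintro ⟨h1, h2, h3, h4⟩
      refine ⟨h1, fun s hs => ?_, h3, h4⟩
      refine (h2 s hs).trans ?_
      exact hmain s hs _ _
    · rintro ⟨h1, h2, h3, h4⟩
      refine ⟨h1, fun s hs => ?_, h3, h4⟩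
      refine (h2 s hs).trans ?_
      exact (hmain s hs _ _).symm
  obtain ⟨qf, hqf, huf⟩ := BVPAux.exists_unique_sol e f he hf hbd 0 1
  obtain ⟨qs, hqs, hus⟩ := BVPAux.exists_unique_sol e f he hf hbd 1 0
  exact ⟨⟨qf, (hiff 0 1 qf).mpr hqf, fun q' hq' => huf q' ((hiff 0 1 q').mp hq')⟩,
    ⟨qs, (hiff 1 0 qs).mpr hqs, fun q' hq' => hus q' ((hiff 1 0 q').mp hq')⟩⟩
end
end

section
/- For small τ > 0, let q♭_τ : [0,τ] → M_ν(ℂ) be the solution of q̈ = E(s)q̇ + F(s)q with q♭_τ(0) = 0 and q♭_τ(τ) = 𝟙, and set p♭_τ := (1/2)A⁻¹ q̇♭_τ + B q♭_τ. Then the matrix p♭_τ(τ) is symmetric, i.e. p♭_τ(τ) = ᵗp♭_τ(τ). -/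
open Matrix Set MeasureTheory Filter

attribute [local instance] Matrix.linftyOpNormedAddCommGroup Matrix.linftyOpNormedRing
  Matrix.linftyOpNormedAlgebra

noncomputable section

/-- `q : [0,τ] → Mat ν` is a C² solution of the matrix Euler–Lagrange equation
`q̈(s) = E(s)·q̇(s) + F(s)·q(s)` with boundary values `q 0 = a`, `q τ = b`. -/
def SolReal {ν : ℕ} (A B C : ℂ → Mat ν) (τ : ℝ) (a b : Mat ν) (q : ℝ → Mat ν) : Prop :=
  ContDiffOn ℝ 2 q (Icc 0 τ) ∧
  (∀ s ∈ Icc (0 : ℝ) τ,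
      derivWithin (derivWithin q (Icc 0 τ)) (Icc 0 τ) s =
        Ecoef A B (s : ℂ) * derivWithin q (Icc 0 τ) s
          + Fcoef A B C (s : ℂ) * q s) ∧
  q 0 = a ∧ q τ = b

/-- Restriction to the reals of a complex-differentiable vector-valued map. -/
theorem aux_comp_ofReal {E} [NormedAddCommGroup E] [NormedSpace ℂ E] {f : ℂ → E} {f' : E} {z : ℝ}
    (hf : HasDerivAt f f' z) : HasDerivAt (fun y : ℝ => f y) f' z := by
  simpa [Function.comp_def] using (hf.hasFDerivAt.restrictScalars ℝ).comp_hasDerivAt z Complex.ofRealCLM.hasDerivAt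

/-- Derivative of the pointwise inverse of a matrix-valued map. -/
theorem aux_inv_hasDerivAt {ν : ℕ} {a : ℝ → Mat ν} {a' : Mat ν} {s : ℝ}
    (ha : HasDerivAt a a' s) (hu : IsUnit (a s)) :
    HasDerivAt (fun t => (a t)⁻¹) (-((a s)⁻¹ * a' * (a s)⁻¹)) s := by
  have h1 : HasFDerivAt Ring.inverse
      (-ContinuousLinearMap.mulLeftRight ℝ (Mat ν) ↑hu.unit⁻¹ ↑hu.unit⁻¹) (a s) := by
    simpa [hu.unit_spec] using hasFDerivAt_ringInverse (𝕜 := ℝ) hu.unit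
  have h2 := h1.comp_hasDerivAt s ha
  have h3 : (↑hu.unit⁻¹ : Mat ν) = (a s)⁻¹ := by
    rw [Matrix.nonsing_inv_eq_ringInverse, ← Ring.inverse_unit hu.unit, hu.unit_spec]
  have : (fun t => (a t)⁻¹) = fun t => Ring.inverse (a t) := by
    funext t; rw [Matrix.nonsing_inv_eq_ringInverse]
  rw [this]
  simp [h3, Function.comp_def, ← Matrix.nonsing_inv_eq_ringInverse] at h2 ⊢
  exact h2

/-- Transpose as a continuous `ℝ`-linear map on matrices. -/
def tCLM (ν : ℕ) : Mat ν →L[ℝ] Mat ν :=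
  LinearMap.toContinuousLinearMap
    { toFun := Matrix.transpose
      map_add' := Matrix.transpose_add
      map_smul' := fun c M => Matrix.transpose_smul c M }

@[simp] theorem tCLM_apply {ν : ℕ} (M : Mat ν) : tCLM ν M = Mᵀ := rfl

theorem statement6 (ν : ℕ) (hν : 1 ≤ ν) (A B C : ℂ → Mat ν)
    (U : Set ℂ) (hU : U ∈ nhds (0 : ℂ)) (hUopen : IsOpen U)
    (hA : AnalyticOnNhd ℂ A U) (hB : AnalyticOnNhd ℂ B U) (hC : AnalyticOnNhd ℂ C U)
    (hAsymm : ∀ t ∈ U, (A t).IsSymm) (hCsymm : ∀ t ∈ U, (C t).IsSymm)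
    (A₀ : Matrix (Fin ν) (Fin ν) ℝ) (hA₀ : A₀.PosDef)
    (hA0 : A 0 = A₀.map (Complex.ofReal : ℝ → ℂ)) :
    ∃ T > (0 : ℝ), ∀ τ : ℝ, 0 < τ → τ < T → ∀ q : ℝ → Mat ν,
      SolReal A B C τ 0 1 q →
      Matrix.IsSymm
        ((2 : ℂ)⁻¹ • ((A (τ : ℂ))⁻¹ * derivWithin q (Icc 0 τ) τ)
          + B (τ : ℂ) * q τ) := by
  -- `A 0` is invertible
  have hdet0 : (A 0).det ≠ 0 := by
    rw [hA0]
    have : (A₀.map (Complex.ofReal : ℝ → ℂ)).det = (A₀.det : ℂ) := by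
      rw [show A₀.map (Complex.ofReal : ℝ → ℂ) = Complex.ofRealHom.mapMatrix A₀ from rfl,
        ← RingHom.map_det]; rfl
    rw [this]
    exact_mod_cast ne_of_gt hA₀.det_pos
  -- the set where `A` is defined, analytic and invertible
  set V : Set ℂ := U ∩ ((fun t => (A t).det) ⁻¹' {(0 : ℂ)}ᶜ) with hV
  have hVopen : IsOpen V := by
    apply ContinuousOn.isOpen_inter_preimage ?_ hUopen isOpen_compl_singleton
    exact Continuous.matrix_det continuous_id |>.comp_continuousOn hA.continuousOn
  have hV0 : (0 : ℂ) ∈ V := ⟨mem_of_mem_nhds hU, hdet0⟩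
  obtain ⟨ε, hε, hball⟩ := Metric.isOpen_iff.mp hVopen 0 hV0
  refine ⟨ε, hε, ?_⟩
  intro τ hτ0 hτT q hq
  obtain ⟨hq2, hode, hq0, hqτ⟩ := hq
  have hmem : ∀ s : ℝ, s ∈ Icc 0 τ → (↑s : ℂ) ∈ V := by
    intro s hs
    apply hball
    simp only [Metric.mem_ball, Complex.dist_eq, sub_zero, Complex.norm_real, Real.norm_eq_abs]
    calc |s| = s := abs_of_nonneg hs.1
    _ ≤ τ := hs.2
    _ < ε := hτT
  have hUmem : ∀ s : ℝ, s ∈ Icc 0 τ → (↑s : ℂ) ∈ U := fun s hs => (hmem s hs).1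
  have hunit : ∀ s : ℝ, s ∈ Icc 0 τ → IsUnit (A ↑s) := fun s hs =>
    (Matrix.isUnit_iff_isUnit_det _).mpr (isUnit_iff_ne_zero.mpr (hmem s hs).2)
  have uD : UniqueDiffOn ℝ (Icc 0 τ) := uniqueDiffOn_Icc hτ0
  set q' : ℝ → Mat ν := derivWithin q (Icc 0 τ) with hq'
  have hq'diffOn : DifferentiableOn ℝ q' (Icc 0 τ) :=
    (hq2.derivWithin uD (m := 1) (by norm_num)).differentiableOn one_ne_zero
  have hqd : ∀ s ∈ Icc (0:ℝ) τ, HasDerivWithinAt q (q' s) (Icc 0 τ) s := fun s hs =>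
    ((hq2.differentiableOn two_ne_zero) s hs).hasDerivWithinAt
  have hq'd : ∀ s ∈ Icc (0:ℝ) τ,
      HasDerivWithinAt q' (Ecoef A B ↑s * q' s + Fcoef A B C ↑s * q s) (Icc 0 τ) s := by
    intro s hs
    have h := (hq'diffOn s hs).hasDerivWithinAt
    exact h.congr_deriv (hode s hs)
  -- the momentum
  set p : ℝ → Mat ν := fun s => (2 : ℂ)⁻¹ • ((A ↑s)⁻¹ * q' s) + B ↑s * q s with hp
  have hpd : ∀ s ∈ Icc (0:ℝ) τ,
      HasDerivWithinAt p ((B ↑s)ᵀ * q' s + (2 : ℂ) • (C ↑s * q s)) (Icc 0 τ) s := by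
    intro s hs
    have hAd : HasDerivAt (fun t : ℝ => A ↑t) (deriv A ↑s) s :=
      aux_comp_ofReal ((hA _ (hUmem s hs)).differentiableAt.hasDerivAt)
    have hBd : HasDerivAt (fun t : ℝ => B ↑t) (deriv B ↑s) s :=
      aux_comp_ofReal ((hB _ (hUmem s hs)).differentiableAt.hasDerivAt)
    have hAinvd : HasDerivAt (fun t : ℝ => (A ↑t)⁻¹)
        (-((A ↑s)⁻¹ * deriv A ↑s * (A ↑s)⁻¹)) s := aux_inv_hasDerivAt hAd (hunit s hs)
    have h1 := (hAinvd.hasDerivWithinAt.mul (hq'd s hs)).const_smul ((2:ℂ)⁻¹)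
    have h2 := hBd.hasDerivWithinAt.mul (hqd s hs)
    have h3 := h1.add h2
    refine h3.congr_deriv ?_
    have hAinv : (A ↑s)⁻¹ * (A ↑s) = 1 :=
      Matrix.nonsing_inv_mul _ ((Matrix.isUnit_iff_isUnit_det _).mp (hunit s hs))
    have hcanc : ∀ X : Mat ν, (A ↑s)⁻¹ * (A ↑s * X) = X := fun X => by
      rw [← mul_assoc, hAinv, one_mul]
    simp only [Ecoef, Fcoef, neg_mul, mul_neg, mul_add, mul_sub, add_mul, sub_mul,
      smul_mul_assoc, mul_smul_comm, mul_assoc, hcanc, smul_add, smul_sub, smul_neg,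
      smul_smul]
    module
  -- the symplectic-form function
  set S : ℝ → Mat ν := fun s => (q s)ᵀ * p s - (p s)ᵀ * q s with hS
  have hSd : ∀ s ∈ Icc (0:ℝ) τ, HasDerivWithinAt S 0 (Icc 0 τ) s := by
    intro s hs
    have hqT : HasDerivWithinAt (fun t => (q t)ᵀ) ((q' s)ᵀ) (Icc 0 τ) s := by
      have := (tCLM ν).hasFDerivAt.comp_hasDerivWithinAt s (hqd s hs)
      exact this
    have hpT : HasDerivWithinAt (fun t => (p t)ᵀ)
        (((B ↑s)ᵀ * q' s + (2 : ℂ) • (C ↑s * q s))ᵀ) (Icc 0 τ) s := by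
      have := (tCLM ν).hasFDerivAt.comp_hasDerivWithinAt s (hpd s hs)
      exact this
    have h := (hqT.mul (hpd s hs)).sub (hpT.mul (hqd s hs))
    refine h.congr_deriv ?_
    -- algebra: the derivative vanishes
    have hAs : (A ↑s)ᵀ = A ↑s := hAsymm _ (hUmem s hs)
    have hCs : (C ↑s)ᵀ = C ↑s := hCsymm _ (hUmem s hs)
    have hAinvs : ((A ↑s)⁻¹)ᵀ = (A ↑s)⁻¹ := by
      rw [Matrix.transpose_nonsing_inv, hAs]
    simp only [hp, Matrix.transpose_add, Matrix.transpose_mul, Matrix.transpose_smul,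
      Matrix.transpose_transpose, hAs, hCs, hAinvs, mul_add, add_mul, mul_smul_comm,
      smul_mul_assoc, mul_assoc]
    module
  have hSdiff : DifferentiableOn ℝ S (Icc 0 τ) := fun s hs =>
    (hSd s hs).differentiableWithinAt
  have hSderiv0 : ∀ s ∈ Ico (0:ℝ) τ, derivWithin S (Icc 0 τ) s = 0 := fun s hs =>
    (hSd s (Ico_subset_Icc_self hs)).derivWithin (uD s (Ico_subset_Icc_self hs))
  have hconst := constant_of_derivWithin_zero hSdiff hSderiv0 τ (right_mem_Icc.mpr hτ0.le)
  have hS0 : S 0 = 0 := by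
    simp [hS, hq0]
  rw [hS0] at hconst
  have hSτ : (q τ)ᵀ * p τ - (p τ)ᵀ * q τ = 0 := hconst
  rw [hqτ, Matrix.transpose_one, one_mul, mul_one] at hSτ
  have : (p τ)ᵀ = p τ := (sub_eq_zero.mp hSτ).symm
  exact this
end
end

section
/- For small t > 0 and x, y ∈ ℂ^ν, let q♮_t(s) := q♭_t(s)x + q♯_t(s)y on [0,t]. Then for every s ∈ [0,t], the vector w(s) := ∂_t[q♮_t(s)] + q♭_t(s)·q̇♮_t(t) vanishes, where ∂_t denotes differentiation of the family with respect to the parameter t at fixed s, and q̇♮_t(t) denotes the derivative of q♮_t with respect to s evaluated at s = t. Equivalently, (∂_t + q̇♮_t(t)·∂_x) q♮_{t,α}(s) = 0 for each coordinate α. -/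
open Matrix Set MeasureTheory Filter

attribute [local instance] Matrix.linftyOpNormedAddCommGroup Matrix.linftyOpNormedRing
  Matrix.linftyOpNormedAlgebra

noncomputable section

open Topology

section Helpers

variable {F : Type*} [NormedAddCommGroup F] [NormedSpace ℝ F]

/-- first partial derivative -/
def pd1 (h : ℝ × ℝ → F) : ℝ × ℝ → F := fun p => fderiv ℝ h p (1, 0)

/-- second partial derivative -/
def pd2 (h : ℝ × ℝ → F) : ℝ × ℝ → F := fun p => fderiv ℝ h p (0, 1)

lemma hasDerivAt_comp_fst (h : ℝ × ℝ → F) (p : ℝ × ℝ) (hd : DifferentiableAt ℝ h p) :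
    HasDerivAt (fun τ => h (τ, p.2)) (pd1 h p) p.1 := by
  have h1 : HasDerivAt (fun τ : ℝ => (τ, p.2)) ((1 : ℝ), (0 : ℝ)) p.1 :=
    (hasDerivAt_id p.1).prodMk (hasDerivAt_const _ _)
  have := hd.hasFDerivAt.comp_hasDerivAt_of_eq p.1 h1 (by simp)
  simpa [pd1, Function.comp_def] using this

lemma deriv_comp_fst (h : ℝ × ℝ → F) (p : ℝ × ℝ) (hd : DifferentiableAt ℝ h p) :
    deriv (fun τ => h (τ, p.2)) p.1 = pd1 h p :=
  (hasDerivAt_comp_fst h p hd).deriv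

lemma hasDerivAt_comp_snd (h : ℝ × ℝ → F) (p : ℝ × ℝ) (hd : DifferentiableAt ℝ h p) :
    HasDerivAt (fun u => h (p.1, u)) (pd2 h p) p.2 := by
  have h1 : HasDerivAt (fun u : ℝ => (p.1, u)) ((0 : ℝ), (1 : ℝ)) p.2 :=
    (hasDerivAt_const _ _).prodMk (hasDerivAt_id p.2)
  have := hd.hasFDerivAt.comp_hasDerivAt_of_eq p.2 h1 (by simp)
  simpa [pd2, Function.comp_def] using this

lemma deriv_comp_snd (h : ℝ × ℝ → F) (p : ℝ × ℝ) (hd : DifferentiableAt ℝ h p) :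
    deriv (fun u => h (p.1, u)) p.2 = pd2 h p :=
  (hasDerivAt_comp_snd h p hd).deriv

/-- agreement on the open interval plus continuity gives agreement on the closed interval -/
lemma eqOn_Icc_of_eqOn_Ioo {f g : ℝ → F} {a b : ℝ} (hab : a < b)
    (hf : ContinuousOn f (Icc a b)) (hg : ContinuousOn g (Icc a b))
    (h : EqOn f g (Ioo a b)) : EqOn f g (Icc a b) := by
  intro s hs
  have hcl : s ∈ closure (Ioo a b) := by rwa [closure_Ioo hab.ne]
  have hne : (𝓝[Ioo a b] s).NeBot := mem_closure_iff_nhdsWithin_neBot.1 hcl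
  have hsub : Ioo a b ⊆ Icc a b := Ioo_subset_Icc_self
  have hfl : Filter.Tendsto f (𝓝[Ioo a b] s) (𝓝 (f s)) :=
    (hf s hs).mono_left (nhdsWithin_mono _ hsub)
  have hgl : Filter.Tendsto g (𝓝[Ioo a b] s) (𝓝 (g s)) :=
    (hg s hs).mono_left (nhdsWithin_mono _ hsub)
  have : Filter.Tendsto f (𝓝[Ioo a b] s) (𝓝 (g s)) :=
    hgl.congr' (by filter_upwards [self_mem_nhdsWithin] with u hu using (h hu).symm)
  exact tendsto_nhds_unique hfl this

lemma derivWithin_Icc_eq_deriv {f : ℝ → F} {a b s : ℝ} (hs : s ∈ Ioo a b) :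
    derivWithin f (Icc a b) s = deriv f s :=
  derivWithin_of_mem_nhds (Icc_mem_nhds hs.1 hs.2)

lemma derivWithin2_Icc_eq_deriv {f : ℝ → F} {a b s : ℝ} (hs : s ∈ Ioo a b) :
    derivWithin (derivWithin f (Icc a b)) (Icc a b) s = deriv (deriv f) s := by
  rw [derivWithin_of_mem_nhds (Icc_mem_nhds hs.1 hs.2)]
  apply Filter.EventuallyEq.deriv_eq
  filter_upwards [isOpen_Ioo.mem_nhds hs] with u hu
  exact derivWithin_of_mem_nhds (Icc_mem_nhds hu.1 hu.2)

section pd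
variable {Ω : Set (ℝ × ℝ)} {f : ℝ × ℝ → F} {n : ℕ}

lemma contDiffOn_pd1 (hΩ : IsOpen Ω) (h : ContDiffOn ℝ (n + 1 : ℕ) f Ω) :
    ContDiffOn ℝ n (pd1 f) Ω := by
  have h1 : ContDiffOn ℝ n (fderiv ℝ f) Ω := h.fderiv_of_isOpen hΩ (by norm_cast)
  exact (ContinuousLinearMap.apply ℝ F ((1 : ℝ), (0 : ℝ))).contDiff.comp_contDiffOn h1

lemma contDiffOn_pd2 (hΩ : IsOpen Ω) (h : ContDiffOn ℝ (n + 1 : ℕ) f Ω) :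
    ContDiffOn ℝ n (pd2 f) Ω := by
  have h1 : ContDiffOn ℝ n (fderiv ℝ f) Ω := h.fderiv_of_isOpen hΩ (by norm_cast)
  exact (ContinuousLinearMap.apply ℝ F ((0 : ℝ), (1 : ℝ))).contDiff.comp_contDiffOn h1

lemma diffAt_of_contDiffOn (hΩ : IsOpen Ω) (h : ContDiffOn ℝ (n + 1 : ℕ) f Ω)
    {p : ℝ × ℝ} (hp : p ∈ Ω) : DifferentiableAt ℝ f p :=
  (h.contDiffAt (hΩ.mem_nhds hp)).differentiableAt (by
    simp)

lemma fderiv_pd_apply (hΩ : IsOpen Ω) (h : ContDiffOn ℝ (1 + 1 : ℕ) f Ω)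
    {p : ℝ × ℝ} (hp : p ∈ Ω) (v w : ℝ × ℝ) :
    fderiv ℝ (fun q => fderiv ℝ f q v) p w = fderiv ℝ (fderiv ℝ f) p w v := by
  have hd : DifferentiableAt ℝ (fderiv ℝ f) p := by
    have h1 : ContDiffOn ℝ (1 : ℕ) (fderiv ℝ f) Ω := h.fderiv_of_isOpen hΩ (by norm_cast)
    exact (h1.contDiffAt (hΩ.mem_nhds hp)).differentiableAt (by norm_cast)
  rw [fderiv_clm_apply hd (differentiableAt_const v)]
  simp

lemma pd_swap (hΩ : IsOpen Ω) (h : ContDiffOn ℝ (1 + 1 : ℕ) f Ω) {p : ℝ × ℝ} (hp : p ∈ Ω) :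
    pd1 (pd2 f) p = pd2 (pd1 f) p := by
  have hsymm : IsSymmSndFDerivAt ℝ f p :=
    (h.contDiffAt (hΩ.mem_nhds hp)).isSymmSndFDerivAt (by rw [minSmoothness_of_isRCLikeNormedField]; norm_cast)
  show fderiv ℝ (fun q => fderiv ℝ f q (0, 1)) p (1, 0)
      = fderiv ℝ (fun q => fderiv ℝ f q (1, 0)) p (0, 1)
  rw [fderiv_pd_apply hΩ h hp, fderiv_pd_apply hΩ h hp]
  exact hsymm _ _

end pd

/-- mulVec by a fixed vector, as a continuous linear map in the matrix -/
def mulVecCLM {ν : ℕ} (x : Fin ν → ℂ) : Mat ν →L[ℂ] (Fin ν → ℂ) :=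
  LinearMap.toContinuousLinearMap
    { toFun := fun M => M.mulVec x
      map_add' := fun M N => Matrix.add_mulVec M N x
      map_smul' := fun c M => Matrix.smul_mulVec c M x }

@[simp] lemma mulVecCLM_apply {ν : ℕ} (x : Fin ν → ℂ) (M : Mat ν) :
    mulVecCLM x M = M.mulVec x := rfl

/-- mulVec by a fixed matrix, as a continuous linear map in the vector -/
def mulVecCLM' {ν : ℕ} (M : Mat ν) : (Fin ν → ℂ) →L[ℂ] (Fin ν → ℂ) :=
  LinearMap.toContinuousLinearMap M.mulVecLin

@[simp] lemma mulVecCLM'_apply {ν : ℕ} (M : Mat ν) (x : Fin ν → ℂ) :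
    mulVecCLM' M x = M.mulVec x := rfl

lemma coeff_cont {ν : ℕ} (A B C : ℂ → Mat ν) (U : Set ℂ)
    (hA : AnalyticOnNhd ℂ A U) (hB : AnalyticOnNhd ℂ B U) (hC : AnalyticOnNhd ℂ C U)
    {z : ℂ} (hz : z ∈ U) (hdet : (A z).det ≠ 0) :
    ContinuousAt (Ecoef A B) z ∧ ContinuousAt (Fcoef A B C) z := by
  have hAc : ContinuousAt A z := (hA z hz).continuousAt
  have hBc : ContinuousAt B z := (hB z hz).continuousAt
  have hCc : ContinuousAt C z := (hC z hz).continuousAt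
  have hdA : ContinuousAt (deriv A) z := ((hA.deriv) z hz).continuousAt
  have hdB : ContinuousAt (deriv B) z := ((hB.deriv) z hz).continuousAt
  have hRinv : ContinuousAt Ring.inverse (A z).det := by
    rw [show (Ring.inverse : ℂ → ℂ) = Inv.inv from Ring.inverse_eq_inv']
    exact continuousAt_inv₀ hdet
  have hinv : ContinuousAt (fun w => (A w)⁻¹) z :=
    (continuousAt_matrix_inv (A z) hRinv).comp hAc
  have hBt : ContinuousAt (fun w => (B w)ᵀ) z :=
    (continuous_id.matrix_transpose).continuousAt.comp hBc
  constructor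
  · exact (hdA.mul hinv).add (((hAc.mul (hBt.sub hBc))).const_smul (2 : ℂ))
  · exact ((hAc.mul hCc).const_smul (4 : ℂ)).sub ((hAc.mul hdB).const_smul (2 : ℂ))

end Helpers

set_option maxHeartbeats 2000000

theorem statement8 (ν : ℕ) (hν : 1 ≤ ν) (A B C : ℂ → Mat ν)
    (U : Set ℂ) (hU : U ∈ nhds (0 : ℂ)) (hUopen : IsOpen U)
    (hA : AnalyticOnNhd ℂ A U) (hB : AnalyticOnNhd ℂ B U) (hC : AnalyticOnNhd ℂ C U)
    (hAsymm : ∀ t ∈ U, (A t).IsSymm) (hCsymm : ∀ t ∈ U, (C t).IsSymm)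
    (A₀ : Matrix (Fin ν) (Fin ν) ℝ) (hA₀ : A₀.PosDef)
    (hA0 : A 0 = A₀.map (Complex.ofReal : ℝ → ℂ))
    (T₀ : ℝ) (hT₀ : 0 < T₀) (qb qs : ℝ → ℝ → Mat ν)
    (hqb : ∀ τ : ℝ, 0 < τ → τ < T₀ → SolReal A B C τ 0 1 (qb τ))
    (hqs : ∀ τ : ℝ, 0 < τ → τ < T₀ → SolReal A B C τ 1 0 (qs τ))
    (hqbsm : ContDiffOn ℝ (⊤ : ℕ∞) (fun p : ℝ × ℝ => qb p.1 p.2)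
      (Ioo 0 T₀ ×ˢ (univ : Set ℝ)))
    (hqssm : ContDiffOn ℝ (⊤ : ℕ∞) (fun p : ℝ × ℝ => qs p.1 p.2)
      (Ioo 0 T₀ ×ˢ (univ : Set ℝ)))
    (huniq : ∀ τ : ℝ, 0 < τ → τ < T₀ → ∀ w : ℝ → (Fin ν → ℂ),
      ContDiffOn ℝ 2 w (Icc 0 τ) →
      (∀ s ∈ Icc (0 : ℝ) τ,
        derivWithin (derivWithin w (Icc 0 τ)) (Icc 0 τ) s =
          (Ecoef A B (s : ℂ)).mulVec (derivWithin w (Icc 0 τ) s)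
            + (Fcoef A B C (s : ℂ)).mulVec (w s)) →
      w 0 = 0 → w τ = 0 → ∀ s ∈ Icc (0 : ℝ) τ, w s = 0) :
    ∃ T : ℝ, 0 < T ∧ T ≤ T₀ ∧ ∀ t : ℝ, 0 < t → t < T →
      ∀ x y : Fin ν → ℂ, ∀ s ∈ Icc (0 : ℝ) t,
        deriv (fun τ : ℝ => (qb τ s).mulVec x + (qs τ s).mulVec y) t
          + (qb t s).mulVec
              (derivWithin (fun u : ℝ => (qb t u).mulVec x + (qs t u).mulVec y)
                (Icc 0 t) t) = 0 := by
  classical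
  -- Choose a ball around 0 on which the coefficients are continuous
  have hAcont : ContinuousOn A U := fun z hz => (hA z hz).continuousAt.continuousWithinAt
  have hdet0 : (A 0).det ≠ 0 := by
    rw [hA0]
    have : ((Complex.ofRealHom : ℝ →+* ℂ).mapMatrix A₀ : Mat ν) = A₀.map (Complex.ofReal : ℝ → ℂ) := rfl
    rw [← this, ← RingHom.map_det]
    simpa using hA₀.det_pos.ne'
  have hVopen : IsOpen (U ∩ (fun z => (A z).det) ⁻¹' {(0 : ℂ)}ᶜ) := by
    have hdetc : ContinuousOn (fun z => (A z).det) U :=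
      (continuous_id.matrix_det).comp_continuousOn hAcont
    exact hdetc.isOpen_inter_preimage hUopen isOpen_compl_singleton
  obtain ⟨ε, hε0, hball⟩ := Metric.isOpen_iff.1 hVopen 0
    ⟨mem_of_mem_nhds hU, by simpa using hdet0⟩
  refine ⟨min T₀ ε, lt_min hT₀ hε0, min_le_left _ _, ?_⟩
  intro t ht htT x y
  have htT₀ : t < T₀ := lt_of_lt_of_le htT (min_le_left _ _)
  have htε : t < ε := lt_of_lt_of_le htT (min_le_right _ _)
  have htI : t ∈ Ioo (0 : ℝ) T₀ := ⟨ht, htT₀⟩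
  -- coefficient continuity on [0, t]
  have hcoef : ∀ s : ℝ, s ∈ Icc (0 : ℝ) t →
      ContinuousAt (Ecoef A B) (s : ℂ) ∧ ContinuousAt (Fcoef A B C) (s : ℂ) := by
    intro s hs
    have hmem : (s : ℂ) ∈ U ∩ (fun z => (A z).det) ⁻¹' {(0 : ℂ)}ᶜ := by
      apply hball
      simp only [Metric.mem_ball, dist_zero_right, Complex.norm_real, Real.norm_eq_abs]
      rw [abs_of_nonneg hs.1]
      exact lt_of_le_of_lt hs.2 htε
    exact coeff_cont A B C U hA hB hC hmem.1 (by simpa using hmem.2)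
  -- the smooth two-parameter family
  set Ω : Set (ℝ × ℝ) := Ioo (0 : ℝ) T₀ ×ˢ (univ : Set ℝ) with hΩdef
  have hΩo : IsOpen Ω := isOpen_Ioo.prod isOpen_univ
  have hmemΩ : ∀ (τ u : ℝ), τ ∈ Ioo (0 : ℝ) T₀ → (τ, u) ∈ Ω := fun τ u hτ =>
    Set.mem_prod.2 ⟨hτ, trivial⟩
  set g : ℝ × ℝ → (Fin ν → ℂ) :=
    fun p => (qb p.1 p.2).mulVec x + (qs p.1 p.2).mulVec y with hgdef
  have hgtop : ContDiffOn ℝ (⊤ : ℕ∞) g Ω := by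
    have h1 := ((mulVecCLM x).restrictScalars ℝ).contDiff.comp_contDiffOn hqbsm
    have h2 := ((mulVecCLM y).restrictScalars ℝ).contDiff.comp_contDiffOn hqssm
    exact h1.add h2
  have hof : ∀ n : ℕ, ContDiffOn ℝ (n : ℕ) g Ω := fun n =>
    hgtop.of_le (le_trans (WithTop.coe_le_coe.2 le_top) le_rfl)
  have hdiffg : ∀ p ∈ Ω, DifferentiableAt ℝ g p := fun p hp =>
    diffAt_of_contDiffOn hΩo (hof (0 + 1)) hp
  have hdiffpd1g : ∀ p ∈ Ω, DifferentiableAt ℝ (pd1 g) p := fun p hp =>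
    diffAt_of_contDiffOn hΩo (contDiffOn_pd1 hΩo (hof (0 + 1 + 1))) hp
  have hdiffpd2g : ∀ p ∈ Ω, DifferentiableAt ℝ (pd2 g) p := fun p hp =>
    diffAt_of_contDiffOn hΩo (contDiffOn_pd2 hΩo (hof (0 + 1 + 1))) hp
  have hdiffpd2pd2g : ∀ p ∈ Ω, DifferentiableAt ℝ (pd2 (pd2 g)) p := fun p hp =>
    diffAt_of_contDiffOn hΩo (contDiffOn_pd2 hΩo (contDiffOn_pd2 hΩo (hof (0 + 1 + 1 + 1)))) hp
  have hdiffpd2pd1g : ∀ p ∈ Ω, DifferentiableAt ℝ (pd2 (pd1 g)) p := fun p hp =>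
    diffAt_of_contDiffOn hΩo (contDiffOn_pd2 hΩo (contDiffOn_pd1 hΩo (hof (0 + 1 + 1 + 1)))) hp
  -- smoothness of the time-slices
  have hfixb : ∀ τ ∈ Ioo (0 : ℝ) T₀, ContDiff ℝ (⊤ : ℕ∞) (qb τ) := by
    intro τ hτ
    rw [← contDiffOn_univ]
    exact hqbsm.comp ((contDiff_const.prodMk contDiff_id).contDiffOn)
      (fun u _ => hmemΩ τ u hτ)
  have hfixs : ∀ τ ∈ Ioo (0 : ℝ) T₀, ContDiff ℝ (⊤ : ℕ∞) (qs τ) := by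
    intro τ hτ
    rw [← contDiffOn_univ]
    exact hqssm.comp ((contDiff_const.prodMk contDiff_id).contDiffOn)
      (fun u _ => hmemΩ τ u hτ)
  have hone : ((1 : ℕ∞) : WithTop ℕ∞) ≤ ((⊤ : ℕ∞) : WithTop ℕ∞) :=
    WithTop.coe_le_coe.2 le_top
  have hdiffb : ∀ τ ∈ Ioo (0 : ℝ) T₀, Differentiable ℝ (qb τ) := fun τ hτ =>
    (hfixb τ hτ).differentiable (by simp)
  have hdiffs : ∀ τ ∈ Ioo (0 : ℝ) T₀, Differentiable ℝ (qs τ) := fun τ hτ =>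
    (hfixs τ hτ).differentiable (by simp)
  have hdiffdb : ∀ τ ∈ Ioo (0 : ℝ) T₀, Differentiable ℝ (deriv (qb τ)) := fun τ hτ =>
    ((contDiff_infty_iff_deriv.1 (hfixb τ hτ)).2).differentiable (by simp)
  have hdiffds : ∀ τ ∈ Ioo (0 : ℝ) T₀, Differentiable ℝ (deriv (qs τ)) := fun τ hτ =>
    ((contDiff_infty_iff_deriv.1 (hfixs τ hτ)).2).differentiable (by simp)
  -- true (unrestricted) matrix ODEs in the interior
  have hbODE : ∀ τ, 0 < τ → τ < T₀ → ∀ s ∈ Ioo (0 : ℝ) τ,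
      deriv (deriv (qb τ)) s
        = Ecoef A B (s : ℂ) * deriv (qb τ) s + Fcoef A B C (s : ℂ) * qb τ s := by
    intro τ h0 hT s hs
    have h := (hqb τ h0 hT).2.1 s (Ioo_subset_Icc_self hs)
    have e1 : derivWithin (derivWithin (qb τ) (Icc 0 τ)) (Icc 0 τ) s = deriv (deriv (qb τ)) s :=
      derivWithin2_Icc_eq_deriv hs
    have e2 : derivWithin (qb τ) (Icc 0 τ) s = deriv (qb τ) s := derivWithin_Icc_eq_deriv hs
    rwa [e1, e2] at h
  have hsODE : ∀ τ, 0 < τ → τ < T₀ → ∀ s ∈ Ioo (0 : ℝ) τ,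
      deriv (deriv (qs τ)) s
        = Ecoef A B (s : ℂ) * deriv (qs τ) s + Fcoef A B C (s : ℂ) * qs τ s := by
    intro τ h0 hT s hs
    have h := (hqs τ h0 hT).2.1 s (Ioo_subset_Icc_self hs)
    have e1 : derivWithin (derivWithin (qs τ) (Icc 0 τ)) (Icc 0 τ) s = deriv (deriv (qs τ)) s :=
      derivWithin2_Icc_eq_deriv hs
    have e2 : derivWithin (qs τ) (Icc 0 τ) s = deriv (qs τ) s := derivWithin_Icc_eq_deriv hs
    rwa [e1, e2] at h
  -- boundary values of the family
  have hg0 : ∀ τ ∈ Ioo (0 : ℝ) T₀, g (τ, 0) = y := by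
    intro τ hτ
    show (qb τ 0).mulVec x + (qs τ 0).mulVec y = y
    rw [(hqb τ hτ.1 hτ.2).2.2.1, (hqs τ hτ.1 hτ.2).2.2.1]
    simp [Matrix.zero_mulVec, Matrix.one_mulVec]
  have hgdiag : ∀ τ ∈ Ioo (0 : ℝ) T₀, g (τ, τ) = x := by
    intro τ hτ
    show (qb τ τ).mulVec x + (qs τ τ).mulVec y = x
    rw [(hqb τ hτ.1 hτ.2).2.2.2, (hqs τ hτ.1 hτ.2).2.2.2]
    simp [Matrix.zero_mulVec, Matrix.one_mulVec]
  -- pointwise formula for the second partial derivative of g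
  have hG2eq : ∀ τ ∈ Ioo (0 : ℝ) T₀, ∀ u : ℝ,
      pd2 g (τ, u) = (deriv (qb τ) u).mulVec x + (deriv (qs τ) u).mulVec y := by
    intro τ hτ u
    have hb : HasDerivAt (qb τ) (deriv (qb τ) u) u := ((hdiffb τ hτ) u).hasDerivAt
    have hs' : HasDerivAt (qs τ) (deriv (qs τ) u) u := ((hdiffs τ hτ) u).hasDerivAt
    have h1 : HasDerivAt (fun u' => g (τ, u'))
        ((deriv (qb τ) u).mulVec x + (deriv (qs τ) u).mulVec y) u := by
      have hbx := (((mulVecCLM x).restrictScalars ℝ).hasFDerivAt).comp_hasDerivAt u hb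
      have hsy := (((mulVecCLM y).restrictScalars ℝ).hasFDerivAt).comp_hasDerivAt u hs'
      exact hbx.add hsy
    have h2 := hasDerivAt_comp_snd g (τ, u) (hdiffg _ (hmemΩ τ u hτ))
    exact h2.unique h1
  -- the second-order equation for the vector-valued family
  have hSS : ∀ p : ℝ × ℝ, 0 < p.2 → p.2 < p.1 → p.1 < T₀ →
      pd2 (pd2 g) p
        = (Ecoef A B (p.2 : ℂ)).mulVec (pd2 g p)
          + (Fcoef A B C (p.2 : ℂ)).mulVec (g p) := by
    rintro ⟨τ, u⟩ h0 hu hT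
    have hτI : τ ∈ Ioo (0 : ℝ) T₀ := ⟨lt_trans h0 hu, hT⟩
    have hpΩ := hmemΩ τ u hτI
    have hDb : HasDerivAt (deriv (qb τ)) (deriv (deriv (qb τ)) u) u :=
      ((hdiffdb τ hτI) u).hasDerivAt
    have hDs : HasDerivAt (deriv (qs τ)) (deriv (deriv (qs τ)) u) u :=
      ((hdiffds τ hτI) u).hasDerivAt
    have h1 : HasDerivAt (fun u' => pd2 g (τ, u'))
        ((deriv (deriv (qb τ)) u).mulVec x + (deriv (deriv (qs τ)) u).mulVec y) u := by
      have e : (fun u' => pd2 g (τ, u'))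
          = fun u' => (deriv (qb τ) u').mulVec x + (deriv (qs τ) u').mulVec y :=
        funext fun u' => hG2eq τ hτI u'
      rw [e]
      exact ((((mulVecCLM x).restrictScalars ℝ).hasFDerivAt).comp_hasDerivAt u hDb).add
        ((((mulVecCLM y).restrictScalars ℝ).hasFDerivAt).comp_hasDerivAt u hDs)
    have h2 := hasDerivAt_comp_snd (pd2 g) (τ, u) (hdiffpd2g _ hpΩ)
    have h3 : pd2 (pd2 g) (τ, u)
        = (deriv (deriv (qb τ)) u).mulVec x + (deriv (deriv (qs τ)) u).mulVec y :=
      h2.unique h1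
    have hgval : g (τ, u) = (qb τ u).mulVec x + (qs τ u).mulVec y := rfl
    have hG2val := hG2eq τ hτI u
    rw [h3, hbODE τ hτI.1 hT u ⟨h0, hu⟩, hsODE τ hτI.1 hT u ⟨h0, hu⟩]
    show _ = (Ecoef A B (u : ℂ)).mulVec (pd2 g (τ, u))
        + (Fcoef A B C (u : ℂ)).mulVec (g (τ, u))
    rw [hG2val, hgval]
    simp only [Matrix.add_mulVec, Matrix.mulVec_add, ← Matrix.mulVec_mulVec]
    abel
  -- Schwarz symmetry exchanges
  have hswap12 : ∀ p ∈ Ω, pd1 (pd2 g) p = pd2 (pd1 g) p := fun p hp =>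
    pd_swap hΩo (hof (1 + 1)) hp
  have hswapD : ∀ p ∈ Ω, pd1 (pd2 (pd2 g)) p = pd2 (pd1 (pd2 g)) p := fun p hp =>
    pd_swap hΩo (contDiffOn_pd2 hΩo (hof (1 + 1 + 1))) hp
  have hswapfun : ∀ p ∈ Ω, pd2 (pd1 (pd2 g)) p = pd2 (pd2 (pd1 g)) p := by
    intro p hp
    show fderiv ℝ (pd1 (pd2 g)) p (0, 1) = fderiv ℝ (pd2 (pd1 g)) p (0, 1)
    have : fderiv ℝ (pd1 (pd2 g)) p = fderiv ℝ (pd2 (pd1 g)) p := by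
      apply Filter.EventuallyEq.fderiv_eq
      filter_upwards [hΩo.mem_nhds hp] with q hq using hswap12 q hq
    rw [this]
  -- the boundary-derivative vector v and the function w
  set v : Fin ν → ℂ := derivWithin
    (fun u : ℝ => (qb t u).mulVec x + (qs t u).mulVec y) (Icc 0 t) t with hvdef
  have hgfix : ∀ u : ℝ, g (t, u) = (qb t u).mulVec x + (qs t u).mulVec y := fun u => rfl
  have hveq : v = pd2 g (t, t) := by
    rw [hvdef]
    have hfun : (fun u : ℝ => (qb t u).mulVec x + (qs t u).mulVec y)
        = fun u => g (t, u) := funext fun u => (hgfix u).symm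
    rw [hfun]
    have hDA : DifferentiableAt ℝ (fun u : ℝ => g (t, u)) t :=
      (hasDerivAt_comp_snd g (t, t) (hdiffg _ (hmemΩ t t htI))).differentiableAt
    rw [hDA.derivWithin ((uniqueDiffOn_Icc ht).uniqueDiffWithinAt (right_mem_Icc.2 ht.le))]
    exact deriv_comp_snd g (t, t) (hdiffg _ (hmemΩ t t htI))
  set w : ℝ → (Fin ν → ℂ) := fun u => pd1 g (t, u) + (qb t u).mulVec v with hwdef
  -- smoothness of w
  have hwsm : ∀ n : ℕ, ContDiff ℝ (n : ℕ) w := by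
    intro n
    rw [← contDiffOn_univ]
    have h1 : ContDiffOn ℝ (n : ℕ) (fun u : ℝ => pd1 g (t, u)) univ :=
      (contDiffOn_pd1 hΩo (hof (n + 1))).comp
        ((contDiff_const.prodMk contDiff_id).contDiffOn) (fun u _ => hmemΩ t u htI)
    have h2 : ContDiffOn ℝ (n : ℕ) (fun u : ℝ => (qb t u).mulVec v) univ := by
      have hqbn : ContDiff ℝ (n : ℕ) (qb t) :=
        (hfixb t htI).of_le (le_trans (WithTop.coe_le_coe.2 le_top) le_rfl)
      exact (((mulVecCLM v).restrictScalars ℝ).contDiff.comp hqbn).contDiffOn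
    exact h1.add h2
  -- boundary value at 0
  have hw0 : w 0 = 0 := by
    have h1 : pd1 g (t, 0) = 0 := by
      have hD := hasDerivAt_comp_fst g (t, 0) (hdiffg _ (hmemΩ t 0 htI))
      have hC : HasDerivAt (fun τ : ℝ => g (τ, 0)) 0 t := by
        have heq : (fun τ : ℝ => g (τ, 0)) =ᶠ[𝓝 t] (fun _ => y) := by
          filter_upwards [isOpen_Ioo.mem_nhds htI] with τ hτ using hg0 τ hτ
        exact (hasDerivAt_const t y).congr_of_eventuallyEq heq
      exact hD.unique hC
    show pd1 g (t, 0) + (qb t 0).mulVec v = 0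
    rw [h1, (hqb t ht htT₀).2.2.1]
    simp [Matrix.zero_mulVec]
  -- boundary value at t
  have hwt : w t = 0 := by
    have hdiag : HasDerivAt (fun τ : ℝ => g (τ, τ)) (fderiv ℝ g (t, t) (1, 1)) t := by
      have h1 : HasDerivAt (fun τ : ℝ => ((τ : ℝ), (τ : ℝ))) ((1 : ℝ), (1 : ℝ)) t :=
        (hasDerivAt_id t).prodMk (hasDerivAt_id t)
      have := (hdiffg _ (hmemΩ t t htI)).hasFDerivAt.comp_hasDerivAt_of_eq t h1 rfl
      simpa [Function.comp_def] using this
    have hzero : HasDerivAt (fun τ : ℝ => g (τ, τ)) 0 t := by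
      have heq : (fun τ : ℝ => g (τ, τ)) =ᶠ[𝓝 t] (fun _ => x) := by
        filter_upwards [isOpen_Ioo.mem_nhds htI] with τ hτ using hgdiag τ hτ
      exact (hasDerivAt_const t x).congr_of_eventuallyEq heq
    have h11 : fderiv ℝ g (t, t) (1, 1) = 0 := hdiag.unique hzero
    have hsplit : pd1 g (t, t) + pd2 g (t, t) = 0 := by
      have : pd1 g (t, t) + pd2 g (t, t) = fderiv ℝ g (t, t) (1, 1) := by
        show fderiv ℝ g (t, t) (1, 0) + fderiv ℝ g (t, t) (0, 1) = _
        rw [← ContinuousLinearMap.map_add]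
        norm_num
      rw [this, h11]
    show pd1 g (t, t) + (qb t t).mulVec v = 0
    rw [(hqb t ht htT₀).2.2.2, Matrix.one_mulVec, hveq]
    exact hsplit
  -- derivative formulas for w
  have hw1d : ∀ u : ℝ, HasDerivAt (fun u' => pd1 g (t, u')) (pd2 (pd1 g) (t, u)) u :=
    fun u => hasDerivAt_comp_snd (pd1 g) (t, u) (hdiffpd1g _ (hmemΩ t u htI))
  have hw1dd : ∀ u : ℝ, HasDerivAt (fun u' => pd2 (pd1 g) (t, u'))
      (pd2 (pd2 (pd1 g)) (t, u)) u :=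
    fun u => hasDerivAt_comp_snd (pd2 (pd1 g)) (t, u) (hdiffpd2pd1g _ (hmemΩ t u htI))
  have hw2d : ∀ u : ℝ, HasDerivAt (fun u' => (qb t u').mulVec v)
      ((deriv (qb t) u).mulVec v) u := fun u =>
    (((mulVecCLM v).restrictScalars ℝ).hasFDerivAt).comp_hasDerivAt u
      ((hdiffb t htI u).hasDerivAt)
  have hw2dd : ∀ u : ℝ, HasDerivAt (fun u' => (deriv (qb t) u').mulVec v)
      ((deriv (deriv (qb t)) u).mulVec v) u := fun u =>
    (((mulVecCLM v).restrictScalars ℝ).hasFDerivAt).comp_hasDerivAt u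
      ((hdiffdb t htI u).hasDerivAt)
  have hwd : ∀ u : ℝ, HasDerivAt w
      (pd2 (pd1 g) (t, u) + (deriv (qb t) u).mulVec v) u :=
    fun u => (hw1d u).add (hw2d u)
  have hderivw : deriv w = fun u => pd2 (pd1 g) (t, u) + (deriv (qb t) u).mulVec v :=
    funext fun u => (hwd u).deriv
  have hwdd : ∀ u : ℝ, HasDerivAt (deriv w)
      (pd2 (pd2 (pd1 g)) (t, u) + (deriv (deriv (qb t)) u).mulVec v) u := by
    rw [hderivw]
    exact fun u => (hw1dd u).add (hw2dd u)
  -- the true interior ODE for w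
  have hwODEtrue : ∀ s ∈ Ioo (0 : ℝ) t, deriv (deriv w) s
      = (Ecoef A B (s : ℂ)).mulVec (deriv w s)
        + (Fcoef A B C (s : ℂ)).mulVec (w s) := by
    intro s hs
    have hsΩ := hmemΩ t s htI
    -- differentiate the second-order equation in the τ-direction
    have hPhiPsi : deriv (fun τ => pd2 (pd2 g) (τ, s)) t
        = deriv (fun τ => (Ecoef A B (s : ℂ)).mulVec (pd2 g (τ, s))
            + (Fcoef A B C (s : ℂ)).mulVec (g (τ, s))) t := by
      apply Filter.EventuallyEq.deriv_eq
      filter_upwards [Ioo_mem_nhds hs.2 htT₀] with τ hτ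
      exact hSS (τ, s) hs.1 hτ.1 hτ.2
    have hL : deriv (fun τ => pd2 (pd2 g) (τ, s)) t = pd1 (pd2 (pd2 g)) (t, s) :=
      deriv_comp_fst (pd2 (pd2 g)) (t, s) (hdiffpd2pd2g _ hsΩ)
    have hR : deriv (fun τ => (Ecoef A B (s : ℂ)).mulVec (pd2 g (τ, s))
            + (Fcoef A B C (s : ℂ)).mulVec (g (τ, s))) t
        = (Ecoef A B (s : ℂ)).mulVec (pd1 (pd2 g) (t, s))
          + (Fcoef A B C (s : ℂ)).mulVec (pd1 g (t, s)) := by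
      have h1 := hasDerivAt_comp_fst (pd2 g) (t, s) (hdiffpd2g _ hsΩ)
      have h2 := hasDerivAt_comp_fst g (t, s) (hdiffg _ hsΩ)
      exact ((((mulVecCLM' (Ecoef A B (s : ℂ))).restrictScalars
          ℝ).hasFDerivAt.comp_hasDerivAt t h1).add
        (((mulVecCLM' (Fcoef A B C (s : ℂ))).restrictScalars
          ℝ).hasFDerivAt.comp_hasDerivAt t h2)).deriv
    have hkey : pd2 (pd2 (pd1 g)) (t, s)
        = (Ecoef A B (s : ℂ)).mulVec (pd2 (pd1 g) (t, s))
          + (Fcoef A B C (s : ℂ)).mulVec (pd1 g (t, s)) := by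
      rw [← hswapfun _ hsΩ, ← hswapD _ hsΩ, ← hL, hPhiPsi, hR, hswap12 _ hsΩ]
    rw [(hwdd s).deriv, (hwd s).deriv, hkey, hbODE t ht htT₀ s hs]
    show _ = (Ecoef A B (s : ℂ)).mulVec (pd2 (pd1 g) (t, s) + (deriv (qb t) s).mulVec v)
        + (Fcoef A B C (s : ℂ)).mulVec (pd1 g (t, s) + (qb t s).mulVec v)
    simp only [Matrix.add_mulVec, Matrix.mulVec_add, ← Matrix.mulVec_mulVec]
    abel
  -- C² regularity of w on [0,t]
  have hw2 : ContDiffOn ℝ 2 w (Icc 0 t) := by exact_mod_cast (hwsm 2).contDiffOn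
  -- continuity of both sides of the ODE
  have hdw1 : ContDiffOn ℝ 1 (derivWithin w (Icc 0 t)) (Icc 0 t) :=
    hw2.derivWithin (uniqueDiffOn_Icc ht) (by norm_num)
  have hcontL : ContinuousOn
      (fun s => derivWithin (derivWithin w (Icc 0 t)) (Icc 0 t) s) (Icc 0 t) :=
    hdw1.continuousOn_derivWithin (uniqueDiffOn_Icc ht) le_rfl
  have hmv : Continuous (fun p : Mat ν × (Fin ν → ℂ) => p.1.mulVec p.2) :=
    continuous_fst.matrix_mulVec continuous_snd
  have hEC : ContinuousOn (fun s : ℝ => Ecoef A B (s : ℂ)) (Icc 0 t) := fun s hsI =>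
    (((hcoef s hsI).1).comp Complex.continuous_ofReal.continuousAt).continuousWithinAt
  have hFC : ContinuousOn (fun s : ℝ => Fcoef A B C (s : ℂ)) (Icc 0 t) := fun s hsI =>
    (((hcoef s hsI).2).comp Complex.continuous_ofReal.continuousAt).continuousWithinAt
  have hwc : ContinuousOn w (Icc 0 t) := (hwsm 1).continuous.continuousOn
  have hcontR : ContinuousOn (fun s : ℝ =>
      (Ecoef A B (s : ℂ)).mulVec (derivWithin w (Icc 0 t) s)
        + (Fcoef A B C (s : ℂ)).mulVec (w s)) (Icc 0 t) :=
    (hmv.comp_continuousOn (hEC.prodMk hdw1.continuousOn)).add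
      (hmv.comp_continuousOn (hFC.prodMk hwc))
  -- the ODE in derivWithin form, on all of [0,t]
  have hwODE : ∀ s ∈ Icc (0 : ℝ) t,
      derivWithin (derivWithin w (Icc 0 t)) (Icc 0 t) s =
        (Ecoef A B (s : ℂ)).mulVec (derivWithin w (Icc 0 t) s)
          + (Fcoef A B C (s : ℂ)).mulVec (w s) := by
    have hIoo : EqOn (fun s => derivWithin (derivWithin w (Icc 0 t)) (Icc 0 t) s)
        (fun s : ℝ => (Ecoef A B (s : ℂ)).mulVec (derivWithin w (Icc 0 t) s)
          + (Fcoef A B C (s : ℂ)).mulVec (w s)) (Ioo 0 t) := by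
      intro s hs
      show derivWithin (derivWithin w (Icc 0 t)) (Icc 0 t) s
          = (Ecoef A B (s : ℂ)).mulVec (derivWithin w (Icc 0 t) s)
            + (Fcoef A B C (s : ℂ)).mulVec (w s)
      rw [derivWithin2_Icc_eq_deriv (f := w) hs, derivWithin_Icc_eq_deriv (f := w) hs]
      exact hwODEtrue s hs
    exact fun s hs => eqOn_Icc_of_eqOn_Ioo ht hcontL hcontR hIoo hs
  -- conclude via uniqueness
  have hzero := huniq t ht htT₀ w hw2 hwODE hw0 hwt
  intro s hs
  have hws := hzero s hs
  have hfun : (fun τ : ℝ => (qb τ s).mulVec x + (qs τ s).mulVec y)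
      = fun τ => g (τ, s) := funext fun τ => by rw [hgdef]
  rw [hfun, deriv_comp_fst g (t, s) (hdiffg _ (hmemΩ t s htI))]
  rw [hwdef] at hws
  exact hws
end
end

section
/- Let T̃ > 0 and M > 0. There exists T > 0 with the following property: for every analytic function f on the disc D_{T̃} = {z ∈ ℂ : |z| < T̃} satisfying f(0) = 0, f'(0) = 1, sup_{t ∈ D_{T̃}} |f(t)| ≤ M, and such that for every t ∈ D_{T̃}, Re t = 0 implies Re f(t) = 0, one has: for every t ∈ D_T, Re t > 0 implies Re f(t) > 0. -/
open Set

/-- Lemma 3.6 of the paper: an analytic function with `f(0)=0`, `f'(0)=1`, bounded by `M`,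
whose real part vanishes on the imaginary axis, has positive real part on
`{Re t > 0}` near the origin, uniformly in `f`. -/
theorem statement9 (Ttil M : ℝ) (hT : 0 < Ttil) (hM : 0 < M) :
    ∃ T > (0 : ℝ), ∀ f : ℂ → ℂ,
      AnalyticOnNhd ℂ f (Metric.ball (0 : ℂ) Ttil) →
      f 0 = 0 → deriv f 0 = 1 →
      (∀ t ∈ Metric.ball (0 : ℂ) Ttil, ‖f t‖ ≤ M) →
      (∀ t ∈ Metric.ball (0 : ℂ) Ttil, t.re = 0 → (f t).re = 0) →
      ∀ t ∈ Metric.ball (0 : ℂ) T, 0 < t.re → 0 < (f t).re := by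
  set r : ℝ := Ttil / 2 with hr
  have hr0 : 0 < r := by positivity
  set R2 : ℝ := (2 * M + 1) / r + 2 with hR2
  have hR20 : 0 < R2 := by positivity
  refine ⟨min r (r / (2 * R2)), lt_min hr0 (by positivity), ?_⟩
  intro f hf hf0 hf'0 hbd him
  -- first: the derivative bound
  have hball : Metric.ball (0 : ℂ) r ⊆ Metric.ball (0 : ℂ) Ttil :=
    Metric.ball_subset_ball (by linarith)
  have hdf : AnalyticOnNhd ℂ (deriv f) (Metric.ball (0 : ℂ) Ttil) := hf.deriv
  -- bound |deriv f t| ≤ (2M+1)/r on ball 0 r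
  have hderiv_bd : ∀ t ∈ Metric.ball (0 : ℂ) r, ‖deriv f t‖ ≤ (2 * M + 1) / r := by
    intro t ht
    have hsub : Metric.ball t r ⊆ Metric.ball (0 : ℂ) Ttil := by
      intro z hz
      rw [Metric.mem_ball] at *
      calc dist z 0 ≤ dist z t + dist t 0 := dist_triangle _ _ _
        _ < r + r := add_lt_add hz ht
        _ = Ttil := by rw [hr]; ring
    have hd : DifferentiableOn ℂ f (Metric.ball t r) := fun z hz =>
      ((hf z (hsub hz)).differentiableAt).differentiableWithinAt
    have hmaps : Set.MapsTo f (Metric.ball t r) (Metric.ball (f t) (2 * M + 1)) := by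
      intro z hz
      rw [Metric.mem_ball, dist_eq_norm]
      calc ‖f z - f t‖ ≤ ‖f z‖ + ‖f t‖ := norm_sub_le _ _
        _ ≤ M + M := add_le_add (hbd z (hsub hz)) (hbd t (hsub (Metric.mem_ball_self hr0)))
        _ < 2 * M + 1 := by linarith
    exact (Complex.norm_deriv_le_div_of_mapsTo_ball hd (hmaps.mono_right Metric.ball_subset_closedBall) hr0).trans (le_refl _)
  -- Schwarz lemma for deriv f on ball 0 r
  have hdfd : DifferentiableOn ℂ (deriv f) (Metric.ball (0 : ℂ) r) := fun z hz =>
    ((hdf z (hball hz)).differentiableAt).differentiableWithinAt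
  have hmaps2 : Set.MapsTo (deriv f) (Metric.ball (0 : ℂ) r)
      (Metric.ball (deriv f 0) R2) := by
    intro z hz
    rw [Metric.mem_ball, dist_eq_norm, hf'0]
    calc ‖deriv f z - 1‖ ≤ ‖deriv f z‖ + ‖(1 : ℂ)‖ := norm_sub_le _ _
      _ ≤ (2 * M + 1) / r + 1 := by
          simpa using add_le_add (hderiv_bd z hz) (le_refl (1:ℝ))
      _ < R2 := by rw [hR2]; linarith
  have hschwarz : ∀ z ∈ Metric.ball (0 : ℂ) r,
      ‖deriv f z - 1‖ ≤ R2 / r * ‖z‖ := by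
    intro z hz
    have := Complex.dist_le_div_mul_dist_of_mapsTo_ball hdfd (hmaps2.mono_right Metric.ball_subset_closedBall) hz
    simpa [dist_eq_norm, hf'0, Complex.dist_eq] using this
  -- Re (deriv f z) > 1/2 for |z| < min r (r/(2 R2))
  have hre_deriv : ∀ z : ℂ, ‖z‖ < min r (r / (2 * R2)) →
      (1 : ℝ) / 2 < (deriv f z).re := by
    intro z hz
    have hz1 : ‖z‖ < r := lt_of_lt_of_le hz (min_le_left _ _)
    have hz2 : ‖z‖ < r / (2 * R2) := lt_of_lt_of_le hz (min_le_right _ _)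
    have h1 : ‖deriv f z - 1‖ ≤ R2 / r * ‖z‖ :=
      hschwarz z (by simpa [Metric.mem_ball, Complex.dist_eq] using hz1)
    have h2 : R2 / r * ‖z‖ < R2 / r * (r / (2 * R2)) := by
      apply mul_lt_mul_of_pos_left hz2 (by positivity)
    have h3 : R2 / r * (r / (2 * R2)) = 1 / 2 := by
      field_simp
    have h4 : ‖deriv f z - 1‖ < 1 / 2 := by
      calc ‖deriv f z - 1‖ ≤ R2 / r * ‖z‖ := h1
        _ < 1 / 2 := by rw [← h3]; exact h2
    have h5 : |(deriv f z - 1).re| ≤ ‖deriv f z - 1‖ :=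
      Complex.abs_re_le_norm _
    have : |(deriv f z).re - 1| < 1 / 2 := by
      simpa using lt_of_le_of_lt h5 h4
    have := abs_lt.mp this
    linarith [this.1]
  -- now the mean value argument
  intro t ht htre
  rw [Metric.mem_ball, Complex.dist_eq, sub_zero] at ht
  set x : ℝ := t.re with hx
  set y : ℝ := t.im with hy
  have habs : ∀ s : ℝ, |s| ≤ |x| → ‖(s : ℂ) + y * Complex.I‖ ≤ ‖t‖ := by
    intro s hs
    rw [Complex.norm_def, Complex.norm_def]
    apply Real.sqrt_le_sqrt
    have h1 : Complex.normSq ((s : ℂ) + y * Complex.I) = s ^ 2 + y ^ 2 := by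
      simp [Complex.normSq_apply]; ring
    have h2 : Complex.normSq t = x ^ 2 + y ^ 2 := by
      simp [Complex.normSq_apply, hx, hy]; ring
    rw [h1, h2]
    nlinarith [sq_abs s, sq_abs x, abs_nonneg s, abs_nonneg x, mul_self_le_mul_self (abs_nonneg s) hs]
  have hmem : ∀ s : ℝ, |s| ≤ |x| → ((s : ℂ) + y * Complex.I) ∈ Metric.ball (0 : ℂ) Ttil := by
    intro s hs
    rw [Metric.mem_ball, Complex.dist_eq, sub_zero]
    calc ‖(s : ℂ) + y * Complex.I‖ ≤ ‖t‖ := habs s hs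
      _ < min r (r / (2 * R2)) := ht
      _ ≤ r := min_le_left _ _
      _ < Ttil := by rw [hr]; linarith
  -- the function s ↦ Re f(s + y i) has derivative Re (deriv f (s + yi))
  have hDeriv : ∀ s : ℝ, |s| ≤ |x| →
      HasDerivAt (fun u : ℝ => (f ((u : ℂ) + y * Complex.I)).re)
        ((deriv f ((s : ℂ) + y * Complex.I)).re) s := by
    intro s hs
    have hdz : HasDerivAt f (deriv f ((s : ℂ) + y * Complex.I)) ((s : ℂ) + y * Complex.I) :=
      (hf _ (hmem s hs)).differentiableAt.hasDerivAt
    have h1 : HasDerivAt (fun w : ℂ => f (w + y * Complex.I))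
        (deriv f ((s : ℂ) + y * Complex.I)) (s : ℂ) := by
      have hinner : HasDerivAt (fun w : ℂ => w + y * Complex.I) 1 (s : ℂ) :=
        (hasDerivAt_id _).add_const _
      have h := HasDerivAt.comp (s : ℂ) hdz hinner
      rw [mul_one] at h
      exact h
    exact h1.real_of_complex
  have hx0 : 0 < x := htre
  obtain ⟨c, hc, hceq⟩ := exists_hasDerivAt_eq_slope
    (fun u : ℝ => (f ((u : ℂ) + y * Complex.I)).re)
    (fun u : ℝ => (deriv f ((u : ℂ) + y * Complex.I)).re) hx0
    (fun s hs => by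
      have hs' : |s| ≤ |x| := by
        rw [abs_of_nonneg hs.1, abs_of_pos hx0]; exact hs.2
      exact (hDeriv s hs').continuousAt.continuousWithinAt)
    (fun s hs => hDeriv s (by
      rw [abs_of_pos hs.1, abs_of_pos hx0]; exact le_of_lt hs.2))
  -- f(0 + yi).re = 0
  have him0 : (f ((0 : ℝ) + y * Complex.I)).re = 0 := by
    apply him _ (hmem 0 (by simp [abs_nonneg]))
    simp
  have htval : ((x : ℂ) + y * Complex.I) = t := by
    simp [hx, hy, Complex.ext_iff]
  have hcre : (1 : ℝ) / 2 < (deriv f ((c : ℂ) + y * Complex.I)).re := by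
    apply hre_deriv
    calc ‖(c : ℂ) + y * Complex.I‖ ≤ ‖t‖ := by
          apply habs
          rw [abs_of_pos hc.1, abs_of_pos hx0]; exact le_of_lt hc.2
      _ < min r (r / (2 * R2)) := ht
  rw [hceq] at hcre
  rw [him0, htval, sub_zero, sub_zero] at hcre
  have : (1:ℝ)/2 * x < (f t).re / x * x := by
    exact mul_lt_mul_of_pos_right hcre hx0
  rw [div_mul_cancel₀ _ (ne_of_gt hx0)] at this
  linarith
end

section
/- Let A₀ be a real symmetric positive definite ν×ν matrix, let n ≥ 1, let 0 < s₁ < s₂ < ⋯ < s_n < 1, and let ξ₁, …, ξ_n ∈ ℝ^ν be not all zero. Then Σ_{j,k=1}^{n} min(s_j, s_k)·(1 − max(s_j, s_k))·(ξ_j · A₀ ξ_k) > 0. In other words, the bilinear form (μ₁, μ₂)₀ := ∫₀¹∫₀¹ (s ∧ s')(1 − s ∨ s') A₀ · dμ₁(s) ⊗ dμ₂(s') is positive definite on the space of measures μ = Σ_{j=1}^n δ_{s_j} ξ_j with s_j ∈ (0,1) and ξ_j ∈ ℝ^ν. -/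
open Matrix Set

private lemma bilin_sum_sum {ν n : ℕ} (A₀ : Matrix (Fin ν) (Fin ν) ℝ)
    (c : Fin n → ℝ) (ξ : Fin n → Fin ν → ℝ) :
    (∑ j, c j • ξ j) ⬝ᵥ A₀ *ᵥ (∑ k, c k • ξ k)
      = ∑ j, ∑ k, (c j * c k) * (ξ j ⬝ᵥ A₀ *ᵥ ξ k) := by
  rw [← Matrix.toLinearMap₂'_apply' (T := ℝ)]
  simp only [map_sum, LinearMap.sum_apply, Matrix.toLinearMap₂'_apply' (T := ℝ)]
  rw [Finset.sum_comm]
  refine Finset.sum_congr rfl fun j _ => Finset.sum_congr rfl fun k _ => ?_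
  rw [Matrix.mulVec_smul, smul_dotProduct, dotProduct_smul, smul_eq_mul,
    smul_eq_mul]
  ring

/-- The bilinear form `(μ,μ)₀` built from the kernel `(s ∧ s')(1 − s ∨ s') A₀` is positive
definite on finitely supported vector-valued measures on `(0,1)`. -/
theorem statement11 (ν n : ℕ) (hν : 1 ≤ ν) (hn : 1 ≤ n)
    (A₀ : Matrix (Fin ν) (Fin ν) ℝ) (hA₀ : A₀.PosDef)
    (s : Fin n → ℝ) (hmono : StrictMono s)
    (hs : ∀ j, s j ∈ Ioo (0 : ℝ) 1)
    (ξ : Fin n → Fin ν → ℝ) (hξ : ξ ≠ 0) :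
    0 < ∑ j, ∑ k,
        min (s j) (s k) * (1 - max (s j) (s k)) * (ξ j ⬝ᵥ A₀.mulVec (ξ k)) := by
  classical
  -- grid points 0 = t 0 < s 0 = t 1 < ⋯ < s (n-1) = t n < 1 = t (n+1)
  set t : ℕ → ℝ := fun i =>
    if h : i = 0 then 0 else if h2 : i ≤ n then s ⟨i - 1, by omega⟩ else 1 with ht
  have ht0 : t 0 = 0 := by simp [ht]
  have hts : ∀ (i : ℕ) (h : i < n), t (i + 1) = s ⟨i, h⟩ := by
    intro i h
    simp only [ht, Nat.succ_ne_zero, dite_false, Nat.add_sub_cancel]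
    rw [dif_pos (by omega)]
  have htn : t (n + 1) = 1 := by
    simp only [ht, Nat.succ_ne_zero, dite_false]
    rw [dif_neg (by omega)]
  -- coefficients of the step functions
  set a : ℕ → Fin n → ℝ := fun i j => (if i ≤ (j : ℕ) then (1 : ℝ) else 0) - s j with ha
  -- telescoping sums
  have tel : ∀ m : ℕ, m ≤ n + 1 →
      ∑ i ∈ Finset.range (n + 1), (if i < m then t (i + 1) - t i else 0) = t m := by
    intro m hm
    rw [← Finset.sum_filter]
    have hfil : (Finset.range (n + 1)).filter (fun i => i < m) = Finset.range m := by
      ext x; simp only [Finset.mem_filter, Finset.mem_range]; omega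
    rw [hfil, Finset.sum_range_sub, ht0, sub_zero]
  -- the kernel decomposition
  have key : ∀ j k : Fin n, min (s j) (s k) * (1 - max (s j) (s k)) =
      ∑ i ∈ Finset.range (n + 1), (t (i + 1) - t i) * (a i j * a i k) := by
    intro j k
    have expand : ∀ i ∈ Finset.range (n + 1),
        (t (i + 1) - t i) * (a i j * a i k)
          = (if i < min (j : ℕ) (k : ℕ) + 1 then t (i + 1) - t i else 0)
            - s k * (if i < (j : ℕ) + 1 then t (i + 1) - t i else 0)
            - s j * (if i < (k : ℕ) + 1 then t (i + 1) - t i else 0)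
            + (s j * s k) * (if i < n + 1 then t (i + 1) - t i else 0) := by
      intro i hi
      simp only [Finset.mem_range] at hi
      simp only [ha]
      rcases le_or_gt i (j : ℕ) with hij | hij <;> rcases le_or_gt i (k : ℕ) with hik | hik
      · rw [if_pos hij, if_pos hik, if_pos (by omega), if_pos (by omega), if_pos (by omega),
          if_pos (by omega)]; ring
      · rw [if_pos hij, if_neg (by omega), if_neg (by omega), if_pos (by omega),
          if_neg (by omega), if_pos (by omega)]; ring
      · rw [if_neg (by omega), if_pos hik, if_neg (by omega), if_neg (by omega),
          if_pos (by omega), if_pos (by omega)]; ring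
      · rw [if_neg (by omega), if_neg (by omega), if_neg (by omega), if_neg (by omega),
          if_neg (by omega), if_pos (by omega)]; ring
    rw [Finset.sum_congr rfl expand]
    simp only [Finset.sum_add_distrib, Finset.sum_sub_distrib, ← Finset.mul_sum]
    rw [tel _ (by omega), tel _ (by omega), tel _ (by omega), tel _ (by omega)]
    rw [hts _ j.isLt, hts _ k.isLt, htn]
    have hmin : t (min (j : ℕ) (k : ℕ) + 1) = min (s j) (s k) := by
      rcases le_total (j : ℕ) (k : ℕ) with h | h
      · rw [min_eq_left h, hts _ j.isLt]
        have : s j ≤ s k := hmono.monotone (by exact_mod_cast h)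
        simp [min_eq_left this]
      · rw [min_eq_right h, hts _ k.isLt]
        have : s k ≤ s j := hmono.monotone (by exact_mod_cast h)
        simp [min_eq_right this]
    rw [hmin]
    have hprod : min (s j) (s k) * max (s j) (s k) = s j * s k := by
      rcases le_total (s j) (s k) with h | h
      · rw [min_eq_left h, max_eq_right h]
      · rw [min_eq_right h, max_eq_left h]; ring
    nlinarith [hprod]
  -- rewrite the quadratic form
  set v : ℕ → Fin ν → ℝ := fun i => ∑ j, a i j • ξ j with hv
  have main : ∑ j, ∑ k, min (s j) (s k) * (1 - max (s j) (s k)) * (ξ j ⬝ᵥ A₀ *ᵥ ξ k)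
      = ∑ i ∈ Finset.range (n + 1), (t (i + 1) - t i) * (v i ⬝ᵥ A₀ *ᵥ v i) := by
    have step1 : ∀ j k : Fin n,
        min (s j) (s k) * (1 - max (s j) (s k)) * (ξ j ⬝ᵥ A₀ *ᵥ ξ k)
          = ∑ i ∈ Finset.range (n + 1),
              (t (i + 1) - t i) * ((a i j * a i k) * (ξ j ⬝ᵥ A₀ *ᵥ ξ k)) := by
      intro j k
      rw [key j k, Finset.sum_mul]
      exact Finset.sum_congr rfl fun i _ => by ring
    calc ∑ j, ∑ k, min (s j) (s k) * (1 - max (s j) (s k)) * (ξ j ⬝ᵥ A₀ *ᵥ ξ k)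
        = ∑ j, ∑ k, ∑ i ∈ Finset.range (n + 1),
            (t (i + 1) - t i) * ((a i j * a i k) * (ξ j ⬝ᵥ A₀ *ᵥ ξ k)) := by
          exact Finset.sum_congr rfl fun j _ => Finset.sum_congr rfl fun k _ => step1 j k
      _ = ∑ i ∈ Finset.range (n + 1), ∑ j, ∑ k,
            (t (i + 1) - t i) * ((a i j * a i k) * (ξ j ⬝ᵥ A₀ *ᵥ ξ k)) := by
          exact (Finset.sum_congr rfl fun j _ => Finset.sum_comm).trans Finset.sum_comm
      _ = ∑ i ∈ Finset.range (n + 1), (t (i + 1) - t i) * (v i ⬝ᵥ A₀ *ᵥ v i) := by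
          refine Finset.sum_congr rfl fun i _ => ?_
          have hvdef : v i = ∑ j, a i j • ξ j := rfl
          rw [hvdef, bilin_sum_sum A₀ (a i) ξ, Finset.mul_sum]
          refine Finset.sum_congr rfl fun j _ => ?_
          rw [Finset.mul_sum]
  -- positivity
  rw [main]
  -- lengths are positive
  have hlen : ∀ i < n + 1, 0 < t (i + 1) - t i := by
    intro i hi
    rcases Nat.eq_zero_or_pos i with rfl | hip
    · rw [ht0, hts 0 (by omega), sub_zero]
      exact (hs _).1
    · rcases eq_or_lt_of_le (by omega : i ≤ n) with rfl | hlt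
      · rw [htn]
        have : t i = s ⟨i - 1, by omega⟩ := by
          simp only [ht]; rw [dif_neg (by omega), dif_pos (le_refl _)]
        rw [this]
        have := (hs ⟨i - 1, by omega⟩).2
        linarith
      · rw [hts i hlt]
        have : t i = s ⟨i - 1, by omega⟩ := by
          simp only [ht]; rw [dif_neg (by omega), dif_pos (by omega)]
        rw [this]
        have : (⟨i - 1, by omega⟩ : Fin n) < ⟨i, hlt⟩ := by
          simp [Fin.lt_def]; omega
        linarith [hmono this]
  -- some v i is nonzero
  have hdiff : ∀ j : Fin n, v (j : ℕ) - v ((j : ℕ) + 1) = ξ j := by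
    intro j
    rw [hv]
    simp only
    rw [← Finset.sum_sub_distrib]
    have : ∀ j' : Fin n, a (j : ℕ) j' • ξ j' - a ((j : ℕ) + 1) j' • ξ j'
        = (if j' = j then (1 : ℝ) else 0) • ξ j' := by
      intro j'
      rw [← sub_smul]
      congr 1
      simp only [ha]
      rcases eq_or_ne j' j with rfl | hne
      · rw [if_pos (le_refl _), if_neg (by omega), if_pos rfl]; ring
      · have hne' : (j' : ℕ) ≠ (j : ℕ) := fun h => hne (Fin.ext h)
        rw [if_neg hne]
        rcases lt_or_gt_of_ne hne' with h | h
        · rw [if_neg (by omega), if_neg (by omega)]; ring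
        · rw [if_pos (by omega), if_pos (by omega)]; ring
    rw [Finset.sum_congr rfl fun j' _ => this j']
    simp
  obtain ⟨j, hj⟩ : ∃ j, ξ j ≠ 0 := by
    by_contra h
    push_neg at h
    exact hξ (funext h)
  have hex : ∃ i ∈ Finset.range (n + 1), v i ≠ 0 := by
    by_contra h
    push_neg at h
    have h1 : v (j : ℕ) = 0 := h _ (Finset.mem_range.mpr (by omega))
    have h2 : v ((j : ℕ) + 1) = 0 := h _ (Finset.mem_range.mpr (by omega))
    apply hj
    rw [← hdiff j, h1, h2, sub_zero]
  obtain ⟨i₀, hi₀, hvi₀⟩ := hex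
  have posdef : ∀ x : Fin ν → ℝ, x ≠ 0 → 0 < x ⬝ᵥ A₀ *ᵥ x := by
    intro x hx
    have := hA₀.dotProduct_mulVec_pos hx
    simpa using this
  have possemi : ∀ x : Fin ν → ℝ, 0 ≤ x ⬝ᵥ A₀ *ᵥ x := by
    intro x
    have := hA₀.posSemidef.dotProduct_mulVec_nonneg x
    simpa using this
  apply Finset.sum_pos'
  · intro i hi
    exact mul_nonneg (le_of_lt (hlen i (Finset.mem_range.mp hi))) (possemi (v i))
  · exact ⟨i₀, hi₀, mul_pos (hlen i₀ (Finset.mem_range.mp hi₀)) (posdef _ hvi₀)⟩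
end

section
/- Assume the reality condition (R). Then there exists T_e ∈ (0, T̄) such that for every real τ with |τ| < T_e and every s ∈ [0,1], the matrices q̃♭_{iτ}(s) and q̃♯_{iτ}(s) have real entries. -/
open Matrix Set MeasureTheory Filter

attribute [local instance] Matrix.linftyOpNormedAddCommGroup Matrix.linftyOpNormedRing
  Matrix.linftyOpNormedAlgebra

noncomputable section

/-- The reality assumption: each of A, iB, C restricted to the imaginary axis is
real-matrix-valued near 0. -/
def RealityCond {ν : ℕ} (A B C : ℂ → Mat ν) : Prop :=
  ∃ ε > (0 : ℝ), ∀ τ : ℝ, |τ| < ε → ∀ i j : Fin ν,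
    (A (Complex.I * τ) i j).im = 0 ∧
    (Complex.I * B (Complex.I * τ) i j).im = 0 ∧
    (C (Complex.I * τ) i j).im = 0

/-! ### Auxiliary material: entrywise complex conjugation of matrices -/

/-- Entrywise complex conjugation of a complex matrix, as an `ℝ`-linear map. -/
def cmatL (ν : ℕ) : Mat ν →ₗ[ℝ] Mat ν where
  toFun M := M.map (starRingEnd ℂ)
  map_add' M N := by ext i j; simp [Matrix.map_apply]
  map_smul' r M := by ext i j; simp [Matrix.map_apply, Complex.real_smul]

/-- Entrywise complex conjugation of a complex matrix, as a continuous `ℝ`-linear map. -/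
def cmatCLM (ν : ℕ) : Mat ν →L[ℝ] Mat ν := LinearMap.toContinuousLinearMap (cmatL ν)

@[simp] lemma cmatCLM_apply {ν : ℕ} (M : Mat ν) (i j : Fin ν) :
    cmatCLM ν M i j = (starRingEnd ℂ) (M i j) := rfl

lemma cmat_mul {ν : ℕ} (M N : Mat ν) : cmatCLM ν (M * N) = cmatCLM ν M * cmatCLM ν N := by
  ext i j; simp [Matrix.mul_apply, map_sum]

lemma cmat_smul {ν : ℕ} (z : ℂ) (M : Mat ν) :
    cmatCLM ν (z • M) = (starRingEnd ℂ) z • cmatCLM ν M := by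
  ext i j; simp

lemma cmat_one {ν : ℕ} : cmatCLM ν 1 = 1 := by
  ext i j; simp [Matrix.one_apply, apply_ite (starRingEnd ℂ)]

lemma cmat_transpose {ν : ℕ} (M : Mat ν) : cmatCLM ν Mᵀ = (cmatCLM ν M)ᵀ := by
  ext i j; simp

lemma cmat_inv {ν : ℕ} (M : Mat ν) : cmatCLM ν M⁻¹ = (cmatCLM ν M)⁻¹ := by
  have h : ∀ N : Mat ν, cmatCLM ν N = (Nᴴ)ᵀ := by
    intro N; ext i j; simp [Matrix.conjTranspose_apply]
  rw [h, h, Matrix.conjTranspose_nonsing_inv, Matrix.transpose_nonsing_inv]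

lemma conj_two : (starRingEnd ℂ) 2 = 2 := by
  rw [show (2:ℂ) = ((2:ℝ):ℂ) by norm_num, Complex.conj_ofReal]

lemma conj_four : (starRingEnd ℂ) 4 = 4 := by
  rw [show (4:ℂ) = ((4:ℝ):ℂ) by norm_num, Complex.conj_ofReal]

/-- If a matrix-valued analytic function is, on the imaginary axis, a fixed real multiple `c`
of its entrywise conjugate, then its derivative there is the `(-c)`-multiple of its
entrywise conjugate. -/
lemma conj_deriv {ν : ℕ} {G : ℂ → Mat ν} {σ r : ℝ} (hσ : |σ| < r)
    (hG : ∀ x : ℝ, |x| < r → DifferentiableAt ℂ G (Complex.I * x))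
    (c : ℝ)
    (hval : ∀ x : ℝ, |x| < r → cmatCLM ν (G (Complex.I * x)) = c • G (Complex.I * x)) :
    cmatCLM ν (deriv G (Complex.I * σ)) = (-c) • deriv G (Complex.I * σ) := by
  set z : ℂ := Complex.I * σ with hz
  have hf : HasDerivAt (fun x : ℝ => Complex.I * (x : ℂ)) Complex.I σ := by
    simpa using (Complex.ofRealCLM.hasDerivAt (x := σ)).const_mul Complex.I
  have h1 : HasDerivAt (fun x : ℝ => G (Complex.I * x)) (Complex.I • deriv G z) σ := by
    exact
      HasDerivAt.scomp (g₁ := G) σ ((hG σ hσ).hasDerivAt) hf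
  have h2 : HasDerivAt (fun x : ℝ => cmatCLM ν (G (Complex.I * x)))
      (cmatCLM ν (Complex.I • deriv G z)) σ :=
    ((cmatCLM ν).hasFDerivAt).comp_hasDerivAt σ h1
  have h3 : (fun x : ℝ => c • G (Complex.I * x)) =ᶠ[nhds σ]
      (fun x : ℝ => cmatCLM ν (G (Complex.I * x))) := by
    have hop : ∀ᶠ x : ℝ in nhds σ, |x| < r :=
      (isOpen_lt continuous_abs continuous_const).eventually_mem hσ
    filter_upwards [hop] with x hx using (hval x hx).symm
  have h4 : HasDerivAt (fun x : ℝ => cmatCLM ν (G (Complex.I * x)))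
      (c • (Complex.I • deriv G z)) σ :=
    (h1.const_smul c).congr_of_eventuallyEq h3.symm
  have h5 : cmatCLM ν (Complex.I • deriv G z) = c • (Complex.I • deriv G z) :=
    h2.unique h4
  rw [cmat_smul] at h5
  have h6 : Complex.I • cmatCLM ν (deriv G z) = Complex.I • ((-c) • deriv G z) := by
    have hI : (starRingEnd ℂ) Complex.I = -Complex.I := Complex.conj_I
    rw [hI, neg_smul] at h5
    rw [smul_comm, neg_smul, ← h5, neg_neg]
  exact smul_right_injective _ Complex.I_ne_zero h6

/-- The entrywise conjugate of a solution of the BVP at a purely imaginary parameter is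
again a solution, provided the coefficients behave appropriately under conjugation and the
boundary data are fixed by conjugation. -/
lemma conj_sol {ν : ℕ} (A B C : ℂ → Mat ν) (τ : ℝ)
    (hE : ∀ s : ℝ, s ∈ Icc (0:ℝ) 1 →
      cmatCLM ν (Ecoef A B (Complex.I * τ * s)) = -(Ecoef A B (Complex.I * τ * s)))
    (hF : ∀ s : ℝ, s ∈ Icc (0:ℝ) 1 →
      cmatCLM ν (Fcoef A B C (Complex.I * τ * s)) = Fcoef A B C (Complex.I * τ * s))
    {a b : Mat ν} (ha : cmatCLM ν a = a) (hb : cmatCLM ν b = b) {q : ℝ → Mat ν}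
    (hq : SolBVP A B C (Complex.I * τ) a b q) :
    SolBVP A B C (Complex.I * τ) a b (fun s => cmatCLM ν (q s)) := by
  obtain ⟨hsm, hode, h0, h1⟩ := hq
  set t : ℂ := Complex.I * τ with ht
  set S : Set ℝ := Icc (0:ℝ) 1 with hS
  have hUD : UniqueDiffOn ℝ S := uniqueDiffOn_Icc zero_lt_one
  have hd1 : ∀ x ∈ S, derivWithin (fun s => cmatCLM ν (q s)) S x
      = cmatCLM ν (derivWithin q S x) := by
    intro x hx
    have hdq : HasDerivWithinAt q (derivWithin q S x) S x :=
      ((hsm.differentiableOn (by norm_num)) x hx).hasDerivWithinAt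
    exact (((cmatCLM ν).hasFDerivAt).comp_hasDerivWithinAt x hdq).derivWithin (hUD x hx)
  refine ⟨(cmatCLM ν).contDiff.comp_contDiffOn hsm, ?_,
    by simp only [h0, ha], by simp only [h1, hb]⟩
  intro s hs
  have hq' : ContDiffOn ℝ 1 (derivWithin q S) S := hsm.derivWithin hUD (by norm_num)
  have hstep : derivWithin (derivWithin (fun s => cmatCLM ν (q s)) S) S s
      = cmatCLM ν (derivWithin (derivWithin q S) S s) := by
    have e1 : derivWithin (derivWithin (fun s => cmatCLM ν (q s)) S) S s
        = derivWithin (fun x => cmatCLM ν (derivWithin q S x)) S s :=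
      derivWithin_congr hd1 (hd1 s hs)
    rw [e1]
    have hdq2 : HasDerivWithinAt (derivWithin q S) (derivWithin (derivWithin q S) S s) S s :=
      ((hq'.differentiableOn one_ne_zero) s hs).hasDerivWithinAt
    exact (((cmatCLM ν).hasFDerivAt).comp_hasDerivWithinAt s hdq2).derivWithin (hUD s hs)
  rw [hstep, hode s hs, map_add, cmat_smul, cmat_smul, cmat_mul, cmat_mul,
    hE s hs, hF s hs, hd1 s hs]
  have hconj_t : (starRingEnd ℂ) t = -t := by
    simp [ht, Complex.conj_ofReal]
  have hconj_t2 : (starRingEnd ℂ) (t ^ 2) = t ^ 2 := by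
    rw [map_pow, hconj_t]; ring
  rw [hconj_t, hconj_t2, neg_mul, smul_neg, neg_smul, neg_neg]

theorem statement14 (ν : ℕ) (hν : 1 ≤ ν) (A B C : ℂ → Mat ν)
    (U : Set ℂ) (hU : U ∈ nhds (0 : ℂ)) (hUopen : IsOpen U)
    (hA : AnalyticOnNhd ℂ A U) (hB : AnalyticOnNhd ℂ B U) (hC : AnalyticOnNhd ℂ C U)
    (hAsymm : ∀ t ∈ U, (A t).IsSymm) (hCsymm : ∀ t ∈ U, (C t).IsSymm)
    (A₀ : Matrix (Fin ν) (Fin ν) ℝ) (hA₀ : A₀.PosDef)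
    (hA0 : A 0 = A₀.map (Complex.ofReal : ℝ → ℂ))
    (hreal : RealityCond A B C)
    (Tbar : ℝ) (hTbar : 0 < Tbar) (qb qs : ℂ → ℝ → Mat ν)
    (hqb : ∀ t : ℂ, ‖t‖ < Tbar → SolBVP A B C t 0 1 (qb t))
    (hqbu : ∀ t : ℂ, ‖t‖ < Tbar →
      ∀ q' : ℝ → Mat ν, SolBVP A B C t 0 1 q' → EqOn q' (qb t) (Icc 0 1))
    (hqs : ∀ t : ℂ, ‖t‖ < Tbar → SolBVP A B C t 1 0 (qs t))
    (hqsu : ∀ t : ℂ, ‖t‖ < Tbar →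
      ∀ q' : ℝ → Mat ν, SolBVP A B C t 1 0 q' → EqOn q' (qs t) (Icc 0 1)) :
    ∃ Te : ℝ, 0 < Te ∧ Te < Tbar ∧ ∀ τ : ℝ, |τ| < Te → ∀ s ∈ Icc (0 : ℝ) 1,
      ∀ i j : Fin ν,
        (qb (Complex.I * τ) s i j).im = 0 ∧ (qs (Complex.I * τ) s i j).im = 0 := by
  obtain ⟨ε, hε, hR⟩ := hreal
  obtain ⟨δ, hδ, hball⟩ := Metric.mem_nhds_iff.mp hU
  set r : ℝ := min ε δ with hr
  have hrpos : 0 < r := lt_min hε hδ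
  have hmem : ∀ x : ℝ, |x| < r → (Complex.I * x) ∈ U := by
    intro x hx
    apply hball
    rw [Metric.mem_ball, dist_zero_right, norm_mul,
      Complex.norm_I, Complex.norm_real, Real.norm_eq_abs, one_mul]
    exact lt_of_lt_of_le hx (min_le_right _ _)
  have hAc : ∀ x : ℝ, |x| < r → cmatCLM ν (A (Complex.I * x)) = A (Complex.I * x) := by
    intro x hx
    ext i j
    simpa using Complex.conj_eq_iff_im.mpr
      ((hR x (lt_of_lt_of_le hx (min_le_left _ _)) i j).1)
  have hBc : ∀ x : ℝ, |x| < r → cmatCLM ν (B (Complex.I * x)) = -(B (Complex.I * x)) := by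
    intro x hx
    ext i j
    have hre : (B (Complex.I * x) i j).re = 0 := by
      simpa [Complex.mul_im] using (hR x (lt_of_lt_of_le hx (min_le_left _ _)) i j).2.1
    simp only [cmatCLM_apply, Matrix.neg_apply]
    apply Complex.ext <;> simp [hre]
  have hCc : ∀ x : ℝ, |x| < r → cmatCLM ν (C (Complex.I * x)) = C (Complex.I * x) := by
    intro x hx
    ext i j
    simpa using Complex.conj_eq_iff_im.mpr
      ((hR x (lt_of_lt_of_le hx (min_le_left _ _)) i j).2.2)
  have hAd : ∀ x : ℝ, |x| < r →
      cmatCLM ν (deriv A (Complex.I * x)) = -(deriv A (Complex.I * x)) := by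
    intro x hx
    have := conj_deriv hx (fun y hy => (hA _ (hmem y hy)).differentiableAt) 1
      (fun y hy => by rw [hAc y hy, one_smul])
    simpa using this
  have hBd : ∀ x : ℝ, |x| < r →
      cmatCLM ν (deriv B (Complex.I * x)) = deriv B (Complex.I * x) := by
    intro x hx
    have := conj_deriv hx (fun y hy => (hB _ (hmem y hy)).differentiableAt) (-1)
      (fun y hy => by rw [hBc y hy, neg_smul, one_smul])
    simpa using this
  have hEfact : ∀ x : ℝ, |x| < r →
      cmatCLM ν (Ecoef A B (Complex.I * x)) = -(Ecoef A B (Complex.I * x)) := by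
    intro x hx
    rw [Ecoef, map_add, cmat_mul, cmat_smul, cmat_mul, map_sub, cmat_transpose,
      hAd x hx, cmat_inv, hAc x hx, hBc x hx, conj_two]
    rw [Matrix.transpose_neg, sub_neg_eq_add, neg_mul]
    rw [show -(B (Complex.I * x))ᵀ + B (Complex.I * x)
        = -((B (Complex.I * x))ᵀ - B (Complex.I * x)) by abel]
    rw [mul_neg, smul_neg, neg_add]
  have hFfact : ∀ x : ℝ, |x| < r →
      cmatCLM ν (Fcoef A B C (Complex.I * x)) = Fcoef A B C (Complex.I * x) := by
    intro x hx
    rw [Fcoef, map_sub, cmat_smul, cmat_smul, cmat_mul, cmat_mul,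
      hAc x hx, hBd x hx, hCc x hx, conj_two, conj_four]
  refine ⟨min Tbar r / 2, by positivity, ?_, ?_⟩
  · calc min Tbar r / 2 ≤ Tbar / 2 := by gcongr; exact min_le_left _ _
      _ < Tbar := by linarith
  intro τ hτ
  have hτr : |τ| < r := by
    calc |τ| < min Tbar r / 2 := hτ
      _ ≤ r / 2 := by gcongr; exact min_le_right _ _
      _ ≤ r := by linarith
  have habs : ‖Complex.I * τ‖ < Tbar := by
    rw [norm_mul, Complex.norm_I, Complex.norm_real, Real.norm_eq_abs, one_mul]
    calc |τ| < min Tbar r / 2 := hτ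
      _ ≤ Tbar / 2 := by gcongr; exact min_le_left _ _
      _ ≤ Tbar := by linarith
  have hscale : ∀ s ∈ Icc (0:ℝ) 1, |τ * s| < r := by
    intro s hs
    rw [abs_mul]
    calc |τ| * |s| ≤ |τ| * 1 := by
          gcongr
          exact abs_le.mpr ⟨by linarith [hs.1], hs.2⟩
      _ = |τ| := mul_one _
      _ < r := hτr
  have hcast : ∀ s : ℝ, Complex.I * (τ : ℂ) * (s : ℂ) = Complex.I * ((τ * s : ℝ) : ℂ) := by
    intro s; push_cast; ring
  have hE' : ∀ s : ℝ, s ∈ Icc (0:ℝ) 1 →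
      cmatCLM ν (Ecoef A B (Complex.I * τ * s)) = -(Ecoef A B (Complex.I * τ * s)) := by
    intro s hs; rw [hcast s]; exact hEfact _ (hscale s hs)
  have hF' : ∀ s : ℝ, s ∈ Icc (0:ℝ) 1 →
      cmatCLM ν (Fcoef A B C (Complex.I * τ * s)) = Fcoef A B C (Complex.I * τ * s) := by
    intro s hs; rw [hcast s]; exact hFfact _ (hscale s hs)
  have hqb' := conj_sol A B C τ hE' hF' (map_zero _) cmat_one (hqb _ habs)
  have heqb := hqbu _ habs _ hqb'
  have hqs' := conj_sol A B C τ hE' hF' cmat_one (map_zero _) (hqs _ habs)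
  have heqs := hqsu _ habs _ hqs'
  intro s hs i j
  constructor
  · have h := congrFun (congrFun (heqb hs) i) j
    exact Complex.conj_eq_iff_im.mp (by simpa using h)
  · have h := congrFun (congrFun (heqs hs) i) j
    exact Complex.conj_eq_iff_im.mp (by simpa using h)
end
end

section
/- Assume the reality condition (R). Then there exists T_e ∈ (0, T̄) such that for every real τ with |τ| < T_e and every s, s' ∈ [0,1], the matrix K̃_{iτ}(s,s') has real entries. -/
open Matrix Set MeasureTheory Filter

attribute [local instance] Matrix.linftyOpNormedAddCommGroup Matrix.linftyOpNormedRing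
  Matrix.linftyOpNormedAlgebra

noncomputable section

/-- The deformation matrix
`K̃_t(s,s') := ∫_{s∨s'}^{1} q̃♭_{tτ}(s/τ) A(tτ) ᵗq̃♭_{tτ}(s'/τ) dτ`. -/
def Ktil {ν : ℕ} (A : ℂ → Mat ν) (qb : ℂ → ℝ → Mat ν) (t : ℂ) (s s' : ℝ) : Mat ν :=
  ∫ τ in (max s s')..1,
    qb (t * (τ : ℂ)) (s / τ) * A (t * (τ : ℂ)) * (qb (t * (τ : ℂ)) (s' / τ))ᵀ

namespace St15

variable {ν : ℕ}

def Cm (M : Mat ν) : Mat ν := (starRingEnd ℂ).mapMatrix M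

lemma Cm_apply (M : Mat ν) (i j : Fin ν) : Cm M i j = (starRingEnd ℂ) (M i j) := rfl

lemma Cm_add (M N : Mat ν) : Cm (M + N) = Cm M + Cm N := map_add _ _ _
lemma Cm_mul (M N : Mat ν) : Cm (M * N) = Cm M * Cm N := map_mul _ _ _
lemma Cm_one : Cm (1 : Mat ν) = 1 := map_one _
lemma Cm_zero : Cm (0 : Mat ν) = 0 := map_zero _
lemma Cm_neg (M : Mat ν) : Cm (-M) = -Cm M := map_neg _ _
lemma Cm_sub (M N : Mat ν) : Cm (M - N) = Cm M - Cm N := map_sub _ _ _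

lemma Cm_smul (c : ℂ) (M : Mat ν) : Cm (c • M) = (starRingEnd ℂ) c • Cm M := by
  ext i j
  simp [Cm_apply, Matrix.smul_apply]

lemma Cm_transpose (M : Mat ν) : Cm (Mᵀ) = (Cm M)ᵀ := by
  ext i j; rfl

lemma Cm_eq_self_iff (M : Mat ν) : Cm M = M ↔ ∀ i j, (M i j).im = 0 := by
  constructor
  · intro h i j
    have := congrFun (congrFun h i) j
    rw [Cm_apply] at this
    exact Complex.conj_eq_iff_im.mp this
  · intro h
    ext i j
    rw [Cm_apply]
    exact Complex.conj_eq_iff_im.mpr (h i j)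

lemma Cm_eq_neg_iff (M : Mat ν) : Cm M = -M ↔ ∀ i j, (M i j).re = 0 := by
  constructor
  · intro h i j
    have := congrFun (congrFun h i) j
    rw [Cm_apply] at this
    have h2 := congrArg Complex.re this
    simp at h2
    linarith
  · intro h
    ext i j
    rw [Cm_apply]
    apply Complex.ext <;> simp [h i j]

lemma conj_eq_neg_of (w : ℂ) (h : (Complex.I * w).im = 0) : (starRingEnd ℂ) w = -w := by
  have hre : w.re = 0 := by simpa [Complex.mul_im] using h
  apply Complex.ext <;> simp [hre]

def CmL : Mat ν →L[ℝ] Mat ν :=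
  LinearMap.toContinuousLinearMap
    { toFun := Cm
      map_add' := Cm_add
      map_smul' := by
        intro r M
        ext i j
        simp [Cm_apply, Matrix.smul_apply, Complex.real_smul] }

lemma CmL_apply (M : Mat ν) : CmL M = Cm M := rfl

def entL (i j : Fin ν) : Mat ν →L[ℝ] ℂ :=
  LinearMap.toContinuousLinearMap
    { toFun := fun M => M i j
      map_add' := fun _ _ => rfl
      map_smul' := fun _ _ => rfl }

lemma entL_apply (i j : Fin ν) (M : Mat ν) : entL i j M = M i j := rfl

lemma im_deriv_zero {f : ℝ → ℂ} {f' : ℂ} {σ : ℝ} (hf : HasDerivAt f f' σ)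
    (h : ∀ᶠ x in nhds σ, (f x).im = 0) : f'.im = 0 := by
  have h1 : HasDerivAt (fun x => (f x).im) (Complex.imCLM f') σ :=
    Complex.imCLM.hasFDerivAt.comp_hasDerivAt σ hf
  have h2 : HasDerivAt (fun x => (f x).im) 0 σ := by
    refine (hasDerivAt_const σ (0:ℝ)).congr_of_eventuallyEq ?_
    filter_upwards [h] with x hx using by simp [hx]
  simpa using h1.unique h2

lemma hasDerivAt_line {G : ℂ → Mat ν} {σ : ℝ}
    (hG : DifferentiableAt ℂ G (Complex.I * σ)) :
    HasDerivAt (fun x : ℝ => G (Complex.I * x)) (Complex.I • deriv G (Complex.I * σ)) σ := by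
  have hline : HasDerivAt (fun x : ℝ => (Complex.I * x : ℂ)) Complex.I σ := by
    have h0 : HasDerivAt (fun x : ℝ => (x : ℂ)) 1 σ := by
      simpa using (hasDerivAt_id σ).ofReal_comp
    simpa using h0.const_mul Complex.I
  have := (hG.hasDerivAt).scomp_of_eq σ hline rfl
  exact this

end St15

open St15

theorem statement15 (ν : ℕ) (hν : 1 ≤ ν) (A B C : ℂ → Mat ν)
    (U : Set ℂ) (hU : U ∈ nhds (0 : ℂ)) (hUopen : IsOpen U)
    (hA : AnalyticOnNhd ℂ A U) (hB : AnalyticOnNhd ℂ B U) (hC : AnalyticOnNhd ℂ C U)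
    (hAsymm : ∀ t ∈ U, (A t).IsSymm) (hCsymm : ∀ t ∈ U, (C t).IsSymm)
    (A₀ : Matrix (Fin ν) (Fin ν) ℝ) (hA₀ : A₀.PosDef)
    (hA0 : A 0 = A₀.map (Complex.ofReal : ℝ → ℂ))
    (hreal : RealityCond A B C)
    (Tbar : ℝ) (hTbar : 0 < Tbar) (qb : ℂ → ℝ → Mat ν)
    (hqb : ∀ t : ℂ, ‖t‖ < Tbar → SolBVP A B C t 0 1 (qb t))
    (hqbu : ∀ t : ℂ, ‖t‖ < Tbar →
      ∀ q' : ℝ → Mat ν, SolBVP A B C t 0 1 q' → EqOn q' (qb t) (Icc 0 1)) :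
    ∃ Te : ℝ, 0 < Te ∧ Te < Tbar ∧ ∀ τ : ℝ, |τ| < Te →
      ∀ s ∈ Icc (0 : ℝ) 1, ∀ s' ∈ Icc (0 : ℝ) 1, ∀ i j : Fin ν,
        (Ktil A qb (Complex.I * τ) s s' i j).im = 0 := by
  classical
  obtain ⟨ε, hε, hR⟩ := hreal
  obtain ⟨r, hr, hrU⟩ := Metric.mem_nhds_iff.mp hU
  -- determinant nonvanishing near 0 on the imaginary axis
  have hdet0 : (A (Complex.I * ((0:ℝ):ℂ))).det ≠ 0 := by
    have h0 : (Complex.I * ((0:ℝ):ℂ)) = 0 := by simp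
    rw [h0, hA0]
    have hmap : (A₀.map (Complex.ofReal : ℝ → ℂ)).det = Complex.ofReal A₀.det := by
      have := RingHom.map_det Complex.ofRealHom A₀
      exact this.symm
    rw [hmap]
    exact_mod_cast hA₀.det_pos.ne'
  have hcont : ContinuousAt (fun σ : ℝ => (A (Complex.I * (σ:ℂ))).det) 0 := by
    have h2 : ContinuousAt (fun σ : ℝ => (Complex.I * (σ:ℂ))) 0 := by fun_prop
    have h1 : ContinuousAt A ((fun σ : ℝ => (Complex.I * (σ:ℂ))) 0) := by
      have : ((fun σ : ℝ => (Complex.I * (σ:ℂ))) 0) = 0 := by simp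
      rw [this]
      exact (hA 0 (mem_of_mem_nhds hU)).continuousAt
    have hc1 : ContinuousAt (fun σ : ℝ => A (Complex.I * (σ:ℂ))) 0 :=
      ContinuousAt.comp (f := fun σ : ℝ => (Complex.I * (σ:ℂ))) h1 h2
    have hdet : Continuous fun M : Mat ν => M.det := continuous_id.matrix_det
    exact ContinuousAt.comp (f := fun σ : ℝ => A (Complex.I * (σ:ℂ)))
      (hdet.continuousAt) hc1
  have hev : ∀ᶠ σ : ℝ in nhds (0:ℝ), (A (Complex.I * (σ:ℂ))).det ≠ 0 :=
    hcont.eventually_ne hdet0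
  obtain ⟨δ, hδ, hδp⟩ := Metric.eventually_nhds_iff_ball.mp hev
  set m : ℝ := min (min ε r) (min δ Tbar) with hm
  set Te : ℝ := m / 2 with hTe
  have hm1 : m ≤ ε := le_trans (min_le_left _ _) (min_le_left _ _)
  have hm2 : m ≤ r := le_trans (min_le_left _ _) (min_le_right _ _)
  have hm3 : m ≤ δ := le_trans (min_le_right _ _) (min_le_left _ _)
  have hm4 : m ≤ Tbar := le_trans (min_le_right _ _) (min_le_right _ _)
  have hmpos : 0 < m := lt_min (lt_min hε hr) (lt_min hδ hTbar)
  have hTepos : 0 < Te := by positivity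
  have hTeε : Te < ε := by rw [hTe]; linarith
  have hTer : Te < r := by rw [hTe]; linarith
  have hTeδ : Te < δ := by rw [hTe]; linarith
  have hTeT : Te < Tbar := by rw [hTe]; linarith
  -- membership in U
  have hmem : ∀ σ : ℝ, |σ| < Te → (Complex.I * (σ:ℂ)) ∈ U := by
    intro σ hσ
    apply hrU
    simp only [Metric.mem_ball, Complex.dist_eq, sub_zero]
    calc ‖Complex.I * (σ:ℂ)‖ = |σ| := by
          simp
      _ < r := lt_trans hσ hTer
  -- determinant invertibility
  have hdetu : ∀ σ : ℝ, |σ| < Te → IsUnit (A (Complex.I * (σ:ℂ))).det := by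
    intro σ hσ
    refine isUnit_iff_ne_zero.mpr (hδp σ ?_)
    simp only [Metric.mem_ball, Real.dist_eq, sub_zero]
    exact lt_trans hσ hTeδ
  -- realness of A on the imaginary axis
  have hAreal : ∀ σ : ℝ, |σ| < Te → Cm (A (Complex.I * (σ:ℂ))) = A (Complex.I * (σ:ℂ)) := by
    intro σ hσ
    exact (Cm_eq_self_iff _).mpr fun i j => (hR σ (lt_trans hσ hTeε) i j).1
  have hCreal : ∀ σ : ℝ, |σ| < Te → Cm (C (Complex.I * (σ:ℂ))) = C (Complex.I * (σ:ℂ)) := by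
    intro σ hσ
    exact (Cm_eq_self_iff _).mpr fun i j => (hR σ (lt_trans hσ hTeε) i j).2.2
  have hBneg : ∀ σ : ℝ, |σ| < Te → Cm (B (Complex.I * (σ:ℂ))) = -(B (Complex.I * (σ:ℂ))) := by
    intro σ hσ
    ext i j
    rw [Cm_apply]
    exact conj_eq_neg_of _ ((hR σ (lt_trans hσ hTeε) i j).2.1)
  -- realness of A⁻¹
  have hAinvreal : ∀ σ : ℝ, |σ| < Te →
      Cm ((A (Complex.I * (σ:ℂ)))⁻¹) = (A (Complex.I * (σ:ℂ)))⁻¹ := by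
    intro σ hσ
    have h1 : Cm ((A (Complex.I * (σ:ℂ)))⁻¹) * A (Complex.I * (σ:ℂ)) = 1 := by
      calc Cm ((A (Complex.I * (σ:ℂ)))⁻¹) * A (Complex.I * (σ:ℂ))
          = Cm ((A (Complex.I * (σ:ℂ)))⁻¹) * Cm (A (Complex.I * (σ:ℂ))) := by
            rw [hAreal σ hσ]
        _ = Cm ((A (Complex.I * (σ:ℂ)))⁻¹ * A (Complex.I * (σ:ℂ))) := (Cm_mul _ _).symm
        _ = 1 := by rw [Matrix.nonsing_inv_mul _ (hdetu σ hσ), Cm_one]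
    exact (Matrix.inv_eq_left_inv h1).symm
  -- eventual smallness
  have hevTe : ∀ σ : ℝ, |σ| < Te → ∀ᶠ x in nhds σ, |x| < Te := by
    intro σ hσ
    have : IsOpen {x : ℝ | |x| < Te} := isOpen_lt (continuous_abs) continuous_const
    exact this.eventually_mem hσ
  -- realness of deriv A : conj = -deriv A
  have hdAneg : ∀ σ : ℝ, |σ| < Te →
      Cm (deriv A (Complex.I * (σ:ℂ))) = -(deriv A (Complex.I * (σ:ℂ))) := by
    intro σ hσ
    ext i j
    rw [Cm_apply]
    refine conj_eq_neg_of _ ?_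
    have hdiff : DifferentiableAt ℂ A (Complex.I * (σ:ℂ)) :=
      (hA _ (hmem σ hσ)).differentiableAt
    have hline := hasDerivAt_line hdiff
    have hent : HasDerivAt (fun x : ℝ => A (Complex.I * (x:ℂ)) i j)
        ((Complex.I • deriv A (Complex.I * (σ:ℂ))) i j) σ :=
      (entL i j).hasFDerivAt.comp_hasDerivAt σ hline
    have him : ((Complex.I • deriv A (Complex.I * (σ:ℂ))) i j).im = 0 := by
      refine im_deriv_zero hent ?_
      filter_upwards [hevTe σ hσ] with x hx using (hR x (lt_trans hx hTeε) i j).1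
    simpa [Matrix.smul_apply] using him
  -- realness of deriv B : conj = deriv B
  have hdBreal : ∀ σ : ℝ, |σ| < Te →
      Cm (deriv B (Complex.I * (σ:ℂ))) = deriv B (Complex.I * (σ:ℂ)) := by
    intro σ hσ
    refine (Cm_eq_self_iff _).mpr fun i j => ?_
    have hdiff : DifferentiableAt ℂ B (Complex.I * (σ:ℂ)) :=
      (hB _ (hmem σ hσ)).differentiableAt
    have hline := hasDerivAt_line hdiff
    have hent : HasDerivAt (fun x : ℝ => B (Complex.I * (x:ℂ)) i j)
        ((Complex.I • deriv B (Complex.I * (σ:ℂ))) i j) σ :=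
      (entL i j).hasFDerivAt.comp_hasDerivAt σ hline
    have hent2 : HasDerivAt (fun x : ℝ => Complex.I * (B (Complex.I * (x:ℂ)) i j))
        (Complex.I * ((Complex.I • deriv B (Complex.I * (σ:ℂ))) i j)) σ :=
      hent.const_mul Complex.I
    have him : (Complex.I * ((Complex.I • deriv B (Complex.I * (σ:ℂ))) i j)).im = 0 := by
      refine im_deriv_zero hent2 ?_
      filter_upwards [hevTe σ hσ] with x hx using (hR x (lt_trans hx hTeε) i j).2.1
    have : (Complex.I * (Complex.I * (deriv B (Complex.I * (σ:ℂ)) i j))).im = 0 := by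
      simpa [Matrix.smul_apply] using him
    simpa [← mul_assoc, Complex.I_mul_I] using this
  -- conjugation of the coefficients
  have hE : ∀ σ : ℝ, |σ| < Te →
      Cm (Ecoef A B (Complex.I * (σ:ℂ))) = -(Ecoef A B (Complex.I * (σ:ℂ))) := by
    intro σ hσ
    rw [Ecoef, Cm_add, Cm_mul, Cm_smul, Cm_mul, Cm_sub, Cm_transpose,
      hdAneg σ hσ, hAinvreal σ hσ, hAreal σ hσ, hBneg σ hσ]
    have h2 : (-(B (Complex.I * (σ:ℂ))))ᵀ - -(B (Complex.I * (σ:ℂ)))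
        = -((B (Complex.I * (σ:ℂ)))ᵀ - B (Complex.I * (σ:ℂ))) := by
      rw [Matrix.transpose_neg]; abel
    rw [show ((starRingEnd ℂ) 2 : ℂ) = 2 from map_ofNat _ 2, h2, mul_neg, smul_neg,
      neg_mul, neg_add]
  have hF : ∀ σ : ℝ, |σ| < Te →
      Cm (Fcoef A B C (Complex.I * (σ:ℂ))) = Fcoef A B C (Complex.I * (σ:ℂ)) := by
    intro σ hσ
    rw [Fcoef, Cm_sub, Cm_smul, Cm_mul, Cm_smul, Cm_mul,
      hAreal σ hσ, hCreal σ hσ, hdBreal σ hσ,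
      show ((starRingEnd ℂ) 4 : ℂ) = 4 from map_ofNat _ 4,
      show ((starRingEnd ℂ) 2 : ℂ) = 2 from map_ofNat _ 2]
  -- key: realness of qb on the imaginary axis
  have key : ∀ σ : ℝ, |σ| < Te → ∀ s ∈ Icc (0:ℝ) 1,
      Cm (qb (Complex.I * (σ:ℂ)) s) = qb (Complex.I * (σ:ℂ)) s := by
    intro σ hσ
    set t : ℂ := Complex.I * (σ:ℂ) with ht
    have habs : ‖t‖ < Tbar := by
      rw [ht]
      calc ‖Complex.I * (σ:ℂ)‖ = |σ| := by simp
        _ < Tbar := lt_trans hσ hTeT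
    obtain ⟨hq2, hqeq, hq0, hq1⟩ := hqb t habs
    set q : ℝ → Mat ν := qb t with hq
    set q' : ℝ → Mat ν := fun s => CmL (q s) with hq'
    have hud : UniqueDiffOn ℝ (Icc (0:ℝ) 1) := uniqueDiffOn_Icc one_pos
    have hq'2 : ContDiffOn ℝ 2 q' (Icc 0 1) := CmL.contDiff.comp_contDiffOn hq2
    have hder1 : ∀ s ∈ Icc (0:ℝ) 1,
        derivWithin q' (Icc 0 1) s = CmL (derivWithin q (Icc 0 1) s) := by
      intro s hs
      have hdq : HasDerivWithinAt q (derivWithin q (Icc 0 1) s) (Icc 0 1) s :=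
        (hq2.differentiableOn (by norm_num) s hs).hasDerivWithinAt
      exact ((CmL.hasFDerivAt).comp_hasDerivWithinAt s hdq).derivWithin (hud s hs)
    have hq1d : ContDiffOn ℝ 1 (derivWithin q (Icc 0 1)) (Icc 0 1) :=
      hq2.derivWithin hud (by norm_num)
    have hder2 : ∀ s ∈ Icc (0:ℝ) 1,
        derivWithin (derivWithin q' (Icc 0 1)) (Icc 0 1) s
          = CmL (derivWithin (derivWithin q (Icc 0 1)) (Icc 0 1) s) := by
      intro s hs
      have hcg : derivWithin (derivWithin q' (Icc 0 1)) (Icc 0 1) s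
          = derivWithin (fun u => CmL (derivWithin q (Icc 0 1) u)) (Icc 0 1) s :=
        derivWithin_congr (fun u hu => hder1 u hu) (hder1 s hs)
      rw [hcg]
      have hdq : HasDerivWithinAt (derivWithin q (Icc 0 1))
          (derivWithin (derivWithin q (Icc 0 1)) (Icc 0 1) s) (Icc 0 1) s :=
        (hq1d.differentiableOn one_ne_zero s hs).hasDerivWithinAt
      exact ((CmL.hasFDerivAt).comp_hasDerivWithinAt s hdq).derivWithin (hud s hs)
    have hct : (starRingEnd ℂ) t = -t := by
      rw [ht]
      simp [Complex.conj_ofReal]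
    have hsol' : SolBVP A B C t 0 1 q' := by
      refine ⟨hq'2, ?_, ?_, ?_⟩
      · intro s hs
        rw [hder2 s hs, hder1 s hs, hqeq s hs]
        have htS : t * (s:ℂ) = Complex.I * (((σ * s : ℝ)):ℂ) := by
          rw [ht]; push_cast; ring
        have hσs : |σ * s| < Te := by
          rw [abs_mul]
          calc |σ| * |s| ≤ |σ| * 1 := by
                apply mul_le_mul_of_nonneg_left _ (abs_nonneg σ)
                rw [abs_le]; constructor <;> [linarith [hs.1]; exact hs.2]
            _ = |σ| := mul_one _
            _ < Te := hσ
        show Cm _ = _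
        rw [Cm_add, Cm_smul, Cm_smul, Cm_mul, Cm_mul, hct, map_pow, hct]
        rw [htS, hE (σ * s) hσs, hF (σ * s) hσs, ← htS]
        show _ = t • (Ecoef A B (t * s) * Cm (derivWithin q (Icc 0 1) s))
          + t ^ 2 • (Fcoef A B C (t * s) * Cm (q s))
        rw [neg_mul, neg_smul, smul_neg, neg_neg, neg_pow]
        norm_num
      · show CmL (q 0) = 0
        rw [hq0]; exact map_zero _
      · show CmL (q 1) = 1
        rw [hq1, CmL_apply, Cm_one]
    intro s hs
    exact hqbu t habs q' hsol' hs
  -- conclusion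
  refine ⟨Te, hTepos, hTeT, ?_⟩
  intro τ₀ hτ₀ s hs s' hs' i j
  set t : ℂ := Complex.I * (τ₀:ℝ) with ht
  set f : ℝ → Mat ν := fun τ =>
    qb (t * (τ:ℂ)) (s / τ) * A (t * (τ:ℂ)) * (qb (t * (τ:ℂ)) (s' / τ))ᵀ with hf
  have hmax1 : max s s' ≤ 1 := max_le hs.2 hs'.2
  have hmax0 : (0:ℝ) ≤ max s s' := le_trans hs.1 (le_max_left _ _)
  -- realness of the integrand on the interval
  have hfreal : ∀ τ ∈ Set.uIcc (max s s') 1, ∀ i' j' : Fin ν, (f τ i' j').im = 0 := by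
    intro τ hτ
    rw [Set.uIcc_of_le hmax1] at hτ
    obtain ⟨hτ1, hτ2⟩ := hτ
    have hτ0 : (0:ℝ) ≤ τ := le_trans hmax0 hτ1
    have hττ : |τ₀ * τ| < Te := by
      rw [abs_mul]
      calc |τ₀| * |τ| ≤ |τ₀| * 1 := by
            apply mul_le_mul_of_nonneg_left _ (abs_nonneg τ₀)
            rw [abs_le]; exact ⟨by linarith, hτ2⟩
        _ = |τ₀| := mul_one _
        _ < Te := hτ₀
    have htτ : t * (τ:ℂ) = Complex.I * (((τ₀ * τ : ℝ)):ℂ) := by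
      rw [ht]; push_cast; ring
    have hdivmem : ∀ u : ℝ, u ∈ Icc (0:ℝ) 1 → u ≤ max s s' → u / τ ∈ Icc (0:ℝ) 1 := by
      intro u hu hule
      rcases eq_or_lt_of_le hτ0 with h0 | h0
      · have hu0 : u = 0 := le_antisymm (by linarith [hule, hτ1]) hu.1
        simp [hu0]
      · constructor
        · exact div_nonneg hu.1 (le_of_lt h0)
        · rw [div_le_one h0]
          exact le_trans hule hτ1
    have h1 : Cm (qb (t * (τ:ℂ)) (s / τ)) = qb (t * (τ:ℂ)) (s / τ) := by
      rw [htτ]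
      exact key (τ₀ * τ) hττ _ (hdivmem s hs (le_max_left _ _))
    have h2 : Cm (qb (t * (τ:ℂ)) (s' / τ)) = qb (t * (τ:ℂ)) (s' / τ) := by
      rw [htτ]
      exact key (τ₀ * τ) hττ _ (hdivmem s' hs' (le_max_right _ _))
    have h3 : Cm (A (t * (τ:ℂ))) = A (t * (τ:ℂ)) := by
      rw [htτ]; exact hAreal (τ₀ * τ) hττ
    have : Cm (f τ) = f τ := by
      rw [hf]
      show Cm (_ * _ * _) = _
      rw [Cm_mul, Cm_mul, Cm_transpose, h1, h2, h3]
    exact (Cm_eq_self_iff _).mp this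
  -- compute the imaginary part of the integral
  have hKf : Ktil A qb t s s' = ∫ τ in (max s s')..1, f τ := rfl
  rw [hKf]
  by_cases hInt : @IntervalIntegrable (Mat ν) PseudoMetricSpace.toUniformSpace.toTopologicalSpace _ f MeasureTheory.volume (max s s') 1
  · set L : Mat ν →L[ℝ] ℝ := Complex.imCLM.comp (entL i j) with hL
    have hcomm := L.intervalIntegral_comp_comm hInt
    have hEq : Set.EqOn (fun τ => L (f τ)) (fun _ => (0:ℝ)) (Set.uIcc (max s s') 1) :=
      fun τ hτ => hfreal τ hτ i j
    have hLf : (∫ τ in (max s s')..1, L (f τ)) = 0 := by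
      rw [intervalIntegral.integral_congr hEq]
      simp
    have : L (∫ τ in (max s s')..1, f τ) = 0 := hcomm.symm.trans hLf
    exact this
  · rw [intervalIntegral.integral_undef hInt]
    simp
end
end

section
/- Let m ≥ 0 be an integer and let Ω₁, Ω₂ be open subsets of ℂ with Ω₁ compactly contained in Ω₂ (i.e. there exists ρ > 0 with Ω₁ + D_ρ ⊆ Ω₂). There exists a constant C > 0, depending only on m, Ω₁, Ω₂, with the following property: for every bounded analytic matrix-valued function θ on Ω₂ and every bounded analytic ℂ-valued function φ on Ω₂, the m-th derivative satisfies ∂_t^m(θ e^{φ}) = α_m e^{φ} on Ω₂ for some analytic matrix-valued function α_m on Ω₂ with sup_{Ω₁} |α_m| ≤ C · (sup_{Ω₂} |θ|) · (1 + (sup_{Ω₂} |φ|)^m). -/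
open Set

attribute [local instance] Matrix.linftyOpNormedAddCommGroup Matrix.linftyOpNormedRing
  Matrix.linftyOpNormedAlgebra

noncomputable section

namespace Statement16Aux

variable {ν : ℕ}

noncomputable def A (φ : ℂ → ℂ) (θ : ℂ → Mat ν) : ℕ → ℂ → Mat ν
  | 0 => θ
  | (k+1) => fun z => deriv (A φ θ k) z + deriv φ z • A φ θ k z

lemma analyticA {φ : ℂ → ℂ} {θ : ℂ → Mat ν} {Ω : Set ℂ}
    (hθ : AnalyticOnNhd ℂ θ Ω) (hφ : AnalyticOnNhd ℂ φ Ω) (k : ℕ) :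
    AnalyticOnNhd ℂ (A φ θ k) Ω := by
  induction k with
  | zero => exact hθ
  | succ k ih => exact ih.deriv.add (hφ.deriv.smul ih)

lemma iteratedDerivA {φ : ℂ → ℂ} {θ : ℂ → Mat ν} {Ω : Set ℂ} (hΩ : IsOpen Ω)
    (hθ : AnalyticOnNhd ℂ θ Ω) (hφ : AnalyticOnNhd ℂ φ Ω) (k : ℕ) :
    ∀ z ∈ Ω, iteratedDeriv k (fun w => Complex.exp (φ w) • θ w) z
      = Complex.exp (φ z) • A φ θ k z := by
  induction k with
  | zero => intro z _; simp [A]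
  | succ k ih =>
    intro z hz
    rw [iteratedDeriv_succ]
    have hev : (iteratedDeriv k fun w => Complex.exp (φ w) • θ w)
        =ᶠ[nhds z] fun w => Complex.exp (φ w) • A φ θ k w :=
      Filter.eventuallyEq_of_mem (hΩ.mem_nhds hz) ih
    rw [hev.deriv_eq]
    have hA := (analyticA hθ hφ k z hz).differentiableAt
    have hφd := (hφ z hz).differentiableAt
    have hexp : DifferentiableAt ℂ (fun w => Complex.exp (φ w)) z := hφd.cexp
    rw [deriv_fun_smul hexp hA, deriv_cexp hφd]
    show _ = Complex.exp (φ z) • (deriv (A φ θ k) z + deriv φ z • A φ θ k z)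
    rw [smul_add, smul_smul]
    rfl

lemma boundA {φ : ℂ → ℂ} {θ : ℂ → Mat ν} {Ω : Set ℂ}
    (hθ : AnalyticOnNhd ℂ θ Ω) (hφ : AnalyticOnNhd ℂ φ Ω)
    {Mθ Mφ δ : ℝ} (hδ : 0 < δ) (hMθ : 0 ≤ Mθ) (hMφ : 0 ≤ Mφ)
    (hbθ : ∀ z ∈ Ω, ‖θ z‖ ≤ Mθ) (hbφ : ∀ z ∈ Ω, ‖φ z‖ ≤ Mφ)
    {m : ℕ} (T : ℕ → Set ℂ)
    (hTsub : ∀ k ≤ m, T k ⊆ Ω)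
    (hTball : ∀ k, k < m → ∀ z ∈ T (k+1), Metric.closedBall z δ ⊆ T k) :
    ∀ k ≤ m, ∀ z ∈ T k, ‖A φ θ k z‖ ≤ Mθ * ((1 + Mφ) / δ) ^ k := by
  intro k
  induction k with
  | zero => intro _ z hz; simpa [A] using hbθ z (hTsub 0 (Nat.zero_le m) hz)
  | succ k ih =>
    intro hkm z hz
    have hk : k ≤ m := Nat.le_of_succ_le hkm
    have hball : Metric.closedBall z δ ⊆ T k := hTball k hkm z hz
    have hkΩ : Metric.closedBall z δ ⊆ Ω := hball.trans (hTsub k hk)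
    have hcl : closure (Metric.ball z δ) = Metric.closedBall z δ := closure_ball z hδ.ne'
    set B : ℝ := Mθ * ((1 + Mφ) / δ) ^ k with hB
    have hBnn : 0 ≤ B := by positivity
    have d1 : ‖deriv (A φ θ k) z‖ ≤ B / δ := by
      apply Complex.norm_deriv_le_of_forall_mem_sphere_norm_le hδ
      · exact ((analyticA hθ hφ k).differentiableOn.mono (hcl ▸ hkΩ)).diffContOnCl
      · intro w hw
        exact ih hk w (hball (Metric.sphere_subset_closedBall hw))
    have d2 : ‖deriv φ z‖ ≤ Mφ / δ := by
      apply Complex.norm_deriv_le_of_forall_mem_sphere_norm_le hδ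
      · exact ((hφ.differentiableOn).mono (hcl ▸ hkΩ)).diffContOnCl
      · intro w hw
        exact hbφ w (hkΩ (Metric.sphere_subset_closedBall hw))
    have hzk : z ∈ T k := hball (Metric.mem_closedBall_self hδ.le)
    have hAk : ‖A φ θ k z‖ ≤ B := ih hk z hzk
    have : ‖A φ θ (k+1) z‖ ≤ B / δ + (Mφ / δ) * B := by
      show ‖deriv (A φ θ k) z + deriv φ z • A φ θ k z‖ ≤ _
      refine (norm_add_le _ _).trans (add_le_add d1 ?_)
      rw [norm_smul]
      exact mul_le_mul (d2) hAk (norm_nonneg _) (by positivity)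
    refine this.trans (le_of_eq ?_)
    rw [hB, pow_succ]
    field_simp

end Statement16Aux

open Statement16Aux in
/-- Lemma 3.11 of the paper: a Cauchy-type estimate for derivatives of `θ e^φ`. -/
theorem statement16 (ν m : ℕ) (Ω₁ Ω₂ : Set ℂ) (hΩ₂ : IsOpen Ω₂)
    (ρ : ℝ) (hρ : 0 < ρ)
    (hsub : ∀ z ∈ Ω₁, ∀ w : ℂ, ‖w‖ < ρ → z + w ∈ Ω₂) :
    ∃ C > (0 : ℝ), ∀ θ : ℂ → Mat ν, ∀ φ : ℂ → ℂ,
      AnalyticOnNhd ℂ θ Ω₂ → AnalyticOnNhd ℂ φ Ω₂ →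
      ∀ Mθ Mφ : ℝ,
        (∀ z ∈ Ω₂, ‖θ z‖ ≤ Mθ) → (∀ z ∈ Ω₂, ‖φ z‖ ≤ Mφ) →
        ∃ α : ℂ → Mat ν, AnalyticOnNhd ℂ α Ω₂ ∧
          (∀ z ∈ Ω₂,
            iteratedDeriv m (fun w => Complex.exp (φ w) • θ w) z =
              Complex.exp (φ z) • α z) ∧
          ∀ z ∈ Ω₁, ‖α z‖ ≤ C * Mθ * (1 + Mφ ^ m) := by
  set δ : ℝ := ρ / (2 * (m + 1)) with hδdef
  have hδ : 0 < δ := by positivity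
  refine ⟨2 ^ m / δ ^ m, by positivity, ?_⟩
  intro θ φ hθ hφ Mθ Mφ hbθ hbφ
  refine ⟨A φ θ m, analyticA hθ hφ m, iteratedDerivA hΩ₂ hθ hφ m, ?_⟩
  intro z hz
  have hzΩ₂ : z ∈ Ω₂ := by
    have := hsub z hz 0 (by simpa using hρ)
    simpa using this
  have hMθ : 0 ≤ Mθ := le_trans (norm_nonneg _) (hbθ z hzΩ₂)
  have hMφ : 0 ≤ Mφ := le_trans (norm_nonneg _) (hbφ z hzΩ₂)
  -- the nested sets
  set T : ℕ → Set ℂ := fun k => {w | ∃ x ∈ Ω₁, dist w x ≤ ((m : ℝ) - k) * δ} with hT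
  have hmδ : (m : ℝ) * δ < ρ := by
    rw [hδdef, mul_div_assoc', div_lt_iff₀ (by positivity : (0:ℝ) < 2 * (m + 1))]
    nlinarith [Nat.cast_nonneg (α := ℝ) m]
  have hTsub : ∀ k ≤ m, T k ⊆ Ω₂ := by
    intro k hk w hw
    obtain ⟨x, hx, hd⟩ := hw
    have h1 : dist w x < ρ := by
      have : ((m : ℝ) - k) * δ ≤ (m : ℝ) * δ := by
        apply mul_le_mul_of_nonneg_right _ hδ.le
        have : (0 : ℝ) ≤ k := Nat.cast_nonneg k
        linarith
      linarith
    have := hsub x hx (w - x) (by rwa [Complex.dist_eq] at h1)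
    simpa using this
  have hTball : ∀ k, k < m → ∀ w ∈ T (k+1), Metric.closedBall w δ ⊆ T k := by
    intro k hkm w hw u hu
    obtain ⟨x, hx, hd⟩ := hw
    refine ⟨x, hx, ?_⟩
    have h1 : dist u w ≤ δ := Metric.mem_closedBall.mp hu
    have h2 : ((m : ℝ) - (k + 1)) * δ + δ = ((m : ℝ) - k) * δ := by ring
    calc dist u x ≤ dist u w + dist w x := dist_triangle u w x
      _ ≤ δ + ((m : ℝ) - (k+1 : ℕ)) * δ := add_le_add h1 hd
      _ = ((m : ℝ) - k) * δ := by push_cast; ring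
  have hzT : z ∈ T m := ⟨z, hz, by simp⟩
  have hbound := boundA hθ hφ hδ hMθ hMφ hbθ hbφ T hTsub hTball m le_rfl z hzT
  refine hbound.trans ?_
  have key : (1 + Mφ) ^ m ≤ 2 ^ m * (1 + Mφ ^ m) := by
    rcases le_total Mφ 1 with h | h
    · have h1 : (1 + Mφ) ^ m ≤ 2 ^ m := pow_le_pow_left₀ (by linarith) (by linarith) m
      have h2 : (0 : ℝ) ≤ Mφ ^ m := by positivity
      nlinarith [pow_pos (show (0:ℝ) < 2 by norm_num) m]
    · have h1 : (1 + Mφ) ^ m ≤ (2 * Mφ) ^ m := pow_le_pow_left₀ (by linarith) (by linarith) m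
      have h2 : (2 * Mφ) ^ m = 2 ^ m * Mφ ^ m := mul_pow 2 Mφ m
      nlinarith [pow_pos (show (0:ℝ) < 2 by norm_num) m]
  have hrw : Mθ * ((1 + Mφ) / δ) ^ m = Mθ * (1 + Mφ) ^ m / δ ^ m := by
    rw [div_pow]; ring
  rw [hrw]
  rw [div_le_iff₀ (by positivity), div_mul_eq_mul_div, div_mul_eq_mul_div,
    div_mul_cancel₀ _ (by positivity : (δ:ℝ) ^ m ≠ 0)]
  calc Mθ * (1 + Mφ) ^ m ≤ Mθ * (2 ^ m * (1 + Mφ ^ m)) :=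
        mul_le_mul_of_nonneg_left key hMθ
    _ = 2 ^ m * Mθ * (1 + Mφ ^ m) := by ring
end
end

section
/- Let T_b > 0, let μ* be a positive Borel measure on ℝ^ν, and let f be a measurable matrix-valued function on D_{T_b} × ℝ^ν, analytic in the first variable, such that for every R > 0, ∫_{ℝ^ν} e^{R|ξ|} sup_{|t|<T_b} |f(t,ξ)| dμ*(ξ) < ∞. Let T > 0 and suppose given functions q̃♮ and K̃ such that for all |t| ≤ T with Re t ≥ 0, all n ≥ 1, all 0 < s₁ < ⋯ < s_n < 1, all ξ₁,…,ξ_n ∈ ℝ^ν and all x, y ∈ ℂ^ν: |q̃♮_t(s_j)| ≤ 2(|x| + |y|) and Re( t · Σ_{j,k=1}^n ξ_j · K̃_t(s_j,s_k) ξ_k ) ≥ 0. Then for T_c := (1/2)·min(1, T, T_b), for every t with |t| < T_c, Re t ≥ 0, and every x, y ∈ ℂ^ν, the series p^conj := 𝟙 + Σ_{n≥1} v_n converges absolutely, where v_n(t,x,y) := tⁿ ∫_{0<s₁<⋯<s_n<1} ∫_{ℝ^{νn}} e^{i Σ_j q̃♮_t(s_j)·ξ_j} e^{−t Σ_{j,k}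 ξ_j·K̃_t(s_j,s_k)ξ_k} f(s_n t, ξ_n)⋯f(s₁ t, ξ₁) dμ*(ξ_n)⋯dμ*(ξ₁) dⁿs; indeed the sum of the μ*⊗⋯⊗μ*-integrals of the absolute values of the integrands is bounded by Σ_{n≥1} (A T_c)ⁿ/n! with A := 2∫ e^{2R|ξ|} sup_{|t|<T_b}|f(t,ξ)| dμ*(ξ) whenever |x| + |y| < R. -/
open Matrix Set MeasureTheory Filter ENNReal NNReal

attribute [local instance] Matrix.linftyOpNormedAddCommGroup Matrix.linftyOpNormedRing
  Matrix.linftyOpNormedAlgebra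

noncomputable section

/-- The open simplex `{0 < s₁ < s₂ < ⋯ < s_n < 1}`. -/
def simplexSet (n : ℕ) : Set (Fin n → ℝ) :=
  {s | StrictMono s ∧ ∀ j, s j ∈ Ioo (0 : ℝ) 1}

/-- `𝔣(ξ) := sup_{|t| < T_b} ‖f(t,ξ)‖`, as an extended nonnegative real. -/
def supf (ν d : ℕ) (Tb : ℝ)
    (f : ℂ → EuclideanSpace ℝ (Fin ν) → Matrix (Fin d) (Fin d) ℂ)
    (ξ : EuclideanSpace ℝ (Fin ν)) : ℝ≥0∞ :=
  ⨆ t : {t : ℂ // ‖t‖ < Tb}, (‖f t.1 ξ‖₊ : ℝ≥0∞)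

/-- The integrand of `v_n`:
`tⁿ e^{i Σ_j q̃♮_t(s_j)·ξ_j} e^{−t Σ_{j,k} ξ_j·K̃_t(s_j,s_k)ξ_k} f(s_n t,ξ_n)⋯f(s₁ t,ξ₁)`. -/
def integrand (ν d : ℕ)
    (f : ℂ → EuclideanSpace ℝ (Fin ν) → Matrix (Fin d) (Fin d) ℂ)
    (qnat : ℂ → EuclideanSpace ℂ (Fin ν) → EuclideanSpace ℂ (Fin ν) → ℝ →
      EuclideanSpace ℂ (Fin ν))
    (Kt : ℂ → ℝ → ℝ → Mat ν)
    (n : ℕ) (t : ℂ) (x y : EuclideanSpace ℂ (Fin ν))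
    (s : Fin n → ℝ) (ξ : Fin n → EuclideanSpace ℝ (Fin ν)) :
    Matrix (Fin d) (Fin d) ℂ :=
  (t ^ n *
      Complex.exp
        ((Complex.I * ∑ j, ∑ i, qnat t x y (s j) i * ((ξ j i : ℝ) : ℂ))
          - t * ∑ j, ∑ k, ∑ a, ∑ b,
              ((ξ j a : ℝ) : ℂ) * Kt t (s j) (s k) a b * ((ξ k b : ℝ) : ℂ))) •
    (List.ofFn fun j : Fin n => f (((s j.rev : ℝ) : ℂ) * t) (ξ j.rev)).prod


/-! ### Auxiliary lemmas -/

lemma lintegral_pi_prod' {α : Type*} [MeasurableSpace α] (μ : Measure α) [SigmaFinite μ] :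
    ∀ (n : ℕ) (g : Fin n → α → ℝ≥0∞), (∀ i, Measurable (g i)) →
    ∫⁻ x : Fin n → α, ∏ i, g i (x i) ∂(Measure.pi fun _ : Fin n => μ) = ∏ i, ∫⁻ x, g i x ∂μ := by
  intro n
  induction n with
  | zero =>
    intro g hg
    simp [Measure.pi_univ]
  | succ n ih =>
    intro g hg
    have hmp := (measurePreserving_piFinSuccAbove (fun _ : Fin (n + 1) => μ) 0).symm
    have hmeas : Measurable fun x : Fin (n + 1) → α => ∏ i, g i (x i) :=
      Finset.measurable_prod _ fun i _ => (hg i).comp (measurable_pi_apply i)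
    rw [← hmp.lintegral_comp hmeas]
    simp_rw [MeasurableEquiv.piFinSuccAbove_symm_apply, Fin.insertNthEquiv,
      Fin.prod_univ_succ, Fin.insertNth_zero, Equiv.coe_fn_mk]
    simp only [Fin.zero_succAbove, Fin.cons_zero, Fin.cons_succ, cast_eq]
    rw [lintegral_prod_mul (f := g 0) (g := fun b : Fin n → α => ∏ i, g i.succ (b i))
      (hg 0).aemeasurable
      (Finset.measurable_prod _ fun i _ =>
        (hg i.succ).comp (measurable_pi_apply i)).aemeasurable,
      ih (fun i => g i.succ) (fun i => hg i.succ)]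

lemma measurableSet_simplexSet (n : ℕ) : MeasurableSet (simplexSet n) := by
  have h : simplexSet n =
      (⋂ (i : Fin n) (j : Fin n) (_ : i < j), {s : Fin n → ℝ | s i < s j}) ∩
        ⋂ j : Fin n, (fun s : Fin n → ℝ => s j) ⁻¹' Ioo (0 : ℝ) 1 := by
    ext s
    simp only [simplexSet, mem_setOf_eq, mem_inter_iff, mem_iInter, mem_preimage, StrictMono]
  rw [h]
  exact (MeasurableSet.iInter fun i => MeasurableSet.iInter fun j => MeasurableSet.iInter
      fun _ => measurableSet_lt (measurable_pi_apply i) (measurable_pi_apply j)).inter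
    (MeasurableSet.iInter fun j => (measurable_pi_apply j) measurableSet_Ioo)

lemma volume_simplexSet_le (n : ℕ) :
    volume (simplexSet n) ≤ ((Nat.factorial n : ℝ≥0∞))⁻¹ := by
  classical
  set S : Equiv.Perm (Fin n) → Set (Fin n → ℝ) :=
    fun σ => {s | StrictMono (s ∘ σ) ∧ ∀ j, s j ∈ Ioo (0 : ℝ) 1} with hS
  have hP : ∀ σ : Equiv.Perm (Fin n),
      S σ = (MeasurableEquiv.piCongrLeft (fun _ : Fin n => ℝ) σ.symm) ⁻¹' simplexSet n := by
    intro σ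
    have happ : ∀ (s : Fin n → ℝ),
        (MeasurableEquiv.piCongrLeft (fun _ : Fin n => ℝ) σ.symm) s = s ∘ σ := by
      intro s
      funext j
      have := Equiv.piCongrLeft_apply_apply (fun _ : Fin n => ℝ) σ.symm s (σ j)
      simpa [MeasurableEquiv.coe_piCongrLeft] using this
    ext s
    simp only [hS, mem_setOf_eq, mem_preimage, happ, simplexSet]
    constructor
    · rintro ⟨h1, h2⟩; exact ⟨h1, fun j => h2 _⟩
    · rintro ⟨h1, h2⟩
      refine ⟨h1, fun j => ?_⟩
      have := h2 (σ.symm j); simpa using this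
  have hvol : ∀ σ : Equiv.Perm (Fin n), volume (S σ) = volume (simplexSet n) := by
    intro σ
    rw [hP σ]
    exact (MeasureTheory.volume_measurePreserving_piCongrLeft (fun _ : Fin n => ℝ)
      σ.symm).measure_preimage (measurableSet_simplexSet n).nullMeasurableSet
  have hmeas : ∀ σ, MeasurableSet (S σ) := fun σ => by
    rw [hP σ]; exact (MeasurableEquiv.piCongrLeft (fun _ : Fin n => ℝ) σ.symm).measurable
      (measurableSet_simplexSet n)
  have hdisj : Pairwise (Function.onFun Disjoint S) := by
    intro σ τ hne
    rw [Function.onFun, Set.disjoint_left]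
    rintro s ⟨hσ, hmem⟩ ⟨hτ, -⟩
    apply hne
    have hr : Set.range (s ∘ σ) = Set.range (s ∘ τ) := by
      rw [Set.range_comp, Set.range_comp, σ.surjective.range_eq, τ.surjective.range_eq]
    have hwf : WellFoundedLT (Fin n) := inferInstance
    have heq : s ∘ σ = s ∘ τ :=
      (@StrictMono.range_inj (Fin n) ℝ _ _ hwf (s ∘ σ) (s ∘ τ) hσ hτ).1 hr
    have hsi : Function.Injective s := by
      intro a b hab
      have h2 : (s ∘ σ) (σ.symm a) = (s ∘ σ) (σ.symm b) := by
        simp only [Function.comp_apply, Equiv.apply_symm_apply]; exact hab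
      have h3 := hσ.injective h2
      have h4 := congrArg σ h3
      simpa using h4
    ext j
    exact congrArg Fin.val (hsi (congrFun heq j))
  have hunion : (⋃ σ, S σ) ⊆ Set.univ.pi fun _ : Fin n => Ioo (0 : ℝ) 1 := by
    rintro s hs
    simp only [mem_iUnion, hS, mem_setOf_eq] at hs
    obtain ⟨σ, -, h2⟩ := hs
    exact fun j _ => h2 j
  have key : (Nat.factorial n : ℝ≥0∞) * volume (simplexSet n) ≤ 1 := by
    calc (Nat.factorial n : ℝ≥0∞) * volume (simplexSet n)
        = ∑' σ : Equiv.Perm (Fin n), volume (S σ) := by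
          rw [tsum_fintype]
          simp only [hvol, Finset.sum_const, Finset.card_univ, Fintype.card_perm,
            Fintype.card_fin, nsmul_eq_mul]
      _ = volume (⋃ σ, S σ) := (measure_iUnion hdisj hmeas).symm
      _ ≤ volume (Set.univ.pi fun _ : Fin n => Ioo (0 : ℝ) 1) := measure_mono hunion
      _ = 1 := by
          rw [volume_pi_pi]
          simp [Real.volume_Ioo]
  rw [ENNReal.le_inv_iff_mul_le, mul_comm]
  exact key

lemma measurable_ennnorm_matrix {d : ℕ} {X : Type*} [MeasurableSpace X]
    (F : X → Matrix (Fin d) (Fin d) ℂ) (hF : ∀ i j, Measurable fun x => F x i j) :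
    Measurable fun x => (‖F x‖₊ : ℝ≥0∞) := by
  have h : ∀ x, (‖F x‖₊ : ℝ≥0∞) = ⨆ i, ∑ j, (‖F x i j‖₊ : ℝ≥0∞) := by
    intro x
    rw [Matrix.linfty_opNNNorm_def, ENNReal.coe_finset_sup, ← Finset.sup_univ_eq_iSup]
    congr 1
    funext i
    simp [ENNReal.coe_finset_sum]
  simp_rw [h]
  exact Measurable.iSup fun i => Finset.measurable_sum _ fun j _ =>
    ((hF i j).nnnorm).coe_nnreal_ennreal

lemma abs_sum_mul_le (ν : ℕ) (q : EuclideanSpace ℂ (Fin ν)) (η : EuclideanSpace ℝ (Fin ν)) :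
    ‖∑ i, q i * ((η i : ℝ) : ℂ)‖ ≤ ‖q‖ * ‖η‖ := by
  calc ‖∑ i, q i * ((η i : ℝ) : ℂ)‖ ≤ ∑ i, ‖q i * ((η i : ℝ) : ℂ)‖ :=
        norm_sum_le _ _
    _ = ∑ i, ‖q i‖ * |η i| := by
        simp [norm_mul, Complex.norm_real, Real.norm_eq_abs]
    _ ≤ Real.sqrt (∑ i, ‖q i‖ ^ 2) * Real.sqrt (∑ i, |η i| ^ 2) :=
        Real.sum_mul_le_sqrt_mul_sqrt _ _ _
    _ = ‖q‖ * ‖η‖ := by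
        rw [EuclideanSpace.norm_eq, EuclideanSpace.norm_eq]
        simp [Real.norm_eq_abs, sq_abs]

/-- Convergence of the deformation series (part -1- of the proof of Theorem 2.1). -/
theorem statement19 (ν d : ℕ) (hν : 1 ≤ ν) (Tb : ℝ) (hTb : 0 < Tb)
    (μstar : Measure (EuclideanSpace ℝ (Fin ν))) [SigmaFinite μstar]
    (f : ℂ → EuclideanSpace ℝ (Fin ν) → Matrix (Fin d) (Fin d) ℂ)
    (hf_meas : ∀ i j : Fin d,
      Measurable (fun p : ℂ × EuclideanSpace ℝ (Fin ν) => f p.1 p.2 i j))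
    (hf_an : ∀ ξ, AnalyticOnNhd ℂ (fun t => f t ξ) (Metric.ball (0 : ℂ) Tb))
    (h_int : ∀ R : ℝ, 0 < R →
      (∫⁻ ξ, ENNReal.ofReal (Real.exp (R * ‖ξ‖)) * supf ν d Tb f ξ ∂μstar) < ⊤)
    (T : ℝ) (hT : 0 < T)
    (qnat : ℂ → EuclideanSpace ℂ (Fin ν) → EuclideanSpace ℂ (Fin ν) → ℝ →
      EuclideanSpace ℂ (Fin ν))
    (Kt : ℂ → ℝ → ℝ → Mat ν)
    (hq_bound : ∀ t : ℂ, ‖t‖ ≤ T → 0 ≤ t.re →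
      ∀ x y : EuclideanSpace ℂ (Fin ν), ∀ s ∈ Ioo (0 : ℝ) 1,
        ‖qnat t x y s‖ ≤ 2 * (‖x‖ + ‖y‖))
    (hK_pos : ∀ t : ℂ, ‖t‖ ≤ T → 0 ≤ t.re → ∀ n : ℕ, 1 ≤ n →
      ∀ s : Fin n → ℝ, StrictMono s → (∀ j, s j ∈ Ioo (0 : ℝ) 1) →
      ∀ ξ : Fin n → EuclideanSpace ℝ (Fin ν),
        0 ≤ (t * ∑ j, ∑ k, ∑ a, ∑ b,
            ((ξ j a : ℝ) : ℂ) * Kt t (s j) (s k) a b * ((ξ k b : ℝ) : ℂ)).re) :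
    ∀ t : ℂ, ‖t‖ < 1 / 2 * min 1 (min T Tb) → 0 ≤ t.re →
    ∀ R : ℝ, 0 < R → ∀ x y : EuclideanSpace ℂ (Fin ν), ‖x‖ + ‖y‖ < R →
      Summable (fun n : ℕ =>
        ‖∫ s in simplexSet (n + 1),
            (∫ ξ, integrand ν d f qnat Kt (n + 1) t x y s ξ
              ∂(Measure.pi fun _ : Fin (n + 1) => μstar)) ∂volume‖) ∧
      (∑' n : ℕ, ∫⁻ s in simplexSet (n + 1),
          (∫⁻ ξ, (‖integrand ν d f qnat Kt (n + 1) t x y s ξ‖₊ : ℝ≥0∞)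
            ∂(Measure.pi fun _ : Fin (n + 1) => μstar)) ∂volume)
        ≤ ENNReal.ofReal (∑' n : ℕ,
            ((2 * (∫⁻ ξ, ENNReal.ofReal (Real.exp (2 * R * ‖ξ‖)) *
                supf ν d Tb f ξ ∂μstar).toReal) * (1 / 2 * min 1 (min T Tb))) ^ (n + 1)
              / (Nat.factorial (n + 1))) := by
  intro t ht htre R hR x y hxy
  set Tc : ℝ := 1 / 2 * min 1 (min T Tb) with hTcdef
  set A : ℝ≥0∞ := ∫⁻ ξ, ENNReal.ofReal (Real.exp (2 * R * ‖ξ‖)) * supf ν d Tb f ξ ∂μstar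
    with hAdef
  have hA_top : A < ⊤ := h_int (2 * R) (by linarith)
  have habs : (0:ℝ) ≤ ‖t‖ := norm_nonneg _
  have hmin_pos : 0 < min 1 (min T Tb) := lt_min one_pos (lt_min hT hTb)
  have hTc0 : 0 < Tc := by rw [hTcdef]; linarith
  have hTcT : Tc ≤ T := by
    have h1 : min 1 (min T Tb) ≤ T := (min_le_right _ _).trans (min_le_left _ _)
    rw [hTcdef]; linarith
  have htT : ‖t‖ ≤ T := le_of_lt (lt_of_lt_of_le ht hTcT)
  have htTb : ‖t‖ < Tb := by
    have h1 : min 1 (min T Tb) ≤ Tb := (min_le_right _ _).trans (min_le_right _ _)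
    have : Tc ≤ 1 / 2 * Tb := by rw [hTcdef]; linarith
    linarith
  set c : ℝ := 2 * A.toReal * Tc with hcdef
  have hA0 : (0:ℝ) ≤ A.toReal := ENNReal.toReal_nonneg
  have hc0 : 0 ≤ c := by rw [hcdef]; positivity
  -- the main per-slice bound
  have hbound : ∀ (n : ℕ) (s : Fin (n+1) → ℝ), s ∈ simplexSet (n+1) →
      (∫⁻ ξ, (‖integrand ν d f qnat Kt (n+1) t x y s ξ‖₊ : ℝ≥0∞)
        ∂(Measure.pi fun _ : Fin (n+1) => μstar))
        ≤ (ENNReal.ofReal (‖t‖) * A) ^ (n+1) := by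
    intro n s hs
    obtain ⟨hsm, hio⟩ := hs
    set g : Fin (n+1) → EuclideanSpace ℝ (Fin ν) → ℝ≥0∞ := fun j η =>
      ENNReal.ofReal (‖t‖ * Real.exp (2 * R * ‖η‖)) *
        (‖f (((s j : ℝ) : ℂ) * t) η‖₊ : ℝ≥0∞) with hgdef
    have hgmeas : ∀ j, Measurable (g j) := by
      intro j
      apply Measurable.fun_mul
      · exact (measurable_const.mul
          (Real.measurable_exp.comp (measurable_const.mul measurable_norm))).ennreal_ofReal
      · exact measurable_ennnorm_matrix _ fun i k =>
          (hf_meas i k).comp (measurable_const.prodMk measurable_id)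
    have hq2R : ∀ j : Fin (n+1), ‖qnat t x y (s j)‖ ≤ 2 * R := fun j =>
      (hq_bound t htT htre x y (s j) (hio j)).trans (by linarith)
    have hpt : ∀ ξ : Fin (n+1) → EuclideanSpace ℝ (Fin ν),
        (‖integrand ν d f qnat Kt (n+1) t x y s ξ‖₊ : ℝ≥0∞) ≤ ∏ j, g j (ξ j) := by
      intro ξ
      set Q : ℂ := ∑ j, ∑ i, qnat t x y (s j) i * ((ξ j i : ℝ) : ℂ) with hQdef
      set K : ℂ := ∑ j, ∑ k, ∑ a, ∑ b,
          ((ξ j a : ℝ) : ℂ) * Kt t (s j) (s k) a b * ((ξ k b : ℝ) : ℂ) with hKdef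
      have hKre : 0 ≤ (t * K).re :=
        hK_pos t htT htre (n+1) (Nat.le_add_left 1 n) s hsm hio ξ
      have hQabs : ‖Q‖ ≤ ∑ j, 2 * R * ‖ξ j‖ := by
        calc ‖Q‖ ≤ ∑ j, ‖∑ i, qnat t x y (s j) i * ((ξ j i : ℝ) : ℂ)‖ :=
              norm_sum_le _ _
          _ ≤ ∑ j, ‖qnat t x y (s j)‖ * ‖ξ j‖ :=
              Finset.sum_le_sum fun j _ => abs_sum_mul_le ν _ _
          _ ≤ ∑ j, 2 * R * ‖ξ j‖ := Finset.sum_le_sum fun j _ =>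
              mul_le_mul_of_nonneg_right (hq2R j) (norm_nonneg _)
      have hzre : (Complex.I * Q - t * K).re ≤ ∑ j, 2 * R * ‖ξ j‖ := by
        have h1 : (Complex.I * Q - t * K).re = -Q.im - (t * K).re := by
          simp [Complex.sub_re, Complex.mul_re, Complex.I_re, Complex.I_im]
        have h2 : -Q.im ≤ ‖Q‖ := (neg_le_abs _).trans (Complex.abs_im_le_norm Q)
        rw [h1]; linarith
      have hre : ‖integrand ν d f qnat Kt (n+1) t x y s ξ‖ ≤
          ∏ j, (‖t‖ * Real.exp (2 * R * ‖ξ j‖) *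
            ‖f (((s j : ℝ) : ℂ) * t) (ξ j)‖) := by
        have hnorm_eq : ‖integrand ν d f qnat Kt (n+1) t x y s ξ‖ =
            ‖t ^ (n+1) * Complex.exp (Complex.I * Q - t * K)‖ *
              ‖(List.ofFn fun j : Fin (n+1) =>
                f (((s j.rev : ℝ) : ℂ) * t) (ξ j.rev)).prod‖ := by
          rw [integrand, norm_smul]
        have habsfac : ‖t ^ (n+1) * Complex.exp (Complex.I * Q - t * K)‖ ≤
            ‖t‖ ^ (n+1) * ∏ j, Real.exp (2 * R * ‖ξ j‖) := by
          rw [norm_mul, norm_pow, Complex.norm_exp]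
          refine mul_le_mul_of_nonneg_left ?_ (pow_nonneg habs _)
          rw [← Real.exp_sum]
          exact Real.exp_le_exp.mpr hzre
        have hL : ‖(List.ofFn fun j : Fin (n+1) =>
              f (((s j.rev : ℝ) : ℂ) * t) (ξ j.rev)).prod‖ ≤
            ∏ j, ‖f (((s j : ℝ) : ℂ) * t) (ξ j)‖ := by
          have hne : (List.ofFn fun j : Fin (n+1) =>
              f (((s j.rev : ℝ) : ℂ) * t) (ξ j.rev)) ≠ [] :=
            List.ne_nil_of_length_pos (by simp)
          refine le_trans (List.norm_prod_le' hne) (le_of_eq ?_)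
          rw [List.map_ofFn, List.prod_ofFn]
          have := Equiv.prod_comp (Fin.revPerm : Equiv.Perm (Fin (n+1)))
            (fun j => ‖f (((s j : ℝ) : ℂ) * t) (ξ j)‖)
          simpa [Function.comp] using this
        calc ‖integrand ν d f qnat Kt (n+1) t x y s ξ‖
            = ‖t ^ (n+1) * Complex.exp (Complex.I * Q - t * K)‖ *
              ‖(List.ofFn fun j : Fin (n+1) =>
                f (((s j.rev : ℝ) : ℂ) * t) (ξ j.rev)).prod‖ := hnorm_eq
          _ ≤ (‖t‖ ^ (n+1) * ∏ j, Real.exp (2 * R * ‖ξ j‖)) *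
              ∏ j, ‖f (((s j : ℝ) : ℂ) * t) (ξ j)‖ := by
              apply mul_le_mul habsfac hL (norm_nonneg _)
              positivity
          _ = ∏ j, (‖t‖ * Real.exp (2 * R * ‖ξ j‖) *
              ‖f (((s j : ℝ) : ℂ) * t) (ξ j)‖) := by
              rw [Finset.prod_mul_distrib, Finset.prod_mul_distrib, Finset.prod_const,
                Finset.card_univ, Fintype.card_fin]
      calc (‖integrand ν d f qnat Kt (n+1) t x y s ξ‖₊ : ℝ≥0∞)
          = ENNReal.ofReal ‖integrand ν d f qnat Kt (n+1) t x y s ξ‖ :=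
            (ofReal_norm _).symm
        _ ≤ ENNReal.ofReal (∏ j, (‖t‖ * Real.exp (2 * R * ‖ξ j‖) *
              ‖f (((s j : ℝ) : ℂ) * t) (ξ j)‖)) := ENNReal.ofReal_le_ofReal hre
        _ = ∏ j, ENNReal.ofReal (‖t‖ * Real.exp (2 * R * ‖ξ j‖) *
              ‖f (((s j : ℝ) : ℂ) * t) (ξ j)‖) :=
            ENNReal.ofReal_prod_of_nonneg fun i _ => by positivity
        _ = ∏ j, g j (ξ j) := by
            refine Finset.prod_congr rfl fun j _ => ?_
            rw [hgdef]
            rw [ENNReal.ofReal_mul (by positivity), ofReal_norm]; rfl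
    have hgint : ∀ j, (∫⁻ η, g j η ∂μstar) ≤ ENNReal.ofReal (‖t‖) * A := by
      intro j
      have hsj := hio j
      have habs_lt : ‖((s j : ℝ) : ℂ) * t‖ < Tb := by
        rw [norm_mul, Complex.norm_real, Real.norm_eq_abs, abs_of_pos hsj.1]
        calc s j * ‖t‖ ≤ 1 * ‖t‖ :=
              mul_le_mul_of_nonneg_right hsj.2.le habs
          _ < Tb := by rw [one_mul]; exact htTb
      have hfs : ∀ η, (‖f (((s j : ℝ) : ℂ) * t) η‖₊ : ℝ≥0∞) ≤ supf ν d Tb f η := fun η =>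
        le_iSup (fun u : {u : ℂ // ‖u‖ < Tb} => (‖f u.1 η‖₊ : ℝ≥0∞)) ⟨_, habs_lt⟩
      calc (∫⁻ η, g j η ∂μstar)
          = ENNReal.ofReal (‖t‖) * ∫⁻ η, ENNReal.ofReal (Real.exp (2 * R * ‖η‖)) *
              (‖f (((s j : ℝ) : ℂ) * t) η‖₊ : ℝ≥0∞) ∂μstar := by
            rw [← lintegral_const_mul' _ _ ENNReal.ofReal_ne_top]
            refine lintegral_congr fun η => ?_
            simp only [hgdef]
            rw [ENNReal.ofReal_mul habs, mul_assoc]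
        _ ≤ ENNReal.ofReal (‖t‖) * A := by
            refine mul_le_mul_right (lintegral_mono fun η => ?_) _
            exact mul_le_mul_right (hfs η) _
    calc (∫⁻ ξ, (‖integrand ν d f qnat Kt (n+1) t x y s ξ‖₊ : ℝ≥0∞)
          ∂(Measure.pi fun _ : Fin (n+1) => μstar))
        ≤ ∫⁻ ξ, ∏ j, g j (ξ j) ∂(Measure.pi fun _ : Fin (n+1) => μstar) := lintegral_mono hpt
      _ = ∏ j, ∫⁻ η, g j η ∂μstar := lintegral_pi_prod' μstar (n+1) g hgmeas
      _ ≤ ∏ _j : Fin (n+1), (ENNReal.ofReal (‖t‖) * A) :=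
          Finset.prod_le_prod' fun j _ => hgint j
      _ = (ENNReal.ofReal (‖t‖) * A) ^ (n+1) := by
          rw [Finset.prod_const, Finset.card_univ, Fintype.card_fin]
  -- per-n bound of the iterated lower integral
  have hBn : ∀ n : ℕ, (∫⁻ s in simplexSet (n + 1),
      (∫⁻ ξ, (‖integrand ν d f qnat Kt (n + 1) t x y s ξ‖₊ : ℝ≥0∞)
        ∂(Measure.pi fun _ : Fin (n + 1) => μstar)) ∂volume)
      ≤ ENNReal.ofReal (c ^ (n+1) / (Nat.factorial (n+1))) := by
    intro n
    have hk : (0:ℝ) < (Nat.factorial (n+1) : ℝ) :=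
      Nat.cast_pos.mpr (Nat.factorial_pos _)
    have hAle : A ≤ ENNReal.ofReal (2 * A.toReal) := by
      conv_lhs => rw [← ENNReal.ofReal_toReal hA_top.ne]
      exact ENNReal.ofReal_le_ofReal (by linarith)
    calc (∫⁻ s in simplexSet (n + 1),
        (∫⁻ ξ, (‖integrand ν d f qnat Kt (n + 1) t x y s ξ‖₊ : ℝ≥0∞)
          ∂(Measure.pi fun _ : Fin (n + 1) => μstar)) ∂volume)
        ≤ ∫⁻ _s in simplexSet (n + 1),
            (ENNReal.ofReal (‖t‖) * A) ^ (n+1) ∂volume :=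
          setLIntegral_mono measurable_const (hbound n)
      _ = (ENNReal.ofReal (‖t‖) * A) ^ (n+1) * volume (simplexSet (n+1)) :=
          setLIntegral_const _ _
      _ ≤ (ENNReal.ofReal Tc * ENNReal.ofReal (2 * A.toReal)) ^ (n+1) *
            ((Nat.factorial (n+1) : ℝ≥0∞))⁻¹ := by
          refine mul_le_mul' (pow_le_pow_left' ?_ _) (volume_simplexSet_le (n+1))
          exact mul_le_mul' (ENNReal.ofReal_le_ofReal ht.le) hAle
      _ = ENNReal.ofReal (c ^ (n+1) / (Nat.factorial (n+1))) := by
          have e1 : ENNReal.ofReal Tc * ENNReal.ofReal (2 * A.toReal) = ENNReal.ofReal c := by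
            rw [← ENNReal.ofReal_mul hTc0.le, hcdef]
            congr 1
            ring
          rw [e1, ← ENNReal.ofReal_pow hc0, div_eq_mul_inv,
            ENNReal.ofReal_mul (pow_nonneg hc0 _), ENNReal.ofReal_inv_of_pos hk,
            ENNReal.ofReal_natCast]
  have hsum : Summable (fun n : ℕ => c ^ (n + 1) / (Nat.factorial (n + 1) : ℝ)) := by
    have h := Real.summable_pow_div_factorial c
    exact h.comp_injective Nat.succ_injective
  constructor
  · refine Summable.of_nonneg_of_le (fun n => norm_nonneg _) (fun n => ?_) hsum
    have h2 : (‖∫ s in simplexSet (n + 1),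
        (∫ ξ, integrand ν d f qnat Kt (n + 1) t x y s ξ
          ∂(Measure.pi fun _ : Fin (n + 1) => μstar)) ∂volume‖₊ : ℝ≥0∞)
        ≤ ENNReal.ofReal (c ^ (n+1) / (Nat.factorial (n+1))) := by
      refine le_trans (enorm_integral_le_lintegral_enorm _) (le_trans ?_ (hBn n))
      exact lintegral_mono fun s => enorm_integral_le_lintegral_enorm _
    have h3 := ENNReal.toReal_mono ENNReal.ofReal_ne_top h2
    rw [ENNReal.toReal_ofReal (by positivity)] at h3
    simpa using h3
  · calc (∑' n : ℕ, ∫⁻ s in simplexSet (n + 1),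
        (∫⁻ ξ, (‖integrand ν d f qnat Kt (n + 1) t x y s ξ‖₊ : ℝ≥0∞)
          ∂(Measure.pi fun _ : Fin (n + 1) => μstar)) ∂volume)
        ≤ ∑' n : ℕ, ENNReal.ofReal (c ^ (n+1) / (Nat.factorial (n+1))) :=
          ENNReal.tsum_le_tsum hBn
      _ = ENNReal.ofReal (∑' n : ℕ, c ^ (n+1) / (Nat.factorial (n+1))) :=
          (ENNReal.ofReal_tsum_of_nonneg (fun n => by positivity) hsum).symm
end
end
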